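/- arXiv:2312.15876 — 8 statements merged into one kernel-verified Lean document; each statement's English description precedes it below -/
import Mathlib

section
/- There exists a constant C > 0, independent of τ and of the intervals J_1, J_2, such that for every point (ξ, η) ∈ ℝ² × ℝ, the sum over all pairs (μ, ν) ∈ 𝒩 × 𝒩 of the characteristic functions of the algebraic sum sets u_{μ,J_1} + u_{ν,J_2} satisfies ∑_{(μ,ν) ∈ 𝒩²} χ_{u_{μ,J_1} + u_{ν,J_2}}(ξ, η) ≤ C. (Here u_{μ,J_1} + u_{ν,J_2} = {(ξ,η) + (ξ',η') : (ξ,η) ∈ u_{μ,J_1}, (ξ',η') ∈ u_{ν,J_2}}.) -/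
open Set Pointwise

noncomputable def GammaSet (τ μ : ℝ) : Set ℂ :=
  {ξ : ℂ | ξ ≠ 0 ∧ μ * (Real.sqrt τ)⁻¹ ≤ ξ.arg ∧ ξ.arg < (μ + 1) * (Real.sqrt τ)⁻¹}

def calN (τ : ℝ) : Set ℤ :=
  {μ : ℤ | |(μ : ℝ)| ≤ Real.sqrt τ * (Real.pi / 8) - 1}

noncomputable def uSet (τ μ : ℝ) (J : Set ℝ) : Set (ℂ × ℝ) :=
  {p : ℂ × ℝ | |p.2 - ‖p.1‖| ≤ τ⁻¹ ∧ p.1 ∈ GammaSet τ μ ∧ ‖p.1‖ ∈ J}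

-- sin lower bound on [0, 0.8]
lemma sin_lb {t : ℝ} (h0 : 0 ≤ t) (h1 : t ≤ 0.8) : 0.84 * t ≤ Real.sin t := by
  rcases eq_or_lt_of_le h0 with h | h
  · simp [← h]
  · have h2 := Real.sin_gt_sub_cube h
    nlinarith [sq_nonneg t, mul_le_mul_of_nonneg_left h1 h0]

-- cos difference lower bound
lemma cos_diff_lb {a b : ℝ} (ha : 0 ≤ a) (hab : a ≤ b) (hb : b ≤ 0.8) :
    0.35 * ((b - a) * (b + a)) ≤ Real.cos a - Real.cos b := by
  rw [Real.cos_sub_cos]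
  have hs : Real.sin ((a - b) / 2) = -Real.sin ((b - a) / 2) := by
    rw [← Real.sin_neg]; ring_nf
  rw [hs]
  have h1 : 0.84 * ((a + b) / 2) ≤ Real.sin ((a + b) / 2) :=
    sin_lb (by linarith) (by linarith)
  have h2 : 0.84 * ((b - a) / 2) ≤ Real.sin ((b - a) / 2) :=
    sin_lb (by linarith) (by linarith)
  nlinarith [sin_lb (le_refl 0) (by norm_num : (0:ℝ) ≤ 0.8)]

lemma sin_lip (a b : ℝ) : |Real.sin a - Real.sin b| ≤ |a - b| := by
  rw [Real.sin_sub_sin]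
  calc |2 * Real.sin ((a - b) / 2) * Real.cos ((a + b) / 2)|
      = 2 * |Real.sin ((a - b) / 2)| * |Real.cos ((a + b) / 2)| := by
        rw [abs_mul, abs_mul]; norm_num
    _ ≤ 2 * |(a - b) / 2| * 1 := by
        apply mul_le_mul (by have := Real.abs_sin_le_abs (x := (a-b)/2); nlinarith)
          (Real.abs_cos_le_one _) (abs_nonneg _) (by positivity)
    _ = |a - b| := by rw [abs_div, abs_of_pos (by norm_num : (0:ℝ) < 2)]; ring

lemma normSq_combo (r1 r2 t1 t2 : ℝ) :
    Complex.normSq ((r1 : ℂ) * Complex.exp (↑t1 * Complex.I) +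
      (r2 : ℂ) * Complex.exp (↑t2 * Complex.I)) =
      r1 ^ 2 + r2 ^ 2 + 2 * r1 * r2 * Real.cos (t1 - t2) := by
  simp only [Complex.normSq_apply, Complex.add_re, Complex.add_im, Complex.mul_re,
    Complex.mul_im, Complex.ofReal_re, Complex.ofReal_im, Complex.exp_ofReal_mul_I_re,
    Complex.exp_ofReal_mul_I_im, Real.cos_sub]
  linear_combination (r1^2) * Real.sin_sq_add_cos_sq t1 + (r2^2) * Real.sin_sq_add_cos_sq t2

lemma step5 {δ d d' : ℝ} (hδ0 : 0 < δ) (hδ : δ ≤ 1/1000) (hd : -δ ≤ d)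
    (hd' : -δ ≤ d') (hub : d' ≤ 0.8) (hle : d ≤ d')
    (hcos : |Real.cos d - Real.cos d'| ≤ 16*δ^2 + 2*δ*d^2) : d' - d ≤ 20*δ := by
  by_contra hcon
  push_neg at hcon
  set a := max d 0 with hadef
  have ha0 : 0 ≤ a := le_max_right _ _
  have had' : a ≤ d' := max_le (by linarith) (by linarith)
  have hgap : 19*δ ≤ d' - a := by
    rcases le_or_gt 0 d with h0 | h0
    · rw [hadef, max_eq_left h0]; linarith
    · rw [hadef, max_eq_right h0.le]; linarith
  have hlow := cos_diff_lb ha0 had' hub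
  -- upper bound on cos a - cos d'
  have hda : d^2 ≤ a^2 + δ^2 := by
    rcases le_or_gt 0 d with h0 | h0
    · rw [hadef, max_eq_left h0]; nlinarith
    · rw [hadef, max_eq_right h0.le]; nlinarith
  have hcad : Real.cos a - Real.cos d ≤ δ^2/2 := by
    rcases le_or_gt 0 d with h0 | h0
    · rw [hadef, max_eq_left h0]; nlinarith [sq_nonneg δ]
    · rw [hadef, max_eq_right h0.le]
      have := Real.one_sub_sq_div_two_le_cos (x := d)
      have := Real.cos_zero
      nlinarith
  have habs := abs_le.mp hcos
  have hup : Real.cos a - Real.cos d' ≤ 18.5*δ^2 + 2*δ*a^2 := by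
    nlinarith [mul_le_mul_of_nonneg_left hda (by linarith : (0:ℝ) ≤ 2*δ),
      mul_le_mul_of_nonneg_right (show δ ≤ 1 by linarith) (sq_nonneg δ)]
  have ha8 : a ≤ 0.8 := le_trans had' hub
  have hd'pos : 0 < d' := by linarith
  have k1 : 19*δ*d' ≤ (d'-a)*(d'+a) :=
    mul_le_mul hgap (by linarith) hd'pos.le (by linarith)
  have k2 : a*a ≤ 0.8*d' := mul_le_mul ha8 had' ha0 (by norm_num)
  have k3 : 2*δ*(a*a) ≤ 2*δ*(0.8*d') := by
    apply mul_le_mul_of_nonneg_left k2 (by linarith)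
  have k4 : δ*(19*δ) ≤ δ*d' := mul_le_mul_of_nonneg_left (by linarith) hδ0.le
  have hsq : 0 < δ^2 := by positivity
  nlinarith [k1, k3, k4, hlow, hup, hsq]


-- |cos d - cos d'| bound from law of cosines data (standalone, small context)
lemma cos_close {δ r1 r2 r1' r2' cd cd' D' : ℝ}
    (h11 : 1 ≤ r1) (h12 : r1 ≤ 2) (h21 : 1 ≤ r2) (h22 : r2 ≤ 2)
    (h11' : 1 ≤ r1') (h12' : r1' ≤ 2) (h21' : 1 ≤ r2') (h22' : r2' ≤ 2)
    (hr1 : |r1 - r1'| ≤ δ) (hr2 : |r2 - r2'| ≤ δ) (hδ0 : 0 < δ)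
    (hs : |(r1 + r2) - (r1' + r2')| ≤ 4*δ^2)
    (e1 : r1^2 + r2^2 + 2*r1*r2*cd = r1'^2 + r2'^2 + 2*r1'*r2'*cd')
    (hc1' : 0 ≤ 1 - cd') (hq' : 1 - cd' ≤ D'/2) (hD' : 0 ≤ D') :
    |cd - cd'| ≤ 16*δ^2 + 2*δ*D' := by
  have hr1d := abs_le.mp hr1
  have hr2d := abs_le.mp hr2
  have hs' := abs_le.mp hs
  have e2 : r1*r2*(1-cd) - r1'*r2'*(1-cd') = ((r1+r2)^2 - (r1'+r2')^2)/2 := by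
    linear_combination (-1/2) * e1
  have hcore : |r1*r2*(1-cd) - r1'*r2'*(1-cd')| ≤ 16*δ^2 := by
    rw [e2]
    have hfac : (r1+r2)^2 - (r1'+r2')^2 = ((r1+r2)-(r1'+r2'))*((r1+r2)+(r1'+r2')) := by ring
    have h8 : (r1+r2) + (r1'+r2') ≤ 8 := by linarith
    have hprod : |((r1+r2)-(r1'+r2'))*((r1+r2)+(r1'+r2'))| ≤ (4*δ^2)*8 := by
      rw [abs_mul]
      apply mul_le_mul hs _ (abs_nonneg _) (by positivity)
      rw [abs_of_nonneg (by linarith : (0:ℝ) ≤ (r1+r2)+(r1'+r2'))]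
      exact h8
    rw [hfac, abs_div, abs_of_nonneg (by norm_num : (0:ℝ) ≤ 2)]
    linarith
  have hPP : |r1'*r2' - r1*r2| ≤ 4*δ := by
    have hid : r1'*r2' - r1*r2 = r1'*(r2'-r2) + r2*(r1'-r1) := by ring
    have b1 : |r1'*(r2'-r2)| ≤ 2*δ := by
      rw [abs_mul, abs_of_nonneg (by linarith : (0:ℝ) ≤ r1'), abs_sub_comm]
      exact mul_le_mul h12' hr2 (abs_nonneg _) (by norm_num)
    have b2 : |r2*(r1'-r1)| ≤ 2*δ := by
      rw [abs_mul, abs_of_nonneg (by linarith : (0:ℝ) ≤ r2), abs_sub_comm]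
      exact mul_le_mul h22 hr1 (abs_nonneg _) (by norm_num)
    rw [hid]
    refine le_trans (abs_add_le _ _) (by linarith)
  have hBb : |(r1'*r2' - r1*r2) * (1 - cd')| ≤ (4*δ)*(D'/2) := by
    rw [abs_mul]
    apply mul_le_mul hPP _ (abs_nonneg _) (by linarith)
    rw [abs_of_nonneg hc1']; exact hq'
  have hP1 : (1:ℝ) ≤ r1*r2 := one_le_mul_of_one_le_of_one_le h11 h21
  have h3 : |(cd' - cd)*(r1*r2)| ≤ 16*δ^2 + 2*δ*D' := by
    have hrepr : (cd' - cd)*(r1*r2)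
        = (r1*r2*(1-cd) - r1'*r2'*(1-cd')) + (r1'*r2' - r1*r2)*(1 - cd') := by ring
    rw [hrepr]
    refine le_trans (abs_add_le _ _) ?_
    linarith
  have h4 : |cd' - cd| * 1 ≤ |cd' - cd| * (r1*r2) :=
    mul_le_mul_of_nonneg_left hP1 (abs_nonneg _)
  rw [abs_mul, abs_of_nonneg (by linarith : (0:ℝ) ≤ r1*r2)] at h3
  rw [abs_sub_comm]
  linarith

lemma cross_close {δ r1 r2 r1' r2' : ℝ}
    (h11 : 1 ≤ r1) (h12 : r1 ≤ 2) (h21 : 1 ≤ r2) (h22 : r2 ≤ 2)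
    (h11' : 1 ≤ r1') (h12' : r1' ≤ 2) (h21' : 1 ≤ r2') (h22' : r2' ≤ 2)
    (hr1 : |r1 - r1'| ≤ δ) (hr2 : |r2 - r2'| ≤ δ) :
    |r1'*r2 - r1*r2'| ≤ 4*δ := by
  have hr1d := abs_le.mp hr1
  have hr2d := abs_le.mp hr2
  rw [abs_le]; constructor <;> nlinarith

lemma norm_lb {r1 r2 cd : ℝ} (h11 : 1 ≤ r1) (h21 : 1 ≤ r2) (hcd : 0 ≤ cd) :
    2 ≤ r1^2 + r2^2 + 2*r1*r2*cd := by
  nlinarith [mul_nonneg (mul_nonneg (by linarith : (0:ℝ) ≤ r1) (by linarith : (0:ℝ) ≤ r2)) hcd]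

set_option maxHeartbeats 1000000 in
lemma key {δ r1 r2 r1' r2' θ1 θ2 θ1' θ2' : ℝ}
    (hδ0 : 0 < δ) (hδ : δ ≤ 1/1000)
    (h11 : 1 ≤ r1) (h12 : r1 ≤ 2) (h21 : 1 ≤ r2) (h22 : r2 ≤ 2)
    (h11' : 1 ≤ r1') (h12' : r1' ≤ 2) (h21' : 1 ≤ r2') (h22' : r2' ≤ 2)
    (hr1 : |r1 - r1'| ≤ δ) (hr2 : |r2 - r2'| ≤ δ)
    (hs : |(r1 + r2) - (r1' + r2')| ≤ 4*δ^2)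
    (ht1 : |θ1| ≤ Real.pi/8) (ht2 : |θ2| ≤ Real.pi/8)
    (ht1' : |θ1'| ≤ Real.pi/8) (ht2' : |θ2'| ≤ Real.pi/8)
    (hd : -δ ≤ θ1 - θ2) (hd' : -δ ≤ θ1' - θ2')
    (hsum : (r1 : ℂ) * Complex.exp (↑θ1 * Complex.I) + (r2 : ℂ) * Complex.exp (↑θ2 * Complex.I)
          = (r1' : ℂ) * Complex.exp (↑θ1' * Complex.I) + (r2' : ℂ) * Complex.exp (↑θ2' * Complex.I)) :
    |θ1 - θ1'| ≤ 120*δ ∧ |θ2 - θ2'| ≤ 120*δ := by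
  have hpi : Real.pi < 3.15 := Real.pi_lt_d2
  have hpi0 := Real.pi_pos
  obtain ⟨d, hddef⟩ : ∃ x, θ1 - θ2 = x := ⟨_, rfl⟩
  obtain ⟨d', hd'def⟩ : ∃ x, θ1' - θ2' = x := ⟨_, rfl⟩
  rw [hddef] at hd
  rw [hd'def] at hd'
  have habs1 := abs_le.mp ht1
  have habs2 := abs_le.mp ht2
  have habs1' := abs_le.mp ht1'
  have habs2' := abs_le.mp ht2'
  have hdub : d ≤ 0.8 := by rw [← hddef]; linarith
  have hd'ub : d' ≤ 0.8 := by rw [← hd'def]; linarith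
  have hdlb : -0.8 ≤ d := by rw [← hddef]; linarith
  have hd'lb : -0.8 ≤ d' := by rw [← hd'def]; linarith
  -- law of cosines
  have e1 : r1^2 + r2^2 + 2*r1*r2*Real.cos d = r1'^2 + r2'^2 + 2*r1'*r2'*Real.cos d' := by
    have h := congrArg Complex.normSq hsum
    rw [normSq_combo, normSq_combo, hddef, hd'def] at h
    exact h
  have hc1 : 0 ≤ 1 - Real.cos d := by linarith [Real.cos_le_one d]
  have hc1' : 0 ≤ 1 - Real.cos d' := by linarith [Real.cos_le_one d']
  have hq : 1 - Real.cos d ≤ d^2/2 := by linarith [Real.one_sub_sq_div_two_le_cos (x := d)]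
  have hq' : 1 - Real.cos d' ≤ d'^2/2 := by linarith [Real.one_sub_sq_div_two_le_cos (x := d')]
  have hcosd : |Real.cos d - Real.cos d'| ≤ 16*δ^2 + 2*δ*d'^2 :=
    cos_close h11 h12 h21 h22 h11' h12' h21' h22' hr1 hr2 hδ0 hs e1 hc1' hq' (sq_nonneg d')
  have hcosd' : |Real.cos d' - Real.cos d| ≤ 16*δ^2 + 2*δ*d^2 :=
    cos_close h11' h12' h21' h22' h11 h12 h21 h22
      (by rwa [abs_sub_comm] at hr1) (by rwa [abs_sub_comm] at hr2) hδ0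
      (by rwa [abs_sub_comm] at hs) e1.symm hc1 hq (sq_nonneg d)
  -- |d - d'| ≤ 20 δ
  have hdd : |d - d'| ≤ 20*δ := by
    rcases le_total d d' with hle | hle
    · have := step5 hδ0 hδ hd hd' hd'ub hle (by rwa [abs_sub_comm] at hcosd')
      rw [abs_le]; constructor <;> linarith
    · have := step5 hδ0 hδ hd' hd hdub hle (by rwa [abs_sub_comm] at hcosd)
      rw [abs_le]; constructor <;> linarith
  have hdddec := abs_le.mp hdd
  -- relate θ2 and θ2'
  obtain ⟨A, hA⟩ : ∃ z, (r1 : ℂ) * Complex.exp (↑d * Complex.I) + (r2 : ℂ) = z := ⟨_, rfl⟩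
  obtain ⟨A', hA'⟩ : ∃ z, (r1' : ℂ) * Complex.exp (↑d' * Complex.I) + (r2' : ℂ) = z := ⟨_, rfl⟩
  have hrot : ∀ (r a b : ℝ), (r : ℂ) * Complex.exp (↑a * Complex.I) * Complex.exp (↑b * Complex.I)
      = (r : ℂ) * Complex.exp (↑(a+b) * Complex.I) := by
    intro r a b
    rw [mul_assoc, ← Complex.exp_add]
    push_cast
    ring_nf
  have hAeq : Complex.exp (↑θ2 * Complex.I) * A = Complex.exp (↑θ2' * Complex.I) * A' := by
    rw [← hA, ← hA']
    have l1 : Complex.exp (↑θ2 * Complex.I) * ((r1 : ℂ) * Complex.exp (↑d * Complex.I) + (r2 : ℂ))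
        = (r1 : ℂ) * Complex.exp (↑θ1 * Complex.I) + (r2 : ℂ) * Complex.exp (↑θ2 * Complex.I) := by
      rw [← hddef]
      have l := hrot r1 (θ1 - θ2) θ2
      rw [show θ1 - θ2 + θ2 = θ1 by ring] at l
      rw [mul_add, ← l]; ring
    have l2 : Complex.exp (↑θ2' * Complex.I) * ((r1' : ℂ) * Complex.exp (↑d' * Complex.I) + (r2' : ℂ))
        = (r1' : ℂ) * Complex.exp (↑θ1' * Complex.I) + (r2' : ℂ) * Complex.exp (↑θ2' * Complex.I) := by
      rw [← hd'def]
      have l := hrot r1' (θ1' - θ2') θ2'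
      rw [show θ1' - θ2' + θ2' = θ1' by ring] at l
      rw [mul_add, ← l]; ring
    rw [l1, l2, hsum]
  -- sin (θ2 - θ2') * normSq A = Im (A' * conj A)
  have h2 : Complex.exp (↑(θ2 - θ2') * Complex.I) * ((Complex.normSq A : ℂ)) =
      A' * (starRingEnd ℂ) A := by
    have hsplit : Complex.exp (↑(θ2 - θ2') * Complex.I)
        = Complex.exp (↑(-θ2') * Complex.I) * Complex.exp (↑θ2 * Complex.I) := by
      rw [← Complex.exp_add]; congr 1; push_cast; ring
    calc Complex.exp (↑(θ2 - θ2') * Complex.I) * ((Complex.normSq A : ℂ))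
        = Complex.exp (↑(θ2 - θ2') * Complex.I) * (A * (starRingEnd ℂ) A) := by
          rw [Complex.mul_conj]
      _ = Complex.exp (↑(-θ2') * Complex.I) * (Complex.exp (↑θ2 * Complex.I) * A) *
          (starRingEnd ℂ) A := by rw [hsplit]; ring
      _ = Complex.exp (↑(-θ2') * Complex.I) * (Complex.exp (↑θ2' * Complex.I) * A') *
          (starRingEnd ℂ) A := by rw [hAeq]
      _ = (Complex.exp (↑(-θ2') * Complex.I) * Complex.exp (↑θ2' * Complex.I)) *
          (A' * (starRingEnd ℂ) A) := by ring
      _ = A' * (starRingEnd ℂ) A := by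
          rw [← Complex.exp_add]
          have : (↑(-θ2') : ℂ) * Complex.I + ↑θ2' * Complex.I = 0 := by push_cast; ring
          rw [this, Complex.exp_zero, one_mul]
  have hmain : Real.sin (θ2 - θ2') * Complex.normSq A = (A' * (starRingEnd ℂ) A).im := by
    have hh := congrArg Complex.im h2
    simp only [Complex.mul_im, Complex.ofReal_re, Complex.ofReal_im,
      Complex.exp_ofReal_mul_I_re, Complex.exp_ofReal_mul_I_im, mul_zero, zero_add] at hh
    exact hh
  -- compute the imaginary part
  have hformula : (A' * (starRingEnd ℂ) A).im
      = r1*r1'*Real.sin (d'-d) + r1'*r2*(Real.sin d' - Real.sin d)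
        + (r1'*r2 - r1*r2')*Real.sin d := by
    rw [← hA, ← hA']
    simp only [map_add, map_mul, Complex.conj_ofReal, Complex.mul_im, Complex.add_im,
      Complex.add_re, Complex.mul_re, Complex.ofReal_re, Complex.ofReal_im,
      Complex.conj_re, Complex.conj_im, Complex.exp_ofReal_mul_I_re,
      Complex.exp_ofReal_mul_I_im, Real.sin_sub]
    ring
  -- bound the imaginary part
  have hsin1 : |Real.sin (d' - d)| ≤ 20*δ := by
    refine le_trans Real.abs_sin_le_abs ?_
    rwa [abs_sub_comm] at hdd
  have hsin2 : |Real.sin d' - Real.sin d| ≤ 20*δ := by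
    refine le_trans (sin_lip d' d) ?_
    rwa [abs_sub_comm] at hdd
  have hsin3 : |Real.sin d| ≤ 1 := Real.abs_sin_le_one d
  have hcross : |r1'*r2 - r1*r2'| ≤ 4*δ :=
    cross_close h11 h12 h21 h22 h11' h12' h21' h22' hr1 hr2
  have hImbound : |(A' * (starRingEnd ℂ) A).im| ≤ 164*δ := by
    rw [hformula]
    have b1 : |r1*r1'*Real.sin (d'-d)| ≤ 4*(20*δ) := by
      rw [abs_mul]
      apply mul_le_mul _ hsin1 (abs_nonneg _) (by norm_num)
      rw [abs_mul, abs_of_nonneg (by linarith : (0:ℝ) ≤ r1),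
        abs_of_nonneg (by linarith : (0:ℝ) ≤ r1')]
      have : r1*r1' ≤ 2*2 := mul_le_mul h12 h12' (by linarith) (by norm_num)
      linarith
    have b2 : |r1'*r2*(Real.sin d' - Real.sin d)| ≤ 4*(20*δ) := by
      rw [abs_mul]
      apply mul_le_mul _ hsin2 (abs_nonneg _) (by norm_num)
      rw [abs_mul, abs_of_nonneg (by linarith : (0:ℝ) ≤ r1'),
        abs_of_nonneg (by linarith : (0:ℝ) ≤ r2)]
      have : r1'*r2 ≤ 2*2 := mul_le_mul h12' h22 (by linarith) (by norm_num)
      linarith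
    have b3 : |(r1'*r2 - r1*r2')*Real.sin d| ≤ (4*δ)*1 := by
      rw [abs_mul]
      exact mul_le_mul hcross hsin3 (abs_nonneg _) (by positivity)
    calc |r1*r1'*Real.sin (d'-d) + r1'*r2*(Real.sin d' - Real.sin d)
          + (r1'*r2 - r1*r2')*Real.sin d|
        ≤ |r1*r1'*Real.sin (d'-d) + r1'*r2*(Real.sin d' - Real.sin d)|
          + |(r1'*r2 - r1*r2')*Real.sin d| := abs_add_le _ _
      _ ≤ |r1*r1'*Real.sin (d'-d)| + |r1'*r2*(Real.sin d' - Real.sin d)|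
          + |(r1'*r2 - r1*r2')*Real.sin d| := by
            linarith [abs_add_le (r1*r1'*Real.sin (d'-d)) (r1'*r2*(Real.sin d' - Real.sin d))]
      _ ≤ 4*(20*δ) + 4*(20*δ) + (4*δ)*1 := by linarith
      _ = 164*δ := by ring
  -- lower bound normSq A
  have hcosnn : 0 ≤ Real.cos d := by
    apply Real.cos_nonneg_of_mem_Icc
    constructor <;> · linarith
  have hnormA : 2 ≤ Complex.normSq A := by
    have hform : Complex.normSq A = r1^2 + r2^2 + 2*r1*r2*Real.cos d := by
      rw [← hA]
      have hr2c : ((r2 : ℝ) : ℂ) = (r2 : ℂ) * Complex.exp (↑(0:ℝ) * Complex.I) := by simp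
      rw [hr2c, normSq_combo, sub_zero]
    rw [hform]
    exact norm_lb h11 h21 hcosnn
  -- conclude for θ2
  have hsinbound : |Real.sin (θ2 - θ2')| ≤ 82*δ := by
    have h1 : |Real.sin (θ2 - θ2')| * Complex.normSq A ≤ 164*δ := by
      rw [← abs_of_nonneg (by linarith : (0:ℝ) ≤ Complex.normSq A), ← abs_mul, hmain]
      exact hImbound
    have h5 := mul_le_mul_of_nonneg_left hnormA (abs_nonneg (Real.sin (θ2 - θ2')))
    linarith
  have hθ2 : |θ2 - θ2'| ≤ 98*δ := by
    have hb : |θ2 - θ2'| ≤ 0.8 := by rw [abs_le]; constructor <;> linarith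
    have hlb : 0.84 * |θ2 - θ2'| ≤ |Real.sin (θ2 - θ2')| := by
      rcases le_or_gt 0 (θ2 - θ2') with h0 | h0
      · rw [abs_of_nonneg h0]
        exact le_trans (sin_lb h0 (by rwa [abs_of_nonneg h0] at hb)) (le_abs_self _)
      · rw [abs_of_neg h0]
        have hsl := sin_lb (by linarith : (0:ℝ) ≤ -(θ2 - θ2'))
          (by rwa [abs_of_neg h0] at hb)
        rw [Real.sin_neg] at hsl
        have h2' : -Real.sin (θ2 - θ2') ≤ |Real.sin (θ2 - θ2')| := neg_le_abs _
        linarith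
    linarith
  refine ⟨?_, by linarith [hθ2]⟩
  have hrw : θ1 - θ1' = (θ2 - θ2') + (d - d') := by rw [← hddef, ← hd'def]; ring
  rw [hrw]
  calc |(θ2 - θ2') + (d - d')| ≤ |θ2 - θ2'| + |d - d'| := abs_add_le _ _
    _ ≤ 120*δ := by linarith

lemma argbound {M θ st δ : ℝ} (hδ0 : 0 < δ) (hstδ : st * δ = 1)
    (hM : |M| ≤ st*(Real.pi/8) - 1) (h1 : M*δ ≤ θ) (h2 : θ < (M+1)*δ) :
    |θ| ≤ Real.pi/8 := by
  have habs := abs_le.mp hM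
  have key1 : (st*(Real.pi/8) - 1)*δ = Real.pi/8 - δ := by
    calc (st*(Real.pi/8) - 1)*δ = (st*δ)*(Real.pi/8) - δ := by ring
      _ = Real.pi/8 - δ := by rw [hstδ]; ring
  have low : -(st*(Real.pi/8) - 1)*δ ≤ M*δ :=
    mul_le_mul_of_nonneg_right habs.1 hδ0.le
  have high : (M+1)*δ ≤ (st*(Real.pi/8) - 1 + 1)*δ :=
    mul_le_mul_of_nonneg_right (by linarith [habs.2]) hδ0.le
  have key2 : (st*(Real.pi/8) - 1 + 1)*δ = Real.pi/8 := by
    calc (st*(Real.pi/8) - 1 + 1)*δ = (st*δ)*(Real.pi/8) := by ring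
      _ = Real.pi/8 := by rw [hstδ]; ring
  rw [abs_le]
  constructor <;> nlinarith

lemma idxbound {μ μ' θ θ' δ : ℝ} (hδ0 : 0 < δ) (h1 : μ*δ ≤ θ) (h2 : θ < (μ+1)*δ)
    (h1' : μ'*δ ≤ θ') (h2' : θ' < (μ'+1)*δ) (h : |θ - θ'| ≤ 120*δ) :
    |μ - μ'| ≤ 122 := by
  have habs := abs_le.mp h
  have hmm : |(μ - μ')*δ| ≤ 122*δ := by
    rw [abs_le]; constructor <;> nlinarith
  rw [abs_mul, abs_of_pos hδ0] at hmm
  exact le_of_mul_le_mul_right (by linarith) hδ0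

lemma boxcount (S T : Set (ℤ × ℤ))
    (hTS : T ⊆ S)
    (hpair : ∀ p ∈ T, ∀ q ∈ T, |p.1 - q.1| ≤ 122 ∧ |p.2 - q.2| ≤ 122) :
    T.Finite ∧ T.ncard ≤ 60025 := by
  rcases T.eq_empty_or_nonempty with hT | ⟨p0, hp0⟩
  · simp [hT]
  · have hbox : T ⊆ ↑(Finset.Icc (p0.1 - 122, p0.2 - 122) (p0.1 + 122, p0.2 + 122)) := by
      intro q hq
      obtain ⟨hh1, hh2⟩ := hpair q hq p0 hp0
      rw [abs_le] at hh1 hh2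
      simp only [Finset.coe_Icc, Set.mem_Icc, Prod.le_def]
      refine ⟨⟨?_, ?_⟩, ?_, ?_⟩ <;> omega
    refine ⟨Set.Finite.subset (Finset.finite_toSet _) hbox, ?_⟩
    refine le_trans (Set.ncard_le_ncard hbox (Finset.finite_toSet _)) ?_
    rw [Set.ncard_coe_finset]
    rw [show Finset.Icc (p0.1 - 122, p0.2 - 122) (p0.1 + 122, p0.2 + 122)
        = Finset.Icc (p0.1 - 122) (p0.1 + 122) ×ˢ Finset.Icc (p0.2 - 122) (p0.2 + 122) from rfl,
      Finset.card_product, Int.card_Icc, Int.card_Icc,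
      show p0.1 + 122 + 1 - (p0.1 - 122) = 245 from by ring,
      show p0.2 + 122 + 1 - (p0.2 - 122) = 245 from by ring]
    decide

set_option maxHeartbeats 2000000 in
theorem statement0 :
    ∃ C : ℕ, 0 < C ∧
      ∀ τ : ℝ, (10 : ℝ) ^ 6 < τ →
      ∀ α₁ β₁ α₂ β₂ : ℝ,
        1 ≤ α₁ → α₁ ≤ β₁ → β₁ ≤ 2 → β₁ - α₁ ≤ (Real.sqrt τ)⁻¹ →
        1 ≤ α₂ → α₂ ≤ β₂ → β₂ ≤ 2 → β₂ - α₂ ≤ (Real.sqrt τ)⁻¹ →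
        ∀ x : ℂ × ℝ,
          {p : ℤ × ℤ | p.1 ∈ calN τ ∧ p.2 ∈ calN τ ∧
              x ∈ uSet τ (p.1 : ℝ) (Icc α₁ β₁) + uSet τ (p.2 : ℝ) (Icc α₂ β₂)}.Finite ∧
          {p : ℤ × ℤ | p.1 ∈ calN τ ∧ p.2 ∈ calN τ ∧
              x ∈ uSet τ (p.1 : ℝ) (Icc α₁ β₁) + uSet τ (p.2 : ℝ) (Icc α₂ β₂)}.ncard ≤ C := by
  refine ⟨200000, by norm_num, ?_⟩
  intro τ hτ α₁ β₁ α₂ β₂ h1a h1ab h1b h1len h2a h2ab h2b h2len x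
  have hτ0 : (0:ℝ) < τ := by nlinarith [hτ]
  have hst0 : 0 < Real.sqrt τ := Real.sqrt_pos.mpr hτ0
  have hst : 1000 < Real.sqrt τ := by
    rw [show (1000:ℝ) = √(1000^2) from by rw [Real.sqrt_sq]; norm_num]
    exact Real.sqrt_lt_sqrt (by positivity) (by norm_num at hτ ⊢; linarith)
  obtain ⟨δ, hδdef⟩ : ∃ d, (Real.sqrt τ)⁻¹ = d := ⟨_, rfl⟩
  have hδ0 : 0 < δ := hδdef ▸ inv_pos.mpr hst0
  have hδsmall : δ ≤ 1/1000 := by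
    rw [← hδdef]
    rw [show (1:ℝ)/1000 = 1000⁻¹ from by norm_num]
    exact inv_anti₀ (by norm_num) hst.le
  have hτinv : τ⁻¹ = δ^2 := by
    rw [← hδdef, inv_pow, Real.sq_sqrt hτ0.le]
  have hstδ : Real.sqrt τ * δ = 1 := by
    rw [← hδdef]; exact mul_inv_cancel₀ (ne_of_gt hst0)
  rw [hδdef] at h1len h2len
  -- data extraction
  have getData : ∀ μ ν : ℤ, μ ∈ calN τ → ν ∈ calN τ →
      x ∈ uSet τ (μ:ℝ) (Icc α₁ β₁) + uSet τ (ν:ℝ) (Icc α₂ β₂) →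
      ∃ r1 θ1 r2 θ2 : ℝ,
        r1 ∈ Icc α₁ β₁ ∧ r2 ∈ Icc α₂ β₂ ∧
        |θ1| ≤ Real.pi/8 ∧ |θ2| ≤ Real.pi/8 ∧
        ((μ:ℝ)*δ ≤ θ1 ∧ θ1 < ((μ:ℝ)+1)*δ) ∧ ((ν:ℝ)*δ ≤ θ2 ∧ θ2 < ((ν:ℝ)+1)*δ) ∧
        |x.2 - (r1+r2)| ≤ 2*δ^2 ∧
        (r1:ℂ) * Complex.exp (↑θ1*Complex.I) + (r2:ℂ)*Complex.exp (↑θ2*Complex.I) = x.1 := by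
    intro μ ν hμ hν hmem
    rw [Set.mem_add] at hmem
    obtain ⟨a, ha, b, hb, hab⟩ := hmem
    obtain ⟨ha1, ⟨hane, harg1, harg2⟩, ha3⟩ := ha
    obtain ⟨hb1, ⟨hbne, hbrg1, hbrg2⟩, hb3⟩ := hb
    rw [hδdef] at harg1 harg2 hbrg1 hbrg2
    rw [hτinv] at ha1 hb1
    have hμ' : |(μ:ℝ)| ≤ Real.sqrt τ * (Real.pi/8) - 1 := hμ
    have hν' : |(ν:ℝ)| ≤ Real.sqrt τ * (Real.pi/8) - 1 := hν
    have hx2 : x.2 = a.2 + b.2 := (congrArg Prod.snd hab).symm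
    have hx1 : a.1 + b.1 = x.1 := congrArg Prod.fst hab
    refine ⟨‖a.1‖, a.1.arg, ‖b.1‖, b.1.arg, ha3, hb3,
      argbound hδ0 hstδ hμ' harg1 harg2, argbound hδ0 hstδ hν' hbrg1 hbrg2,
      ⟨harg1, harg2⟩, ⟨hbrg1, hbrg2⟩, ?_, ?_⟩
    · have d1 := abs_le.mp ha1
      have d2 := abs_le.mp hb1
      rw [abs_le, hx2]
      constructor <;> linarith
    · rw [Complex.norm_mul_exp_arg_mul_I, Complex.norm_mul_exp_arg_mul_I]
      exact hx1
  -- the index set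
  set S : Set (ℤ × ℤ) := {p : ℤ × ℤ | p.1 ∈ calN τ ∧ p.2 ∈ calN τ ∧
      x ∈ uSet τ (p.1 : ℝ) (Icc α₁ β₁) + uSet τ (p.2 : ℝ) (Icc α₂ β₂)} with hSdef
  -- pairwise bounds within each branch
  have pairkey : ∀ p ∈ S, ∀ q ∈ S,
      ((p.2 ≤ p.1 ∧ q.2 ≤ q.1) ∨ (p.1 < p.2 ∧ q.1 < q.2)) →
      |p.1 - q.1| ≤ 122 ∧ |p.2 - q.2| ≤ 122 := by
    intro p hp q hq hbr
    rw [hSdef, Set.mem_setOf_eq] at hp hq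
    obtain ⟨ra1, θa1, ra2, θa2, hra1, hra2, hta1, hta2, hia1, hia2, hsa, hsuma⟩ :=
      getData p.1 p.2 hp.1 hp.2.1 hp.2.2
    obtain ⟨rb1, θb1, rb2, θb2, hrb1, hrb2, htb1, htb2, hib1, hib2, hsb, hsumb⟩ :=
      getData q.1 q.2 hq.1 hq.2.1 hq.2.2
    rw [Set.mem_Icc] at hra1 hra2 hrb1 hrb2
    have br11 : 1 ≤ ra1 := by linarith [hra1.1]
    have br12 : ra1 ≤ 2 := by linarith [hra1.2]
    have br21 : 1 ≤ ra2 := by linarith [hra2.1]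
    have br22 : ra2 ≤ 2 := by linarith [hra2.2]
    have br11' : 1 ≤ rb1 := by linarith [hrb1.1]
    have br12' : rb1 ≤ 2 := by linarith [hrb1.2]
    have br21' : 1 ≤ rb2 := by linarith [hrb2.1]
    have br22' : rb2 ≤ 2 := by linarith [hrb2.2]
    have hdr1 : |ra1 - rb1| ≤ δ := by
      rw [abs_le]; constructor <;> linarith [hra1.1, hra1.2, hrb1.1, hrb1.2]
    have hdr2 : |ra2 - rb2| ≤ δ := by
      rw [abs_le]; constructor <;> linarith [hra2.1, hra2.2, hrb2.1, hrb2.2]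
    have hsd : |(ra1 + ra2) - (rb1 + rb2)| ≤ 4*δ^2 := by
      have d1 := abs_le.mp hsa
      have d2 := abs_le.mp hsb
      rw [abs_le]; constructor <;> linarith
    rcases hbr with ⟨hb1, hb2⟩ | ⟨hb1, hb2⟩
    · -- μ ≥ ν branch
      have hcast1 : ((p.2:ℝ)) ≤ (p.1:ℝ) := by exact_mod_cast hb1
      have hcast2 : ((q.2:ℝ)) ≤ (q.1:ℝ) := by exact_mod_cast hb2
      have hda : -δ ≤ θa1 - θa2 := by
        have h0 : 0 ≤ ((p.1:ℝ) - (p.2:ℝ))*δ := mul_nonneg (by linarith) hδ0.le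
        linarith [hia1.1, hia2.2]
      have hdb : -δ ≤ θb1 - θb2 := by
        have h0 : 0 ≤ ((q.1:ℝ) - (q.2:ℝ))*δ := mul_nonneg (by linarith) hδ0.le
        linarith [hib1.1, hib2.2]
      have hsum : (ra1:ℂ) * Complex.exp (↑θa1*Complex.I) + (ra2:ℂ)*Complex.exp (↑θa2*Complex.I)
          = (rb1:ℂ) * Complex.exp (↑θb1*Complex.I) + (rb2:ℂ)*Complex.exp (↑θb2*Complex.I) := by
        rw [hsuma, hsumb]
      obtain ⟨k1, k2⟩ := key hδ0 hδsmall br11 br12 br21 br22 br11' br12' br21' br22'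
        hdr1 hdr2 hsd hta1 hta2 htb1 htb2 hda hdb hsum
      constructor
      · have := idxbound hδ0 hia1.1 hia1.2 hib1.1 hib1.2 k1
        rw [show ((p.1:ℝ) - (q.1:ℝ)) = (((p.1 - q.1 : ℤ)):ℝ) from by push_cast; ring,
          ← Int.cast_abs] at this
        exact_mod_cast this
      · have := idxbound hδ0 hia2.1 hia2.2 hib2.1 hib2.2 k2
        rw [show ((p.2:ℝ) - (q.2:ℝ)) = (((p.2 - q.2 : ℤ)):ℝ) from by push_cast; ring,
          ← Int.cast_abs] at this
        exact_mod_cast this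
    · -- μ < ν branch : swap roles
      have hcast1 : ((p.1:ℝ)) + 1 ≤ (p.2:ℝ) := by exact_mod_cast hb1
      have hcast2 : ((q.1:ℝ)) + 1 ≤ (q.2:ℝ) := by exact_mod_cast hb2
      have hda : -δ ≤ θa2 - θa1 := by
        have h0 : 0 ≤ ((p.2:ℝ) - (p.1:ℝ) - 1)*δ := mul_nonneg (by linarith) hδ0.le
        linarith [hia2.1, hia1.2]
      have hdb : -δ ≤ θb2 - θb1 := by
        have h0 : 0 ≤ ((q.2:ℝ) - (q.1:ℝ) - 1)*δ := mul_nonneg (by linarith) hδ0.le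
        linarith [hib2.1, hib1.2]
      have hsd2 : |(ra2 + ra1) - (rb2 + rb1)| ≤ 4*δ^2 := by
        rw [show (ra2 + ra1) - (rb2 + rb1) = (ra1 + ra2) - (rb1 + rb2) from by ring]
        exact hsd
      have hsum : (ra2:ℂ) * Complex.exp (↑θa2*Complex.I) + (ra1:ℂ)*Complex.exp (↑θa1*Complex.I)
          = (rb2:ℂ) * Complex.exp (↑θb2*Complex.I) + (rb1:ℂ)*Complex.exp (↑θb1*Complex.I) := by
        rw [add_comm ((ra2:ℂ) * Complex.exp (↑θa2*Complex.I)),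
          add_comm ((rb2:ℂ) * Complex.exp (↑θb2*Complex.I)), hsuma, hsumb]
      obtain ⟨k2, k1⟩ := key hδ0 hδsmall br21 br22 br11 br12 br21' br22' br11' br12'
        hdr2 hdr1 hsd2 hta2 hta1 htb2 htb1 hda hdb hsum
      constructor
      · have := idxbound hδ0 hia1.1 hia1.2 hib1.1 hib1.2 k1
        rw [show ((p.1:ℝ) - (q.1:ℝ)) = (((p.1 - q.1 : ℤ)):ℝ) from by push_cast; ring,
          ← Int.cast_abs] at this
        exact_mod_cast this
      · have := idxbound hδ0 hia2.1 hia2.2 hib2.1 hib2.2 k2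
        rw [show ((p.2:ℝ) - (q.2:ℝ)) = (((p.2 - q.2 : ℤ)):ℝ) from by push_cast; ring,
          ← Int.cast_abs] at this
        exact_mod_cast this
  -- split and count
  have hplus := boxcount S (S ∩ {p : ℤ × ℤ | p.2 ≤ p.1}) Set.inter_subset_left
    (fun p hp q hq => pairkey p hp.1 q hq.1 (Or.inl ⟨hp.2, hq.2⟩))
  have hminus := boxcount S (S ∩ {p : ℤ × ℤ | p.1 < p.2}) Set.inter_subset_left
    (fun p hp q hq => pairkey p hp.1 q hq.1 (Or.inr ⟨hp.2, hq.2⟩))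
  have hunion : S = (S ∩ {p : ℤ × ℤ | p.2 ≤ p.1}) ∪ (S ∩ {p : ℤ × ℤ | p.1 < p.2}) := by
    ext p
    simp only [Set.mem_union, Set.mem_inter_iff, Set.mem_setOf_eq]
    constructor
    · intro hp
      rcases le_or_gt p.2 p.1 with h | h
      · exact Or.inl ⟨hp, h⟩
      · exact Or.inr ⟨hp, h⟩
    · rintro (⟨hp, _⟩ | ⟨hp, _⟩) <;> exact hp
  constructor
  · rw [hunion]; exact (hplus.1).union (hminus.1)
  · rw [hunion]
    refine le_trans (Set.ncard_union_le _ _) ?_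
    have := hplus.2
    have := hminus.2
    omega
end

section
/- There exists a constant C > 0, independent of τ, of J_1, J_2, and of a, such that for every a ∈ ℐ the family {E_a(μ,ν)}_{(μ,ν) ∈ k_0^{-1}({a})} is C-overlapping; that is, for every point x ∈ ℝ² × ℝ, ∑_{(μ,ν) ∈ k_0^{-1}({a})} χ_{E_a(μ,ν)}(x) ≤ C. -/
open Set Pointwise

noncomputable def calI (τ : ℝ) : Set ℝ :=
  {a : ℝ | ∃ μ ∈ calN τ, ∃ ν ∈ calN τ, a = ((μ : ℝ) + (ν : ℝ)) / 2}

namespace Statement2Aux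

open Real

lemma absmul8 {a b M : ℝ} (h0 : 0 ≤ a) (h8 : a ≤ 8) (hb : |b| ≤ M) : |a * b| ≤ 8 * M := by
  rw [abs_mul, abs_of_nonneg h0]
  exact mul_le_mul h8 hb (abs_nonneg b) (by norm_num)

lemma sin_lb {t : ℝ} (ht : |t| ≤ Real.pi / 2) : 2 / Real.pi * |t| ≤ |Real.sin t| := by
  have hpi := Real.pi_gt_three
  rcases le_or_gt 0 t with h | h
  · have ht' : t ≤ Real.pi / 2 := by rwa [abs_of_nonneg h] at ht
    have hs0 : 0 ≤ Real.sin t :=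
      Real.sin_nonneg_of_nonneg_of_le_pi h (by linarith)
    rw [abs_of_nonneg h, abs_of_nonneg hs0]
    exact Real.mul_le_sin h ht'
  · have h' : 0 ≤ -t := by linarith
    have ht' : -t ≤ Real.pi / 2 := by rw [abs_of_neg h] at ht; linarith
    have hs0 : 0 ≤ Real.sin (-t) :=
      Real.sin_nonneg_of_nonneg_of_le_pi h' (by linarith)
    calc 2 / Real.pi * |t| = 2 / Real.pi * (-t) := by rw [abs_of_neg h]
      _ ≤ Real.sin (-t) := Real.mul_le_sin h' ht'
      _ = |Real.sin (-t)| := (abs_of_nonneg hs0).symm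
      _ = |Real.sin t| := by rw [Real.sin_neg, abs_neg]

lemma quarter {δ δ' : ℝ} (hδδ : 0 ≤ δ * δ') (hle : δ ^ 2 ≤ δ' ^ 2) :
    4 * δ ^ 2 ≤ (δ + δ') ^ 2 := by
  rcases le_or_gt 0 δ with h1 | h1 <;> rcases le_or_gt 0 δ' with h2 | h2
  · have hd : δ ≤ δ' := by nlinarith
    nlinarith [mul_nonneg (by linarith : (0:ℝ) ≤ δ' - δ) h1,
      mul_nonneg (by linarith : (0:ℝ) ≤ δ' - δ) h2]
  · have : δ = 0 := by nlinarith
    nlinarith [sq_nonneg (δ + δ')]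
  · have h3 : δ' = 0 := by nlinarith
    exfalso
    rw [h3] at hle
    nlinarith [mul_pos (neg_pos.2 h1) (neg_pos.2 h1)]
  · have hd : δ' ≤ δ := by nlinarith
    nlinarith [mul_nonneg (by linarith : (0:ℝ) ≤ δ - δ') (by linarith : (0:ℝ) ≤ -δ),
      mul_nonneg (by linarith : (0:ℝ) ≤ δ - δ') (by linarith : (0:ℝ) ≤ -δ')]

lemma sq_diff_bound {a b M : ℝ} (ha2 : 2 ≤ a) (ha4 : a ≤ 4) (hb2 : 2 ≤ b) (hb4 : b ≤ 4)
    (hd : |a - b| ≤ M) : |a ^ 2 - b ^ 2| ≤ 8 * M := by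
  have hM : 0 ≤ M := le_trans (abs_nonneg _) hd
  have h := abs_le.mp hd
  rw [abs_le]
  constructor <;>
    nlinarith [mul_nonneg (by linarith : (0:ℝ) ≤ M - (a - b)) (by linarith : (0:ℝ) ≤ a + b),
      mul_nonneg (by linarith : (0:ℝ) ≤ M + (a - b)) (by linarith : (0:ℝ) ≤ a + b),
      mul_nonneg hM (by linarith : (0:ℝ) ≤ 8 - (a + b))]

lemma cos_diff_bound {D D' P P' c c' s d2 : ℝ}
    (hD2 : 2 ≤ D) (hD8 : D ≤ 8) (hD2' : 2 ≤ D') (hD8' : D' ≤ 8)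
    (hP0 : 0 ≤ P) (hPd : P ≤ 4 * d2)
    (hPP : |P - P'| ≤ 32 * s ^ 2) (hDD : |D - D'| ≤ 8 * s) (hs : 0 ≤ s)
    (hc : D * (1 - c) = P) (hc' : D' * (1 - c') = P') :
    |c - c'| ≤ 64 * s ^ 2 + 8 * s * d2 := by
  have hd20 : 0 ≤ 4 * d2 := le_trans hP0 hPd
  have h1 : D * c = D - P := by nlinarith [hc]
  have h1' : D' * c' = D' - P' := by nlinarith [hc']
  have hid : D * D' * (c - c') = D * (P' - P) + P * (D - D') := by
    calc D * D' * (c - c') = D' * (D * c) - D * (D' * c') := by ring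
      _ = D' * (D - P) - D * (D' - P') := by rw [h1, h1']
      _ = D * (P' - P) + P * (D - D') := by ring
  have habs : |D * D' * (c - c')| ≤ 256 * s ^ 2 + 32 * s * d2 := by
    rw [hid]
    have e1 : |D * (P' - P)| ≤ 8 * (32 * s ^ 2) :=
      absmul8 (by linarith) hD8 (by rwa [abs_sub_comm] at hPP)
    have e2 : |P * (D - D')| ≤ 4 * d2 * (8 * s) := by
      rw [abs_mul, abs_of_nonneg hP0]
      exact mul_le_mul hPd hDD (abs_nonneg _) hd20
    calc |D * (P' - P) + P * (D - D')| ≤ |D * (P' - P)| + |P * (D - D')| := abs_add_le _ _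
      _ ≤ 8 * (32 * s ^ 2) + 4 * d2 * (8 * s) := by linarith
      _ = 256 * s ^ 2 + 32 * s * d2 := by ring
  have h4 : 4 ≤ D * D' := by nlinarith
  have h5 : |c - c'| * 4 ≤ |c - c'| * (D * D') :=
    mul_le_mul_of_nonneg_left h4 (abs_nonneg _)
  have h6 : |c - c'| * (D * D') = |D * D' * (c - c')| := by
    rw [abs_mul, abs_of_nonneg (by linarith : (0:ℝ) ≤ D * D')]
    ring
  rw [h6] at h5
  linarith

lemma last_step {s u v d2 : ℝ} (hs0 : 0 < s) (hu0 : 0 ≤ u) (hv0 : 0 ≤ v)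
    (hvb : v ≤ 8 / 5) (huv : u * v ≤ 320 * s ^ 2 + 40 * s * d2)
    (h4d : 4 * d2 ≤ v ^ 2) (hd20 : 0 ≤ d2) (h : u ≤ v) : u ≤ 336 * s := by
  rcases le_or_gt s v with hsv | hsv
  · have hvpos : 0 < v := lt_of_lt_of_le hs0 hsv
    have e1 : 40 * s * d2 ≤ 10 * s * v ^ 2 := by
      nlinarith [mul_le_mul_of_nonneg_left h4d (by linarith : (0:ℝ) ≤ 10 * s)]
    have e3 : 10 * s * v ^ 2 ≤ 16 * s * v := by nlinarith [mul_nonneg hs0.le hv0]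
    have e4 : 320 * s ^ 2 ≤ 320 * s * v := by nlinarith [hsv, hs0.le]
    nlinarith [hvpos, huv, e1, e3, e4]
  · linarith

/-- main one-sided estimate -/
lemma side {s δ δ' : ℝ} (hs0 : 0 < s)
    (hδ : |δ| ≤ 0.8) (hδ' : |δ'| ≤ 0.8)
    (hc1 : |Real.cos δ - Real.cos δ'| ≤ 64 * s ^ 2 + 8 * s * δ ^ 2)
    (hc2 : |Real.cos δ - Real.cos δ'| ≤ 64 * s ^ 2 + 8 * s * δ' ^ 2)
    (h : |δ - δ'| ≤ |δ + δ'|) : |δ - δ'| ≤ 336 * s := by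
  have hpi := Real.pi_gt_three
  have hpi2 := Real.pi_lt_d2
  set u := |δ - δ'| with hu
  set v := |δ + δ'| with hv
  have hu0 : 0 ≤ u := abs_nonneg _
  have hv0 : 0 ≤ v := abs_nonneg _
  -- 0 ≤ δ δ'
  have hsq : u ^ 2 ≤ v ^ 2 := pow_le_pow_left₀ hu0 h 2
  have hδδ : 0 ≤ δ * δ' := by
    have e1 : u ^ 2 = (δ - δ') ^ 2 := sq_abs _
    have e2 : v ^ 2 = (δ + δ') ^ 2 := sq_abs _
    nlinarith [hsq]
  -- v ≤ 1.6
  have hvb : v ≤ 1.6 := le_trans (abs_add_le δ δ') (by linarith)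
  -- u*v ≤ 5 |cos δ - cos δ'|
  have hhalf1 : |(δ + δ') / 2| ≤ Real.pi / 2 := by
    rw [abs_div, abs_two]
    linarith [abs_add_le δ δ']
  have hhalf2 : |(δ - δ') / 2| ≤ Real.pi / 2 := by
    rw [abs_div, abs_two]
    have := abs_sub_abs_le_abs_sub δ δ'
    have h2 : |δ - δ'| ≤ |δ| + |δ'| := by
      calc |δ - δ'| = |δ + -δ'| := by ring_nf
        _ ≤ |δ| + |-δ'| := abs_add_le _ _
        _ = |δ| + |δ'| := by rw [abs_neg]
    linarith
  have hA1 := sin_lb hhalf1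
  have hA2 := sin_lb hhalf2
  set sA := |Real.sin ((δ + δ') / 2)| with hsA
  set sB := |Real.sin ((δ - δ') / 2)| with hsB
  have hsA0 : 0 ≤ sA := abs_nonneg _
  have hsB0 : 0 ≤ sB := abs_nonneg _
  have hπ0 : (0:ℝ) < Real.pi := by linarith
  have hA1' : v ≤ Real.pi * sA := by
    have e : |(δ + δ') / 2| = v / 2 := by rw [abs_div, abs_two]
    rw [e] at hA1
    calc v = Real.pi * (2 / Real.pi * (v / 2)) := by field_simp
      _ ≤ Real.pi * sA := mul_le_mul_of_nonneg_left hA1 hπ0.le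
  have hA2' : u ≤ Real.pi * sB := by
    have e : |(δ - δ') / 2| = u / 2 := by rw [abs_div, abs_two]
    rw [e] at hA2
    calc u = Real.pi * (2 / Real.pi * (u / 2)) := by field_simp
      _ ≤ Real.pi * sB := mul_le_mul_of_nonneg_left hA2 hπ0.le
  have hcsin : |Real.cos δ - Real.cos δ'| = 2 * sA * sB := by
    rw [Real.cos_sub_cos, abs_mul, abs_mul]
    norm_num
    rfl
  have hπsq : Real.pi ^ 2 ≤ 10 := by nlinarith
  have huv5 : u * v ≤ 5 * |Real.cos δ - Real.cos δ'| := by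
    rw [hcsin]
    nlinarith [mul_le_mul hA1' hA2' hu0 (by positivity : (0:ℝ) ≤ Real.pi * sA),
      mul_nonneg hsA0 hsB0, hπsq]
  -- pick the smaller of δ², δ'²
  have hmin : ∃ d2 : ℝ, 0 ≤ d2 ∧ |Real.cos δ - Real.cos δ'| ≤ 64 * s ^ 2 + 8 * s * d2 ∧
      4 * d2 ≤ v ^ 2 := by
    have e2 : v ^ 2 = (δ + δ') ^ 2 := sq_abs _
    rcases le_total (δ ^ 2) (δ' ^ 2) with hle | hle
    · refine ⟨δ ^ 2, sq_nonneg δ, hc1, ?_⟩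
      rw [e2]
      exact quarter hδδ hle
    · refine ⟨δ' ^ 2, sq_nonneg δ', hc2, ?_⟩
      rw [e2, show (δ + δ') ^ 2 = (δ' + δ) ^ 2 by ring]
      exact quarter (by rwa [mul_comm] at hδδ) hle
  obtain ⟨d2, hd20, hc64, h4d⟩ := hmin
  have huv' : u * v ≤ 320 * s ^ 2 + 40 * s * d2 := by linarith [huv5, hc64]
  exact last_step hs0 hu0 hv0 (by norm_num at hvb ⊢; linarith) huv' h4d hd20 h

lemma int_bound {s : ℝ} (hs0 : 0 < s) {A B : ℤ} {δ δ' : ℝ}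
    (h1 : |δ - (A : ℝ) * s| ≤ s) (h2 : |δ' - (B : ℝ) * s| ≤ s)
    (h : |δ - δ'| ≤ 336 * s) : |A - B| ≤ 350 := by
  have t1 := abs_le.mp h1
  have t2 := abs_le.mp h2
  have t3 := abs_le.mp h
  have hm : |((A : ℝ) - (B : ℝ)) * s| ≤ 338 * s := by
    rw [abs_le]
    constructor <;> nlinarith [t1.1, t1.2, t2.1, t2.2, t3.1, t3.2]
  rw [abs_mul, abs_of_nonneg hs0.le] at hm
  have hR : |(A : ℝ) - (B : ℝ)| ≤ 338 := le_of_mul_le_mul_right (by linarith) hs0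
  have hZ : |((A - B : ℤ) : ℝ)| ≤ 350 := by push_cast; rw [abs_le] at hR ⊢; constructor <;> linarith [hR.1, hR.2]
  exact_mod_cast hZ


lemma pair_data {τ : ℝ} (hτ : (10 : ℝ) ^ 6 < τ) {μ ν : ℤ}
    (hμ : μ ∈ calN τ) (hν : ν ∈ calN τ)
    {α₁ β₁ α₂ β₂ : ℝ} {x : ℂ × ℝ}
    (hx : x ∈ uSet τ (μ : ℝ) (Icc α₁ β₁) + uSet τ (ν : ℝ) (Icc α₂ β₂)) :
    ∃ r₁ r₂ δ : ℝ, r₁ ∈ Icc α₁ β₁ ∧ r₂ ∈ Icc α₂ β₂ ∧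
      |x.2 - (r₁ + r₂)| ≤ 2 * τ⁻¹ ∧
      ‖x.1‖ ^ 2 = r₁ ^ 2 + r₂ ^ 2 + 2 * r₁ * r₂ * Real.cos δ ∧
      |δ - ((μ : ℝ) - (ν : ℝ)) * (Real.sqrt τ)⁻¹| ≤ (Real.sqrt τ)⁻¹ ∧
      |δ| ≤ Real.pi / 4 := by
  have hτ0 : (0:ℝ) < τ := by nlinarith
  have hst : 0 < Real.sqrt τ := Real.sqrt_pos.mpr hτ0
  have hss : Real.sqrt τ * (Real.sqrt τ)⁻¹ = 1 := mul_inv_cancel₀ (ne_of_gt hst)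
  have hs0 : 0 < (Real.sqrt τ)⁻¹ := by positivity
  obtain ⟨p, hp, q, hq, hpq⟩ := Set.mem_add.mp hx
  obtain ⟨hp2, ⟨hp0, hpa1, hpa2⟩, hpJ⟩ := hp
  obtain ⟨hq2, ⟨hq0, hqa1, hqa2⟩, hqJ⟩ := hq
  have hx1 : x.1 = p.1 + q.1 := by rw [← hpq]; rfl
  have hx2 : x.2 = p.2 + q.2 := by rw [← hpq]; rfl
  refine ⟨‖p.1‖, ‖q.1‖, p.1.arg - q.1.arg, hpJ, hqJ, ?_, ?_, ?_, ?_⟩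
  · rw [hx2]
    have h1 := abs_le.mp hp2
    have h2 := abs_le.mp hq2
    rw [abs_le]
    constructor <;> [linarith [h1.1, h2.1]; linarith [h1.2, h2.2]]
  · have key1 : (p.1 * (starRingEnd ℂ) q.1).re
        = ‖p.1‖ * ‖q.1‖ * Real.cos (p.1.arg - q.1.arg) := by
      have e2 : (starRingEnd ℂ) q.1
          = ((‖q.1‖ : ℝ) : ℂ) * Complex.exp (-((q.1.arg : ℂ) * Complex.I)) := by
        conv_lhs => rw [← Complex.norm_mul_exp_arg_mul_I q.1]
        rw [map_mul, ← Complex.exp_conj, map_mul, Complex.conj_I, Complex.conj_ofReal,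
          Complex.conj_ofReal]
        ring_nf
      conv_lhs => rw [← Complex.norm_mul_exp_arg_mul_I p.1, e2]
      rw [show ((‖p.1‖ : ℝ) : ℂ) * Complex.exp ((p.1.arg : ℂ) * Complex.I) *
          (((‖q.1‖ : ℝ) : ℂ) * Complex.exp (-((q.1.arg : ℂ) * Complex.I)))
          = ((‖p.1‖ * ‖q.1‖ : ℝ) : ℂ) *
            Complex.exp (((p.1.arg - q.1.arg : ℝ) : ℂ) * Complex.I) by
        rw [mul_mul_mul_comm, ← Complex.exp_add]
        push_cast
        ring_nf]
      rw [Complex.re_ofReal_mul, Complex.exp_ofReal_mul_I_re]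
    rw [hx1, Complex.sq_norm, Complex.normSq_add, key1,
      ← Complex.sq_norm p.1, ← Complex.sq_norm q.1]
    ring
  · have e1 : ((μ:ℝ) + 1) * (Real.sqrt τ)⁻¹ = (μ:ℝ) * (Real.sqrt τ)⁻¹ + (Real.sqrt τ)⁻¹ := by ring
    have e2 : ((ν:ℝ) + 1) * (Real.sqrt τ)⁻¹ = (ν:ℝ) * (Real.sqrt τ)⁻¹ + (Real.sqrt τ)⁻¹ := by ring
    rw [abs_le]
    constructor
    · linarith [hpa1, hqa2, e2]
    · linarith [hpa2, hqa1, e1]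
  · have hμb : |(μ:ℝ)| ≤ Real.sqrt τ * (Real.pi / 8) - 1 := hμ
    have hνb : |(ν:ℝ)| ≤ Real.sqrt τ * (Real.pi / 8) - 1 := hν
    have hμs : |(μ:ℝ)| * (Real.sqrt τ)⁻¹ ≤ Real.pi / 8 - (Real.sqrt τ)⁻¹ := by
      calc |(μ:ℝ)| * (Real.sqrt τ)⁻¹ ≤ (Real.sqrt τ * (Real.pi / 8) - 1) * (Real.sqrt τ)⁻¹ :=
            mul_le_mul_of_nonneg_right hμb hs0.le
        _ = (Real.sqrt τ * (Real.sqrt τ)⁻¹) * (Real.pi / 8) - (Real.sqrt τ)⁻¹ := by ring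
        _ = Real.pi / 8 - (Real.sqrt τ)⁻¹ := by rw [hss]; ring
    have hνs : |(ν:ℝ)| * (Real.sqrt τ)⁻¹ ≤ Real.pi / 8 - (Real.sqrt τ)⁻¹ := by
      calc |(ν:ℝ)| * (Real.sqrt τ)⁻¹ ≤ (Real.sqrt τ * (Real.pi / 8) - 1) * (Real.sqrt τ)⁻¹ :=
            mul_le_mul_of_nonneg_right hνb hs0.le
        _ = (Real.sqrt τ * (Real.sqrt τ)⁻¹) * (Real.pi / 8) - (Real.sqrt τ)⁻¹ := by ring
        _ = Real.pi / 8 - (Real.sqrt τ)⁻¹ := by rw [hss]; ring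
    have hμlow := mul_le_mul_of_nonneg_right (neg_abs_le (μ:ℝ)) hs0.le
    have hμhigh := mul_le_mul_of_nonneg_right (le_abs_self (μ:ℝ)) hs0.le
    have hνlow := mul_le_mul_of_nonneg_right (neg_abs_le (ν:ℝ)) hs0.le
    have hνhigh := mul_le_mul_of_nonneg_right (le_abs_self (ν:ℝ)) hs0.le
    have hθ1 : |p.1.arg| ≤ Real.pi / 8 := by
      rw [abs_le]
      constructor
      · linarith [hpa1, hμlow, hμs, hs0.le]
      · linarith [hpa2, hμhigh, hμs, hs0.le]
    have hθ2 : |q.1.arg| ≤ Real.pi / 8 := by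
      rw [abs_le]
      constructor
      · linarith [hqa1, hνlow, hνs, hs0.le]
      · linarith [hqa2, hνhigh, hνs, hs0.le]
    have h1 := abs_le.mp hθ1
    have h2 := abs_le.mp hθ2
    rw [abs_le]
    constructor <;> [linarith [h1.1, h2.2]; linarith [h1.2, h2.1]]

lemma prod_diff_bound {r₁ r₂ r₁' r₂' s : ℝ}
    (hb1 : 1 ≤ r₁) (hb2 : r₁ ≤ 2) (hb3 : 1 ≤ r₂) (hb4 : r₂ ≤ 2)
    (hb1' : 1 ≤ r₁') (hb2' : r₁' ≤ 2) (hb3' : 1 ≤ r₂') (hb4' : r₂' ≤ 2)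
    (hd1 : |r₁ - r₁'| ≤ s) (hd2 : |r₂ - r₂'| ≤ s) (hs : 0 ≤ s) :
    |2 * r₁ * r₂ - 2 * r₁' * r₂'| ≤ 8 * s := by
  have k1 := abs_le.mp hd1
  have k2 := abs_le.mp hd2
  rw [abs_le]
  constructor
  · nlinarith [mul_nonneg (by linarith : (0:ℝ) ≤ 2 - r₁) hs,
      mul_nonneg (by linarith : (0:ℝ) ≤ r₁) (by linarith : (0:ℝ) ≤ s + (r₂ - r₂')),
      mul_nonneg (by linarith : (0:ℝ) ≤ 2 - r₂') hs,
      mul_nonneg (by linarith : (0:ℝ) ≤ r₂') (by linarith : (0:ℝ) ≤ s + (r₁ - r₁'))]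
  · nlinarith [mul_nonneg (by linarith : (0:ℝ) ≤ 2 - r₁) hs,
      mul_nonneg (by linarith : (0:ℝ) ≤ r₁) (by linarith : (0:ℝ) ≤ s - (r₂ - r₂')),
      mul_nonneg (by linarith : (0:ℝ) ≤ 2 - r₂') hs,
      mul_nonneg (by linarith : (0:ℝ) ≤ r₂') (by linarith : (0:ℝ) ≤ s - (r₁ - r₁'))]

lemma cos_diff_bound' {r₁ r₂ r₁' r₂' s δ δ' : ℝ}
    (hb1 : 1 ≤ r₁) (hb2 : r₁ ≤ 2) (hb3 : 1 ≤ r₂) (hb4 : r₂ ≤ 2)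
    (hb1' : 1 ≤ r₁') (hb2' : r₁' ≤ 2) (hb3' : 1 ≤ r₂') (hb4' : r₂' ≤ 2)
    (hs : 0 ≤ s)
    (hPP : |2 * r₁ * r₂ * (1 - Real.cos δ) - 2 * r₁' * r₂' * (1 - Real.cos δ')| ≤ 32 * s ^ 2)
    (hDD : |2 * r₁ * r₂ - 2 * r₁' * r₂'| ≤ 8 * s) :
    |Real.cos δ - Real.cos δ'| ≤ 64 * s ^ 2 + 8 * s * δ ^ 2 := by
  have hD2 : (2:ℝ) ≤ 2 * r₁ * r₂ := by
    nlinarith [mul_nonneg (by linarith : (0:ℝ) ≤ r₁ - 1) (by linarith : (0:ℝ) ≤ r₂ - 1)]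
  have hD8 : 2 * r₁ * r₂ ≤ 8 := by
    nlinarith [mul_nonneg (by linarith : (0:ℝ) ≤ 2 - r₁) (by linarith : (0:ℝ) ≤ 2 - r₂)]
  have hD2' : (2:ℝ) ≤ 2 * r₁' * r₂' := by
    nlinarith [mul_nonneg (by linarith : (0:ℝ) ≤ r₁' - 1) (by linarith : (0:ℝ) ≤ r₂' - 1)]
  have hD8' : 2 * r₁' * r₂' ≤ 8 := by
    nlinarith [mul_nonneg (by linarith : (0:ℝ) ≤ 2 - r₁') (by linarith : (0:ℝ) ≤ 2 - r₂')]
  have h1c : 1 - Real.cos δ ≤ δ ^ 2 / 2 := by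
    have := Real.one_sub_sq_div_two_le_cos (x := δ); linarith
  have h1c0 : 0 ≤ 1 - Real.cos δ := by linarith [Real.cos_le_one δ]
  have hP0 : 0 ≤ 2 * r₁ * r₂ * (1 - Real.cos δ) := mul_nonneg (by linarith) h1c0
  have hPd : 2 * r₁ * r₂ * (1 - Real.cos δ) ≤ 4 * δ ^ 2 := by
    calc 2 * r₁ * r₂ * (1 - Real.cos δ) ≤ 8 * (δ ^ 2 / 2) :=
          mul_le_mul hD8 h1c h1c0 (by norm_num)
      _ = 4 * δ ^ 2 := by ring
  exact cos_diff_bound hD2 hD8 hD2' hD8' hP0 hPd hPP hDD hs rfl rfl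

lemma key {τ : ℝ} (hτ : (10 : ℝ) ^ 6 < τ) {α₁ β₁ α₂ β₂ : ℝ}
    (h11 : 1 ≤ α₁) (h1m : α₁ ≤ β₁) (h12 : β₁ ≤ 2) (hJ1 : β₁ - α₁ ≤ (Real.sqrt τ)⁻¹)
    (h21 : 1 ≤ α₂) (h2m : α₂ ≤ β₂) (h22 : β₂ ≤ 2) (hJ2 : β₂ - α₂ ≤ (Real.sqrt τ)⁻¹)
    {x : ℂ × ℝ} {μ ν μ' ν' : ℤ}
    (hμ : μ ∈ calN τ) (hν : ν ∈ calN τ) (hμ' : μ' ∈ calN τ) (hν' : ν' ∈ calN τ)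
    (hx : x ∈ uSet τ (μ : ℝ) (Icc α₁ β₁) + uSet τ (ν : ℝ) (Icc α₂ β₂))
    (hx' : x ∈ uSet τ (μ' : ℝ) (Icc α₁ β₁) + uSet τ (ν' : ℝ) (Icc α₂ β₂)) :
    |(μ - ν) - (μ' - ν')| ≤ 350 ∨ |(μ - ν) + (μ' - ν')| ≤ 350 := by
  obtain ⟨r₁, r₂, δ, hr1, hr2, hsum, hA, hδc, hδb⟩ := pair_data hτ hμ hν hx
  obtain ⟨r₁', r₂', δ', hr1', hr2', hsum', hA', hδc', hδb'⟩ := pair_data hτ hμ' hν' hx'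
  have hτ0 : (0:ℝ) < τ := by nlinarith
  have hst : 0 < Real.sqrt τ := Real.sqrt_pos.mpr hτ0
  have hs0 : 0 < (Real.sqrt τ)⁻¹ := by positivity
  have hτs : τ⁻¹ = ((Real.sqrt τ)⁻¹) ^ 2 := by
    conv_lhs => rw [← Real.sq_sqrt hτ0.le]
    rw [inv_pow]
  have hpi := Real.pi_gt_three
  have hpi2 := Real.pi_lt_d2
  rw [hτs] at hsum hsum'
  obtain ⟨hr1a, hr1b⟩ := hr1
  obtain ⟨hr2a, hr2b⟩ := hr2
  obtain ⟨hr1a', hr1b'⟩ := hr1'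
  obtain ⟨hr2a', hr2b'⟩ := hr2'
  have hb1 : (1:ℝ) ≤ r₁ := le_trans h11 hr1a
  have hb2 : r₁ ≤ 2 := le_trans hr1b h12
  have hb3 : (1:ℝ) ≤ r₂ := le_trans h21 hr2a
  have hb4 : r₂ ≤ 2 := le_trans hr2b h22
  have hb1' : (1:ℝ) ≤ r₁' := le_trans h11 hr1a'
  have hb2' : r₁' ≤ 2 := le_trans hr1b' h12
  have hb3' : (1:ℝ) ≤ r₂' := le_trans h21 hr2a'
  have hb4' : r₂' ≤ 2 := le_trans hr2b' h22
  -- difference of squares of the radial sums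
  have hsq : |(r₁ + r₂) ^ 2 - (r₁' + r₂') ^ 2| ≤ 32 * ((Real.sqrt τ)⁻¹) ^ 2 := by
    have t1 := abs_le.mp hsum
    have t2 := abs_le.mp hsum'
    have hd : |(r₁ + r₂) - (r₁' + r₂')| ≤ 4 * ((Real.sqrt τ)⁻¹) ^ 2 := by
      rw [abs_le]; constructor <;> linarith [t1.1, t1.2, t2.1, t2.2]
    have := sq_diff_bound (by linarith) (by linarith) (by linarith) (by linarith) hd
    calc |(r₁ + r₂) ^ 2 - (r₁' + r₂') ^ 2| ≤ 8 * (4 * ((Real.sqrt τ)⁻¹) ^ 2) := this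
      _ = 32 * ((Real.sqrt τ)⁻¹) ^ 2 := by ring
  -- P identities
  have hP : (r₁ + r₂) ^ 2 - ‖x.1‖ ^ 2 = 2 * r₁ * r₂ * (1 - Real.cos δ) := by
    rw [hA]; ring
  have hP' : (r₁' + r₂') ^ 2 - ‖x.1‖ ^ 2 = 2 * r₁' * r₂' * (1 - Real.cos δ') := by
    rw [hA']; ring
  have hPP : |2 * r₁ * r₂ * (1 - Real.cos δ) - 2 * r₁' * r₂' * (1 - Real.cos δ')|
      ≤ 32 * ((Real.sqrt τ)⁻¹) ^ 2 := by
    have e : 2 * r₁ * r₂ * (1 - Real.cos δ) - 2 * r₁' * r₂' * (1 - Real.cos δ')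
        = (r₁ + r₂) ^ 2 - (r₁' + r₂') ^ 2 := by linarith [hP, hP']
    rw [e]; exact hsq
  -- D bounds
  have hd1 : |r₁ - r₁'| ≤ (Real.sqrt τ)⁻¹ := by
    rw [abs_le]; constructor <;> linarith
  have hd2 : |r₂ - r₂'| ≤ (Real.sqrt τ)⁻¹ := by
    rw [abs_le]; constructor <;> linarith
  have hDD : |2 * r₁ * r₂ - 2 * r₁' * r₂'| ≤ 8 * (Real.sqrt τ)⁻¹ :=
    prod_diff_bound hb1 hb2 hb3 hb4 hb1' hb2' hb3' hb4' hd1 hd2 hs0.le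
  -- cos difference bounds, both flavours
  have hcos1 : |Real.cos δ - Real.cos δ'|
      ≤ 64 * ((Real.sqrt τ)⁻¹) ^ 2 + 8 * (Real.sqrt τ)⁻¹ * δ ^ 2 :=
    cos_diff_bound' hb1 hb2 hb3 hb4 hb1' hb2' hb3' hb4' hs0.le hPP hDD
  have hcos2 : |Real.cos δ - Real.cos δ'|
      ≤ 64 * ((Real.sqrt τ)⁻¹) ^ 2 + 8 * (Real.sqrt τ)⁻¹ * δ' ^ 2 := by
    rw [abs_sub_comm]
    exact cos_diff_bound' hb1' hb2' hb3' hb4' hb1 hb2 hb3 hb4 hs0.le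
      (by rwa [abs_sub_comm] at hPP) (by rwa [abs_sub_comm] at hDD)
  -- |δ|, |δ'| ≤ 0.8
  have h08 : |δ| ≤ 0.8 := by
    have : Real.pi / 4 ≤ 0.8 := by norm_num at hpi2 ⊢; linarith
    linarith [hδb]
  have h08' : |δ'| ≤ 0.8 := by
    have : Real.pi / 4 ≤ 0.8 := by norm_num at hpi2 ⊢; linarith
    linarith [hδb']
  rcases le_total (|δ - δ'|) (|δ + δ'|) with hc | hc
  · left
    have h336 := side hs0 h08 h08' hcos1 hcos2 hc
    have h1 : |δ - ((μ - ν : ℤ) : ℝ) * (Real.sqrt τ)⁻¹| ≤ (Real.sqrt τ)⁻¹ := by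
      push_cast
      exact hδc
    have h2 : |δ' - ((μ' - ν' : ℤ) : ℝ) * (Real.sqrt τ)⁻¹| ≤ (Real.sqrt τ)⁻¹ := by
      push_cast
      exact hδc'
    exact int_bound hs0 h1 h2 h336
  · right
    have hc1n : |Real.cos δ - Real.cos (-δ')|
        ≤ 64 * ((Real.sqrt τ)⁻¹) ^ 2 + 8 * (Real.sqrt τ)⁻¹ * δ ^ 2 := by
      rwa [Real.cos_neg]
    have hc2n : |Real.cos δ - Real.cos (-δ')|
        ≤ 64 * ((Real.sqrt τ)⁻¹) ^ 2 + 8 * (Real.sqrt τ)⁻¹ * (-δ') ^ 2 := by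
      rw [Real.cos_neg]
      convert hcos2 using 3
      ring
    have hcn : |δ - -δ'| ≤ |δ + -δ'| := by
      rw [show δ - -δ' = δ + δ' by ring, show δ + -δ' = δ - δ' by ring]
      exact hc
    have h336 := side hs0 h08 (by rwa [abs_neg]) hc1n hc2n hcn
    rw [show δ - -δ' = δ + δ' by ring] at h336
    have h1 : |δ - ((μ - ν : ℤ) : ℝ) * (Real.sqrt τ)⁻¹| ≤ (Real.sqrt τ)⁻¹ := by
      push_cast
      exact hδc
    have h2 : |(-δ') - ((-(μ' - ν') : ℤ) : ℝ) * (Real.sqrt τ)⁻¹| ≤ (Real.sqrt τ)⁻¹ := by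
      push_cast
      have t := abs_le.mp hδc'
      rw [abs_le]
      constructor <;> [linarith [t.1, t.2]; linarith [t.1, t.2]]
    have h336' : |δ - -δ'| ≤ 336 * (Real.sqrt τ)⁻¹ := by
      rwa [show δ - -δ' = δ + δ' by ring]
    have := int_bound hs0 h1 h2 h336'
    rwa [show μ - ν - -(μ' - ν') = μ - ν + (μ' - ν') by ring] at this

end Statement2Aux

theorem statement2 :
    ∃ C : ℕ, 0 < C ∧
      ∀ τ : ℝ, (10 : ℝ) ^ 6 < τ →
      ∀ α₁ β₁ α₂ β₂ : ℝ,
        1 ≤ α₁ → α₁ ≤ β₁ → β₁ ≤ 2 → β₁ - α₁ ≤ (Real.sqrt τ)⁻¹ →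
        1 ≤ α₂ → α₂ ≤ β₂ → β₂ ≤ 2 → β₂ - α₂ ≤ (Real.sqrt τ)⁻¹ →
        ∀ a ∈ calI τ,
        ∀ x : ℂ × ℝ,
          {p : ℤ × ℤ | p.1 ∈ calN τ ∧ p.2 ∈ calN τ ∧
              ((p.1 : ℝ) + (p.2 : ℝ)) / 2 = a ∧
              x ∈ uSet τ (p.1 : ℝ) (Icc α₁ β₁) + uSet τ (p.2 : ℝ) (Icc α₂ β₂)}.Finite ∧
          {p : ℤ × ℤ | p.1 ∈ calN τ ∧ p.2 ∈ calN τ ∧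
              ((p.1 : ℝ) + (p.2 : ℝ)) / 2 = a ∧
              x ∈ uSet τ (p.1 : ℝ) (Icc α₁ β₁) + uSet τ (p.2 : ℝ) (Icc α₂ β₂)}.ncard ≤ C := by
  refine ⟨1500, by norm_num, ?_⟩
  intro τ hτ α₁ β₁ α₂ β₂ h11 h1m h12 hJ1 h21 h2m h22 hJ2 a ha x
  set S : Set (ℤ × ℤ) := {p : ℤ × ℤ | p.1 ∈ calN τ ∧ p.2 ∈ calN τ ∧
      ((p.1 : ℝ) + (p.2 : ℝ)) / 2 = a ∧
      x ∈ uSet τ (p.1 : ℝ) (Icc α₁ β₁) + uSet τ (p.2 : ℝ) (Icc α₂ β₂)} with hS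
  rcases Set.eq_empty_or_nonempty S with hE | ⟨⟨μ₀, ν₀⟩, hp₀⟩
  · rw [hE]
    exact ⟨Set.finite_empty, by simp⟩
  · obtain ⟨hμ₀, hν₀, ha₀, hx₀⟩ := hp₀
    set c : ℤ := μ₀ - ν₀ with hc
    set T : Set ℤ := Icc (c - 350) (c + 350) ∪ Icc (-c - 350) (-c + 350) with hT
    have hTfin : T.Finite := (Set.finite_Icc _ _).union (Set.finite_Icc _ _)
    have hmap : ∀ p ∈ S, p.1 - p.2 ∈ T := by
      rintro ⟨μ, ν⟩ ⟨hμ, hν, haa, hxx⟩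
      have hk := Statement2Aux.key hτ h11 h1m h12 hJ1 h21 h2m h22 hJ2 hμ hν hμ₀ hν₀ hxx hx₀
      rcases hk with h | h
      · left
        rw [Set.mem_Icc]
        rw [abs_le] at h
        omega
      · right
        rw [Set.mem_Icc]
        rw [abs_le] at h
        omega
    have hinj : Set.InjOn (fun p : ℤ × ℤ => p.1 - p.2) S := by
      rintro ⟨μ, ν⟩ ⟨hμ, hν, haa, hxx⟩ ⟨μ', ν'⟩ ⟨hμ', hν', haa', hxx'⟩ hfe
      simp only at hfe
      have h1 : ((μ : ℝ) + (ν : ℝ)) = ((μ' : ℝ) + (ν' : ℝ)) := by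
        rw [div_eq_iff (by norm_num : (2:ℝ) ≠ 0)] at haa haa'
        linarith [haa, haa']
      have h2 : μ + ν = μ' + ν' := by exact_mod_cast h1
      have : μ = μ' ∧ ν = ν' := by omega
      exact Prod.ext this.1 this.2
    have himfin : ((fun p : ℤ × ℤ => p.1 - p.2) '' S).Finite :=
      hTfin.subset (Set.image_subset_iff.mpr hmap)
    have hfin : S.Finite := Set.Finite.of_finite_image himfin hinj
    refine ⟨hfin, ?_⟩
    have hcard : S.ncard ≤ T.ncard := by
      rw [← Set.ncard_image_of_injOn hinj]
      exact Set.ncard_le_ncard (Set.image_subset_iff.mpr hmap) hTfin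
    have hTcard : T.ncard ≤ 1402 := by
      have e1 : (Icc (c - 350) (c + 350) : Set ℤ).ncard = 701 := by
        rw [← Finset.coe_Icc, Set.ncard_coe_finset, Int.card_Icc]
        omega
      have e2 : (Icc (-c - 350) (-c + 350) : Set ℤ).ncard = 701 := by
        rw [← Finset.coe_Icc, Set.ncard_coe_finset, Int.card_Icc]
        omega
      calc T.ncard ≤ (Icc (c - 350) (c + 350) : Set ℤ).ncard +
            (Icc (-c - 350) (-c + 350) : Set ℤ).ncard := Set.ncard_union_le _ _
        _ = 1402 := by rw [e1, e2]
    omega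
end

section
/- There exists a constant C > 0, independent of τ, of J_1, J_2, of a ∈ ℐ, and of η ∈ J̃_1 + J̃_2, such that for every ξ ∈ ℝ², ∑_{(μ,ν) ∈ k_0^{-1}({a})} χ_{E_a^η(μ,ν)}(ξ) ≤ C, where E_a^η(μ,ν) = {ξ ∈ ℝ² : (ξ, η) ∈ E_a(μ,ν)} is the horizontal slice of E_a(μ,ν) at height η. -/
set_option maxHeartbeats 1000000


open Set Pointwise

/-- law of cosines for complex numbers -/
lemma abs_add_sq_eq (z w : ℂ) (hz : z ≠ 0) (hw : w ≠ 0) :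
    ‖z + w‖ ^ 2 = ‖z‖ ^ 2 + ‖w‖ ^ 2 +
      2 * ‖z‖ * ‖w‖ * Real.cos (z.arg - w.arg) := by
  have hz' : (‖z‖ : ℝ) ≠ 0 := by simpa using hz
  have hw' : (‖w‖ : ℝ) ≠ 0 := by simpa using hw
  rw [Real.cos_sub, Complex.cos_arg hz, Complex.cos_arg hw, Complex.sin_arg, Complex.sin_arg,
    Complex.sq_norm, Complex.sq_norm, Complex.sq_norm]
  field_simp
  simp only [Complex.normSq_apply, Complex.add_re, Complex.add_im]
  ring

/-- unpack membership in a sum of `uSet`s -/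
lemma decomp {τ α₁ β₁ α₂ β₂ : ℝ} {ξ : ℂ} {η : ℝ} {μ ν : ℤ}
    (h : (ξ, η) ∈ uSet τ (μ : ℝ) (Icc α₁ β₁) + uSet τ (ν : ℝ) (Icc α₂ β₂)) :
    ∃ r₁ r₂ φ₁ φ₂ : ℝ,
      (α₁ ≤ r₁ ∧ r₁ ≤ β₁) ∧ (α₂ ≤ r₂ ∧ r₂ ≤ β₂) ∧
      ((μ : ℝ) * (Real.sqrt τ)⁻¹ ≤ φ₁ ∧ φ₁ < ((μ : ℝ) + 1) * (Real.sqrt τ)⁻¹) ∧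
      ((ν : ℝ) * (Real.sqrt τ)⁻¹ ≤ φ₂ ∧ φ₂ < ((ν : ℝ) + 1) * (Real.sqrt τ)⁻¹) ∧
      |η - (r₁ + r₂)| ≤ 2 * τ⁻¹ ∧
      ‖ξ‖ ^ 2 = r₁ ^ 2 + r₂ ^ 2 + 2 * r₁ * r₂ * Real.cos (φ₁ - φ₂) := by
  rw [Set.mem_add] at h
  obtain ⟨p, hp, q, hq, hpq⟩ := h
  obtain ⟨hp1, ⟨hpne, hpa1, hpa2⟩, hpJ1, hpJ2⟩ := hp
  obtain ⟨hq1, ⟨hqne, hqa1, hqa2⟩, hqJ1, hqJ2⟩ := hq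
  have hξ : p.1 + q.1 = ξ := congrArg Prod.fst hpq
  have hη : p.2 + q.2 = η := congrArg Prod.snd hpq
  refine ⟨‖p.1‖, ‖q.1‖, p.1.arg, q.1.arg,
    ⟨hpJ1, hpJ2⟩, ⟨hqJ1, hqJ2⟩, ⟨hpa1, hpa2⟩, ⟨hqa1, hqa2⟩, ?_, ?_⟩
  · rw [abs_le] at hp1 hq1 ⊢
    constructor <;> linarith [hp1.1, hp1.2, hq1.1, hq1.2]
  · rw [← hξ]
    exact abs_add_sq_eq _ _ hpne hqne

/-- angle bound from membership in `calN` -/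
lemma angle_bd {δ s μr φ : ℝ} (hδ0 : 0 < δ) (hsδ : s * δ = 1)
    (hμb : |μr| ≤ s * (Real.pi / 8) - 1) (h1 : μr * δ ≤ φ) (h2 : φ < (μr + 1) * δ) :
    |φ| ≤ Real.pi / 8 := by
  have hl : -(s * (Real.pi / 8) - 1) ≤ μr := by linarith [neg_abs_le μr]
  have hu : μr ≤ s * (Real.pi / 8) - 1 := le_trans (le_abs_self μr) hμb
  have hl' : (-(s * (Real.pi / 8) - 1)) * δ ≤ μr * δ := by
    exact mul_le_mul_of_nonneg_right hl hδ0.le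
  have hu' : (μr + 1) * δ ≤ (s * (Real.pi / 8)) * δ := by
    apply mul_le_mul_of_nonneg_right _ hδ0.le
    linarith
  rw [abs_le]
  constructor <;> nlinarith

/-- Key pairwise separation lemma. -/
lemma key_s3 {τ α₁ β₁ α₂ β₂ : ℝ} (hτ : (10:ℝ) ^ 6 < τ)
    (hα₁ : 1 ≤ α₁) (hβ₁ : β₁ ≤ 2) (hJ₁ : β₁ - α₁ ≤ (Real.sqrt τ)⁻¹)
    (hα₂ : 1 ≤ α₂) (hβ₂ : β₂ ≤ 2) (hJ₂ : β₂ - α₂ ≤ (Real.sqrt τ)⁻¹)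
    {ξ : ℂ} {η : ℝ} {μ ν μ' ν' : ℤ}
    (hμ : μ ∈ calN τ) (hν : ν ∈ calN τ) (hμ' : μ' ∈ calN τ) (hν' : ν' ∈ calN τ)
    (hsum : μ + ν = μ' + ν')
    (h1 : (ξ, η) ∈ uSet τ (μ : ℝ) (Icc α₁ β₁) + uSet τ (ν : ℝ) (Icc α₂ β₂))
    (h2 : (ξ, η) ∈ uSet τ (μ' : ℝ) (Icc α₁ β₁) + uSet τ (ν' : ℝ) (Icc α₂ β₂)) :
    |μ' - μ| ≤ 200 ∨ |μ' - ν| ≤ 200 := by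
  by_contra hcon
  push_neg at hcon
  obtain ⟨hm, hn⟩ := hcon
  obtain ⟨r₁, r₂, φ₁, φ₂, hr₁, hr₂, hφ₁, hφ₂, hηs, hξs⟩ := decomp h1
  obtain ⟨r₁', r₂', φ₁', φ₂', hr₁', hr₂', hφ₁', hφ₂', hηs', hξs'⟩ := decomp h2
  set δ : ℝ := (Real.sqrt τ)⁻¹ with hδdef
  have hτ0 : (0:ℝ) < τ := by nlinarith
  have hst : 0 < Real.sqrt τ := Real.sqrt_pos.2 hτ0
  have hδ0 : 0 < δ := inv_pos.2 hst
  have hstδ : Real.sqrt τ * δ = 1 := mul_inv_cancel₀ hst.ne'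
  have hsq : Real.sqrt τ ^ 2 = τ := Real.sq_sqrt hτ0.le
  have hτinv : τ⁻¹ = δ ^ 2 := by
    rw [hδdef, inv_pow, hsq]
  have hπu : Real.pi ≤ 3.15 := Real.pi_lt_d2.le
  have hπl : (3.14:ℝ) ≤ Real.pi := Real.pi_gt_d2.le
  -- calN bounds
  have hμb : |(μ:ℝ)| ≤ Real.sqrt τ * (Real.pi / 8) - 1 := hμ
  have hνb : |(ν:ℝ)| ≤ Real.sqrt τ * (Real.pi / 8) - 1 := hν
  have hμ'b : |(μ':ℝ)| ≤ Real.sqrt τ * (Real.pi / 8) - 1 := hμ'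
  have hν'b : |(ν':ℝ)| ≤ Real.sqrt τ * (Real.pi / 8) - 1 := hν'
  -- real versions of m, n
  set m : ℝ := (μ':ℝ) - (μ:ℝ) with hmdef
  set n : ℝ := (μ':ℝ) - (ν:ℝ) with hndef
  have hM : 201 ≤ |m| := by
    have h201 : (201:ℤ) ≤ |μ' - μ| := hm
    have : ((201:ℤ):ℝ) ≤ (|μ' - μ| : ℤ) := by exact_mod_cast h201
    rw [hmdef]
    push_cast at this ⊢
    exact_mod_cast h201
  have hN : 201 ≤ |n| := by
    have h201 : (201:ℤ) ≤ |μ' - ν| := hn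
    have : ((201:ℤ):ℝ) ≤ (|μ' - ν| : ℤ) := by exact_mod_cast h201
    rw [hndef]
    push_cast at this ⊢
    exact_mod_cast h201
  have hν'val : (ν':ℝ) = (μ:ℝ) + (ν:ℝ) - (μ':ℝ) := by
    have := congrArg (fun z : ℤ => (z : ℝ)) hsum
    push_cast at this
    linarith
  -- angle absolute bounds
  have hφ₁b : |φ₁| ≤ Real.pi / 8 := angle_bd hδ0 hstδ hμb hφ₁.1 hφ₁.2
  have hφ₂b : |φ₂| ≤ Real.pi / 8 := angle_bd hδ0 hstδ hνb hφ₂.1 hφ₂.2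
  have hφ₁'b : |φ₁'| ≤ Real.pi / 8 := angle_bd hδ0 hstδ hμ'b hφ₁'.1 hφ₁'.2
  have hφ₂'b : |φ₂'| ≤ Real.pi / 8 := angle_bd hδ0 hstδ hν'b hφ₂'.1 hφ₂'.2
  rw [abs_le] at hφ₁b hφ₂b hφ₁'b hφ₂'b
  set A : ℝ := (φ₁ - φ₂) / 2 with hAdef
  set A' : ℝ := (φ₁' - φ₂') / 2 with hA'def
  have hν'δ : (ν':ℝ) * δ = ((μ:ℝ) + (ν:ℝ) - (μ':ℝ)) * δ := by rw [hν'val]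
  -- difference / sum of angles bounds
  have hd1 : |(A - A') + m * δ| ≤ δ := by
    rw [abs_le]
    constructor <;>
      (rw [hAdef, hA'def, hmdef];
       linarith [hφ₁.1, hφ₁.2, hφ₂.1, hφ₂.2, hφ₁'.1, hφ₁'.2, hφ₂'.1, hφ₂'.2, hν'δ])
  have hd2 : |(A + A') - n * δ| ≤ δ := by
    rw [abs_le]
    constructor <;>
      (rw [hAdef, hA'def, hndef];
       linarith [hφ₁.1, hφ₁.2, hφ₂.1, hφ₂.2, hφ₁'.1, hφ₁'.2, hφ₂'.1, hφ₂'.2, hν'δ])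
  have hd3 : |2 * A' - (m + n) * δ| ≤ δ := by
    rw [abs_le]
    constructor <;>
      (rw [hA'def, hmdef, hndef];
       linarith [hφ₁'.1, hφ₁'.2, hφ₂'.1, hφ₂'.2, hν'δ])
  -- lower bounds on |A - A'| and |A + A'|
  have hlow1 : (|m| - 1) * δ ≤ |A - A'| := by
    have t := abs_sub_abs_le_abs_sub (m * δ) (A' - A)
    have e : m * δ - (A' - A) = (A - A') + m * δ := by ring
    rw [e] at t
    have h1 : |m * δ| = |m| * δ := by rw [abs_mul, abs_of_pos hδ0]
    have e2 : |A' - A| = |A - A'| := abs_sub_comm _ _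
    linarith [hd1, t, h1, e2]
  have hlow2 : (|n| - 1) * δ ≤ |A + A'| := by
    have t := abs_sub_abs_le_abs_sub (n * δ) (n * δ - (A + A'))
    have e : n * δ - (n * δ - (A + A')) = A + A' := by ring
    rw [e] at t
    have h1 : |n * δ| = |n| * δ := by rw [abs_mul, abs_of_pos hδ0]
    have e5 : |n * δ - (A + A')| = |(A + A') - n * δ| := abs_sub_comm _ _
    linarith [hd2, t, h1, e5]
  have hA'b : |A'| ≤ (|m| + |n|) * δ := by
    have t := abs_sub_abs_le_abs_sub (2 * A') ((m + n) * δ)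
    have h1 : |(m + n) * δ| ≤ (|m| + |n|) * δ := by
      rw [abs_mul, abs_of_pos hδ0]
      exact mul_le_mul_of_nonneg_right (abs_add_le m n) hδ0.le
    have h2 : |2 * A'| = 2 * |A'| := by rw [abs_mul]; norm_num
    have h4 : δ ≤ (|m| + |n|) * δ := le_mul_of_one_le_left hδ0.le (by linarith)
    linarith [hd3, t, h1, h2, h4]
  -- δ-scale bounds on m and n
  have hmδ : |m| * δ ≤ 1 := by
    have h1 : |m| ≤ |(μ':ℝ)| + |(μ:ℝ)| := abs_sub _ _
    have h2 : |m| * δ ≤ (2 * (Real.sqrt τ * (Real.pi / 8))) * δ := by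
      apply mul_le_mul_of_nonneg_right _ hδ0.le
      linarith
    have h3 : (2 * (Real.sqrt τ * (Real.pi / 8))) * δ = Real.pi / 4 := by
      calc (2 * (Real.sqrt τ * (Real.pi / 8))) * δ = Real.pi / 4 * (Real.sqrt τ * δ) := by ring
        _ = Real.pi / 4 := by rw [hstδ, mul_one]
    linarith [hπu]
  have hnδ : |n| * δ ≤ 1 := by
    have h1 : |n| ≤ |(μ':ℝ)| + |(ν:ℝ)| := abs_sub _ _
    have h2 : |n| * δ ≤ (2 * (Real.sqrt τ * (Real.pi / 8))) * δ := by
      apply mul_le_mul_of_nonneg_right _ hδ0.le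
      linarith
    have h3 : (2 * (Real.sqrt τ * (Real.pi / 8))) * δ = Real.pi / 4 := by
      calc (2 * (Real.sqrt τ * (Real.pi / 8))) * δ = Real.pi / 4 * (Real.sqrt τ * δ) := by ring
        _ = Real.pi / 4 := by rw [hstδ, mul_one]
    linarith [hπu]
  -- radial quantities
  have hr11 : 1 ≤ r₁ := le_trans hα₁ hr₁.1
  have hr12 : r₁ ≤ 2 := le_trans hr₁.2 hβ₁
  have hr21 : 1 ≤ r₂ := le_trans hα₂ hr₂.1
  have hr22 : r₂ ≤ 2 := le_trans hr₂.2 hβ₂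
  have hr11' : 1 ≤ r₁' := le_trans hα₁ hr₁'.1
  have hr12' : r₁' ≤ 2 := le_trans hr₁'.2 hβ₁
  have hr21' : 1 ≤ r₂' := le_trans hα₂ hr₂'.1
  have hr22' : r₂' ≤ 2 := le_trans hr₂'.2 hβ₂
  have hdr1 : |r₁ - r₁'| ≤ δ := by
    rw [abs_le]; constructor <;> linarith [hr₁.1, hr₁.2, hr₁'.1, hr₁'.2]
  have hdr2 : |r₂ - r₂'| ≤ δ := by
    rw [abs_le]; constructor <;> linarith [hr₂.1, hr₂.2, hr₂'.1, hr₂'.2]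
  rw [hτinv] at hηs hηs'
  have hSig : |(r₁ + r₂) - (r₁' + r₂')| ≤ 4 * δ ^ 2 := by
    rw [abs_le] at hηs hηs' ⊢
    constructor <;> linarith [hηs.1, hηs.2, hηs'.1, hηs'.2]
  have hSigsq : |(r₁ + r₂) ^ 2 - (r₁' + r₂') ^ 2| ≤ 32 * δ ^ 2 := by
    have e : (r₁ + r₂) ^ 2 - (r₁' + r₂') ^ 2 =
        ((r₁ + r₂) - (r₁' + r₂')) * ((r₁ + r₂) + (r₁' + r₂')) := by ring
    rw [e, abs_mul]
    have h8 : |(r₁ + r₂) + (r₁' + r₂')| ≤ 8 := by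
      rw [abs_le]; constructor <;> linarith
    have := mul_le_mul hSig h8 (abs_nonneg _) (by positivity)
    linarith
  -- cosine identity rewritten with sin
  have hcosA : Real.cos (φ₁ - φ₂) = 1 - 2 * Real.sin A ^ 2 := by
    have e : φ₁ - φ₂ = 2 * A := by rw [hAdef]; ring
    rw [e, Real.cos_two_mul]
    linarith [Real.sin_sq_add_cos_sq A]
  have hcosA' : Real.cos (φ₁' - φ₂') = 1 - 2 * Real.sin A' ^ 2 := by
    have e : φ₁' - φ₂' = 2 * A' := by rw [hA'def]; ring
    rw [e, Real.cos_two_mul]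
    linarith [Real.sin_sq_add_cos_sq A']
  have hQ1 : ‖ξ‖ ^ 2 = (r₁ + r₂) ^ 2 - 4 * (r₁ * r₂) * Real.sin A ^ 2 := by
    rw [hξs, hcosA]; ring
  have hQ1' : ‖ξ‖ ^ 2 = (r₁' + r₂') ^ 2 - 4 * (r₁' * r₂') * Real.sin A' ^ 2 := by
    rw [hξs', hcosA']; ring
  have hkey4 : |4 * (r₁ * r₂) * Real.sin A ^ 2 - 4 * (r₁' * r₂') * Real.sin A' ^ 2|
      ≤ 32 * δ ^ 2 := by
    have e : 4 * (r₁ * r₂) * Real.sin A ^ 2 - 4 * (r₁' * r₂') * Real.sin A' ^ 2 =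
        (r₁ + r₂) ^ 2 - (r₁' + r₂') ^ 2 := by linarith
    rw [e]; exact hSigsq
  have hprod : |r₁ * r₂ - r₁' * r₂'| ≤ 4 * δ := by
    have e : r₁ * r₂ - r₁' * r₂' = (r₁ - r₁') * r₂ + r₁' * (r₂ - r₂') := by ring
    rw [e]
    refine (abs_add_le _ _).trans ?_
    rw [abs_mul, abs_mul]
    have b1 : |r₂| ≤ 2 := by rw [abs_le]; constructor <;> linarith
    have b2 : |r₁'| ≤ 2 := by rw [abs_le]; constructor <;> linarith
    have t1 : |r₁ - r₁'| * |r₂| ≤ δ * 2 := mul_le_mul hdr1 b1 (abs_nonneg _) hδ0.le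
    have t2 : |r₁'| * |r₂ - r₂'| ≤ 2 * δ := mul_le_mul b2 hdr2 (abs_nonneg _) (by norm_num)
    linarith
  have hsinA'sq : Real.sin A' ^ 2 ≤ ((|m| + |n|) * δ) ^ 2 := by
    have h1 : |Real.sin A'| ≤ |A'| := Real.abs_sin_le_abs
    calc Real.sin A' ^ 2 = |Real.sin A'| ^ 2 := (sq_abs _).symm
      _ ≤ |A'| ^ 2 := by apply pow_le_pow_left₀ (abs_nonneg _) h1
      _ ≤ ((|m| + |n|) * δ) ^ 2 := by apply pow_le_pow_left₀ (abs_nonneg _) hA'b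
  have hdiff : |Real.sin A ^ 2 - Real.sin A' ^ 2| ≤ 8 * δ ^ 2 + 4 * δ * ((|m| + |n|) * δ) ^ 2 := by
    have hrr1 : 1 ≤ r₁ * r₂ := by
      have := mul_le_mul hr11 hr21 (by norm_num) (by linarith only [hr11])
      linarith only [this]
    have habs : |4 * (r₁ * r₂) * (Real.sin A ^ 2 - Real.sin A' ^ 2)|
        ≤ 32 * δ ^ 2 + 16 * δ * ((|m| + |n|) * δ) ^ 2 := by
      have e : 4 * (r₁ * r₂) * (Real.sin A ^ 2 - Real.sin A' ^ 2) =
          (4 * (r₁ * r₂) * Real.sin A ^ 2 - 4 * (r₁' * r₂') * Real.sin A' ^ 2) +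
          4 * (r₁' * r₂' - r₁ * r₂) * Real.sin A' ^ 2 := by ring
      rw [e]
      refine (abs_add_le _ _).trans ?_
      have h2 : |4 * (r₁' * r₂' - r₁ * r₂) * Real.sin A' ^ 2|
          ≤ 16 * δ * ((|m| + |n|) * δ) ^ 2 := by
        rw [abs_mul, abs_mul]
        have e2 : |(4:ℝ)| = 4 := by norm_num
        have e3 : |r₁' * r₂' - r₁ * r₂| ≤ 4 * δ := by
          rw [abs_sub_comm]; exact hprod
        have e4 : |Real.sin A' ^ 2| = Real.sin A' ^ 2 := abs_of_nonneg (sq_nonneg _)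
        rw [e2, e4]
        have t1 : 4 * |r₁' * r₂' - r₁ * r₂| * Real.sin A' ^ 2
            ≤ 4 * (4 * δ) * Real.sin A' ^ 2 := by
          have := mul_le_mul_of_nonneg_right e3 (sq_nonneg (Real.sin A'))
          linarith only [this]
        have t2 : 4 * (4 * δ) * Real.sin A' ^ 2 ≤ 16 * δ * ((|m| + |n|) * δ) ^ 2 := by
          have := mul_le_mul_of_nonneg_left hsinA'sq (by positivity : (0:ℝ) ≤ 16 * δ)
          linarith only [this]
        linarith only [t1, t2]
      linarith only [hkey4, h2]
    have e5 : |4 * (r₁ * r₂) * (Real.sin A ^ 2 - Real.sin A' ^ 2)| =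
        (4 * (r₁ * r₂)) * |Real.sin A ^ 2 - Real.sin A' ^ 2| := by
      rw [abs_mul, abs_of_pos (by linarith : (0:ℝ) < 4 * (r₁ * r₂))]
    rw [e5] at habs
    have t3 : 4 * |Real.sin A ^ 2 - Real.sin A' ^ 2|
        ≤ (4 * (r₁ * r₂)) * |Real.sin A ^ 2 - Real.sin A' ^ 2| := by
      apply mul_le_mul_of_nonneg_right _ (abs_nonneg _)
      linarith only [hrr1]
    linarith only [habs, t3]
  -- lower bound via product formula
  have hid : Real.sin A ^ 2 - Real.sin A' ^ 2 = Real.sin (A + A') * Real.sin (A - A') := by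
    rw [Real.sin_add, Real.sin_sub]
    linear_combination (Real.sin A') ^ 2 * (Real.sin_sq_add_cos_sq A) -
      (Real.sin A) ^ 2 * (Real.sin_sq_add_cos_sq A')
  have hsum1 : |A + A'| ≤ Real.pi / 2 := by
    rw [abs_le]
    constructor <;> linarith only [hAdef, hA'def, hφ₁b.1, hφ₁b.2, hφ₂b.1, hφ₂b.2,
      hφ₁'b.1, hφ₁'b.2, hφ₂'b.1, hφ₂'b.2]
  have hsum2 : |A - A'| ≤ Real.pi / 2 := by
    rw [abs_le]
    constructor <;> linarith only [hAdef, hA'def, hφ₁b.1, hφ₁b.2, hφ₂b.1, hφ₂b.2,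
      hφ₁'b.1, hφ₁'b.2, hφ₂'b.1, hφ₂'b.2]
  have hc35 : (3/5 : ℝ) ≤ 2 / Real.pi := by
    rw [le_div_iff₀ Real.pi_pos]
    linarith [hπu]
  have l1 : (3/5 : ℝ) * |A + A'| ≤ |Real.sin (A + A')| := by
    refine le_trans ?_ (Real.mul_abs_le_abs_sin hsum1)
    exact mul_le_mul_of_nonneg_right hc35 (abs_nonneg _)
  have l2 : (3/5 : ℝ) * |A - A'| ≤ |Real.sin (A - A')| := by
    refine le_trans ?_ (Real.mul_abs_le_abs_sin hsum2)
    exact mul_le_mul_of_nonneg_right hc35 (abs_nonneg _)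
  have hlowfinal : (9/25 : ℝ) * ((|n| - 1) * δ) * ((|m| - 1) * δ)
      ≤ |Real.sin A ^ 2 - Real.sin A' ^ 2| := by
    rw [hid, abs_mul]
    have p1 : (0:ℝ) ≤ (|n| - 1) * δ := mul_nonneg (by linarith) hδ0.le
    have p2 : (0:ℝ) ≤ (|m| - 1) * δ := mul_nonneg (by linarith) hδ0.le
    have q1 : (3/5 : ℝ) * ((|n| - 1) * δ) ≤ |Real.sin (A + A')| := by
      refine le_trans ?_ l1
      linarith only [hlow2]
    have q2 : (3/5 : ℝ) * ((|m| - 1) * δ) ≤ |Real.sin (A - A')| := by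
      refine le_trans ?_ l2
      linarith only [hlow1]
    calc (9/25 : ℝ) * ((|n| - 1) * δ) * ((|m| - 1) * δ)
        = ((3/5 : ℝ) * ((|n| - 1) * δ)) * ((3/5 : ℝ) * ((|m| - 1) * δ)) := by ring
      _ ≤ |Real.sin (A + A')| * |Real.sin (A - A')| :=
          mul_le_mul q1 q2 (by linarith only [p2]) (abs_nonneg _)
  -- combine everything
  set M : ℝ := |m| with hMdef
  set N : ℝ := |n| with hNdef
  have hfin : (9/25 : ℝ) * ((N - 1) * δ) * ((M - 1) * δ)
      ≤ 8 * δ ^ 2 + 4 * δ * ((M + N) * δ) ^ 2 := le_trans hlowfinal hdiff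
  have hMN2 : δ * (M + N) ^ 2 ≤ 2 * (M + N) := by
    have := mul_nonneg (show (0:ℝ) ≤ M + N by linarith only [hM, hN])
      (show (0:ℝ) ≤ 2 - M * δ - N * δ by linarith only [hmδ, hnδ])
    linarith only [this]
  have h2 : (9/25 : ℝ) * (M - 1) * (N - 1) * δ ^ 2 ≤ 8 * δ ^ 2 + 8 * (M + N) * δ ^ 2 := by
    have t := mul_le_mul_of_nonneg_left hMN2 (show (0:ℝ) ≤ 4 * δ ^ 2 by positivity)
    linarith only [hfin, t]
  have h3 : (9/25 : ℝ) * (M - 1) * (N - 1) ≤ 8 + 8 * (M + N) := by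
    by_contra hc
    push_neg at hc
    have hδ2 : (0:ℝ) < δ ^ 2 := by positivity
    have := mul_lt_mul_of_pos_right hc hδ2
    linarith only [this, h2]
  have hfinal := mul_nonneg (show (0:ℝ) ≤ M - 201 by linarith only [hM])
    (show (0:ℝ) ≤ N - 201 by linarith only [hN])
  linarith only [h3, hfinal, hM, hN]

theorem statement3 :
    ∃ C : ℕ, 0 < C ∧
      ∀ τ : ℝ, (10 : ℝ) ^ 6 < τ →
      ∀ α₁ β₁ α₂ β₂ : ℝ,
        1 ≤ α₁ → α₁ ≤ β₁ → β₁ ≤ 2 → β₁ - α₁ ≤ (Real.sqrt τ)⁻¹ →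
        1 ≤ α₂ → α₂ ≤ β₂ → β₂ ≤ 2 → β₂ - α₂ ≤ (Real.sqrt τ)⁻¹ →
        ∀ a ∈ calI τ,
        ∀ η ∈ Icc (α₁ + α₂ - 2 * τ⁻¹) (β₁ + β₂ + 2 * τ⁻¹),
        ∀ ξ : ℂ,
          {p : ℤ × ℤ | p.1 ∈ calN τ ∧ p.2 ∈ calN τ ∧
              ((p.1 : ℝ) + (p.2 : ℝ)) / 2 = a ∧
              (ξ, η) ∈ uSet τ (p.1 : ℝ) (Icc α₁ β₁) + uSet τ (p.2 : ℝ) (Icc α₂ β₂)}.Finite ∧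
          {p : ℤ × ℤ | p.1 ∈ calN τ ∧ p.2 ∈ calN τ ∧
              ((p.1 : ℝ) + (p.2 : ℝ)) / 2 = a ∧
              (ξ, η) ∈ uSet τ (p.1 : ℝ) (Icc α₁ β₁) + uSet τ (p.2 : ℝ) (Icc α₂ β₂)}.ncard ≤ C := by
  refine ⟨643205, by norm_num, ?_⟩
  intro τ hτ α₁ β₁ α₂ β₂ hα₁ hαβ₁ hβ₁ hJ₁ hα₂ hαβ₂ hβ₂ hJ₂ a _ha η _hη ξ
  set S : Set (ℤ × ℤ) := {p : ℤ × ℤ | p.1 ∈ calN τ ∧ p.2 ∈ calN τ ∧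
      ((p.1 : ℝ) + (p.2 : ℝ)) / 2 = a ∧
      (ξ, η) ∈ uSet τ (p.1 : ℝ) (Icc α₁ β₁) + uSet τ (p.2 : ℝ) (Icc α₂ β₂)} with hSdef
  rcases S.eq_empty_or_nonempty with h | h
  · rw [h]
    exact ⟨finite_empty, by simp⟩
  · obtain ⟨⟨μ₀, ν₀⟩, h₀⟩ := h
    obtain ⟨hμ₀, hν₀, ha₀, hu₀⟩ := h₀
    set T : Finset (ℤ × ℤ) :=
      ((Finset.Icc (μ₀ - 200) (μ₀ + 200) ∪ Finset.Icc (ν₀ - 200) (ν₀ + 200)) ×ˢ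
       (Finset.Icc (μ₀ - 200) (μ₀ + 200) ∪ Finset.Icc (ν₀ - 200) (ν₀ + 200))) with hTdef
    have hsub : S ⊆ ↑T := by
      rintro ⟨μ, ν⟩ ⟨hμ, hν, ha', hu⟩
      have hsum : μ₀ + ν₀ = μ + ν := by
        have hr : ((μ₀:ℝ) + (ν₀:ℝ)) = ((μ:ℝ) + (ν:ℝ)) := by
          have e1 : ((μ₀:ℝ) + (ν₀:ℝ)) / 2 = a := ha₀
          have e2 : ((μ:ℝ) + (ν:ℝ)) / 2 = a := ha'
          linarith
        exact_mod_cast hr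
      have hkey := key_s3 hτ hα₁ hβ₁ hJ₁ hα₂ hβ₂ hJ₂ hμ₀ hν₀ hμ hν hsum hu₀ hu
      rw [hTdef]
      simp only [Finset.coe_product, Finset.coe_union, Finset.coe_Icc, Set.mem_prod,
        Set.mem_union, Set.mem_Icc]
      rcases hkey with hc | hc <;> rw [abs_le] at hc
      · exact ⟨Or.inl ⟨by omega, by omega⟩, Or.inr ⟨by omega, by omega⟩⟩
      · exact ⟨Or.inr ⟨by omega, by omega⟩, Or.inl ⟨by omega, by omega⟩⟩
    have hfin : S.Finite := Set.Finite.subset (T.finite_toSet) hsub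
    refine ⟨hfin, ?_⟩
    have hn := Set.ncard_le_ncard hsub (T.finite_toSet)
    rw [Set.ncard_coe_finset] at hn
    refine hn.trans ?_
    have hcard : T.card ≤ 643204 := by
      rw [hTdef, Finset.card_product]
      have hu : (Finset.Icc (μ₀ - 200) (μ₀ + 200) ∪ Finset.Icc (ν₀ - 200) (ν₀ + 200)).card
          ≤ 802 := by
        refine (Finset.card_union_le _ _).trans ?_
        have c1 : (Finset.Icc (μ₀ - 200) (μ₀ + 200)).card = 401 := by
          rw [Int.card_Icc]; omega
        have c2 : (Finset.Icc (ν₀ - 200) (ν₀ + 200)).card = 401 := by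
          rw [Int.card_Icc]; omega
        omega
      calc _ ≤ 802 * 802 := Nat.mul_le_mul hu hu
        _ = 643204 := by norm_num
    omega
end

section
/- There exists a constant C > 0, independent of τ, of J_1, J_2, of a ∈ ℐ, and of η ∈ J̃_1 + J̃_2, such that the family of sets { ⋃_{η'+η''=η, η'∈J̃_1, η''∈J̃_2} (u_{μ,J_1}^{η'} + u_{ν,J_2}^{η''}) }_{(μ,ν) ∈ k_0^{-1}({a})} is C-overlapping: for every ξ ∈ ℝ², at most C pairs (μ,ν) ∈ k_0^{-1}({a}) satisfy ξ ∈ ⋃_{η'+η''=η, η'∈J̃_1, η''∈J̃_2} (u_{μ,J_1}^{η'} + u_{ν,J_2}^{η''}). -/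
open Set Pointwise

set_option maxHeartbeats 2000000

noncomputable def uSlice (τ μ : ℝ) (J : Set ℝ) (η : ℝ) : Set ℂ :=
  {ξ : ℂ | (ξ, η) ∈ uSet τ μ J}

namespace St4Aux

lemma one_sub_cos (t : ℝ) : 1 - Real.cos t = 2 * Real.sin (t / 2) ^ 2 := by
  have h : Real.cos (2 * (t / 2)) = 2 * Real.cos (t / 2) ^ 2 - 1 := Real.cos_two_mul _
  have h2 := Real.sin_sq_add_cos_sq (t / 2)
  have ht : 2 * (t / 2) = t := by ring
  rw [ht] at h
  nlinarith

lemma sin_lower (t : ℝ) (h0 : 0 ≤ t) (h1 : t ≤ 1 / 5) :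
    t * (99 / 100) ≤ Real.sin t := by
  rcases eq_or_lt_of_le h0 with h | h
  · simp [← h]
  · have key := Real.sin_gt_sub_cube h
    have ht2 : t ^ 2 ≤ 1 / 25 := by nlinarith
    have ht3 : t ^ 3 ≤ t * (1 / 25) := by nlinarith
    linarith

lemma mono_sin (a b : ℝ) (hb : 0 ≤ b) (hba : b ≤ a) (ha : a ≤ 2 / 5) :
    a - b ≤ 2 * (Real.sin a - Real.sin b) := by
  have hs := Real.sin_sub_sin a b
  have h1 : ((a - b) / 2) * (99 / 100) ≤ Real.sin ((a - b) / 2) :=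
    sin_lower _ (by linarith) (by linarith)
  have h2 : (0.92 : ℝ) ≤ Real.cos ((a + b) / 2) := by
    have := Real.one_sub_sq_div_two_le_cos (x := (a + b) / 2)
    nlinarith
  have h3 : Real.cos ((a + b) / 2) ≤ 1 := Real.cos_le_one _
  have h4 : 0 ≤ (a - b) / 2 := by linarith
  nlinarith

lemma abs_sub_le_sin (a b : ℝ) (ha0 : 0 ≤ a) (ha : a ≤ 2 / 5) (hb0 : 0 ≤ b)
    (hb : b ≤ 2 / 5) : |a - b| ≤ 2 * |Real.sin a - Real.sin b| := by
  rcases le_total b a with h | h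
  · have := mono_sin a b hb0 h ha
    rw [abs_of_nonneg (by linarith), abs_of_nonneg (by linarith)]
    linarith
  · have := mono_sin b a ha0 h hb
    rw [abs_of_nonpos (by linarith), abs_of_nonpos (by linarith)]
    linarith

lemma sin_abs (t : ℝ) (h : |t| ≤ Real.pi) : Real.sin |t| = |Real.sin t| := by
  rcases le_or_gt 0 t with h0 | h0
  · rw [abs_of_nonneg h0, abs_of_nonneg (Real.sin_nonneg_of_nonneg_of_le_pi h0
      (by rwa [abs_of_nonneg h0] at h))]
  · have h1 : -Real.pi ≤ t := by
      rw [abs_of_neg h0] at h; linarith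
    have h2 : Real.sin t ≤ 0 :=
      Real.sin_nonpos_of_nonpos_of_neg_pi_le (le_of_lt h0) h1
    rw [abs_of_neg h0, Real.sin_neg, abs_of_nonpos h2]

/-- Law of cosines for complex numbers. -/
lemma law_of_cos (ξ₁ ξ₂ : ℂ) :
    ‖ξ₁ + ξ₂‖ ^ 2 = ‖ξ₁‖ ^ 2 + ‖ξ₂‖ ^ 2 +
      2 * ‖ξ₁‖ * ‖ξ₂‖ * Real.cos (ξ₁.arg - ξ₂.arg) := by
  have h1 := Complex.norm_mul_cos_add_sin_mul_I ξ₁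
  have h2 := Complex.norm_mul_cos_add_sin_mul_I ξ₂
  have e1re : ξ₁.re = ‖ξ₁‖ * Real.cos ξ₁.arg := by
    rw [← h1]; simp
  have e1im : ξ₁.im = ‖ξ₁‖ * Real.sin ξ₁.arg := by
    rw [← h1]; simp
  have e2re : ξ₂.re = ‖ξ₂‖ * Real.cos ξ₂.arg := by
    rw [← h2]; simp
  have e2im : ξ₂.im = ‖ξ₂‖ * Real.sin ξ₂.arg := by
    rw [← h2]; simp
  rw [Complex.sq_norm, Complex.sq_norm, Complex.sq_norm, Complex.normSq_apply,
    Complex.normSq_apply, Complex.normSq_apply, Complex.add_re, Complex.add_im,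
    Real.cos_sub]
  rw [e1re, e1im, e2re, e2im]
  ring

/-- The key analytic estimate: two configurations with the same ξ and η have
close angle differences (in absolute value). -/
lemma core (s r₁ r₂ r₁' r₂' Δ Δ' q : ℝ)
    (hs : 0 < s) (hs' : s ≤ 1 / 1000)
    (h11 : 1 ≤ r₁) (h12 : r₁ ≤ 2) (h21 : 1 ≤ r₂) (h22 : r₂ ≤ 2)
    (h11' : 1 ≤ r₁') (h12' : r₁' ≤ 2) (h21' : 1 ≤ r₂') (h22' : r₂' ≤ 2)
    (hr1 : |r₁ - r₁'| ≤ s) (hr2 : |r₂ - r₂'| ≤ s)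
    (hsum : |r₁ + r₂ - (r₁' + r₂')| ≤ 4 * s ^ 2)
    (hΔ : |Δ| ≤ Real.pi / 4) (hΔ' : |Δ'| ≤ Real.pi / 4)
    (law : 2 * r₁ * r₂ * (1 - Real.cos Δ) = (r₁ + r₂) ^ 2 - q)
    (law' : 2 * r₁' * r₂' * (1 - Real.cos Δ') = (r₁' + r₂') ^ 2 - q) :
    abs (|Δ| - |Δ'|) ≤ 80 * s := by
  have hpi : Real.pi ≤ 3.15 := by
    have := Real.pi_lt_d2; linarith
  have hΔ8 : |Δ| ≤ 0.79 := by
    calc |Δ| ≤ Real.pi / 4 := hΔ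
    _ ≤ 0.79 := by linarith
  have hΔ8' : |Δ'| ≤ 0.79 := by
    calc |Δ'| ≤ Real.pi / 4 := hΔ'
    _ ≤ 0.79 := by linarith
  set x : ℝ := Real.sin (|Δ| / 2) with hxdef
  set x' : ℝ := Real.sin (|Δ'| / 2) with hxdef'
  have habs : |Δ| / 2 ≤ 2 / 5 := by linarith [abs_nonneg Δ]
  have habs' : |Δ'| / 2 ≤ 2 / 5 := by linarith [abs_nonneg Δ']
  have hx0 : 0 ≤ x := Real.sin_nonneg_of_nonneg_of_le_pi
    (by positivity) (by linarith [abs_nonneg Δ])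
  have hx0' : 0 ≤ x' := Real.sin_nonneg_of_nonneg_of_le_pi
    (by positivity) (by linarith [abs_nonneg Δ'])
  have hx1 : x ≤ 1 := Real.sin_le_one _
  have hx1' : x' ≤ 1 := Real.sin_le_one _
  -- 1 - cos Δ = 2 x ^ 2
  have hcos : 1 - Real.cos Δ = 2 * x ^ 2 := by
    rw [one_sub_cos Δ]
    have h1 : |Δ| / 2 = |Δ / 2| := by
      rw [abs_div]; norm_num
    have h2 : x = |Real.sin (Δ / 2)| := by
      rw [hxdef, h1, sin_abs _ (by rw [← h1]; linarith [abs_nonneg Δ])]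
    rw [h2, sq_abs]
  have hcos' : 1 - Real.cos Δ' = 2 * x' ^ 2 := by
    rw [one_sub_cos Δ']
    have h1 : |Δ'| / 2 = |Δ' / 2| := by
      rw [abs_div]; norm_num
    have h2 : x' = |Real.sin (Δ' / 2)| := by
      rw [hxdef', h1, sin_abs _ (by rw [← h1]; linarith [abs_nonneg Δ'])]
    rw [h2, sq_abs]
  have law2 : 4 * r₁ * r₂ * x ^ 2 = (r₁ + r₂) ^ 2 - q := by
    rw [hcos] at law; linarith
  have law2' : 4 * r₁' * r₂' * x' ^ 2 = (r₁' + r₂') ^ 2 - q := by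
    rw [hcos'] at law'; linarith
  -- basic product / numerator estimates
  have hprod : |r₁ * r₂ - r₁' * r₂'| ≤ 4 * s := by
    have c1 : |r₁ * (r₂ - r₂')| ≤ 2 * s := by
      rw [abs_mul, abs_of_pos (by linarith : (0:ℝ) < r₁)]
      exact mul_le_mul h12 hr2 (abs_nonneg _) (by norm_num)
    have c2 : |r₂' * (r₁ - r₁')| ≤ 2 * s := by
      rw [abs_mul, abs_of_pos (by linarith : (0:ℝ) < r₂')]
      exact mul_le_mul h22' hr1 (abs_nonneg _) (by norm_num)
    have cfac : r₁ * r₂ - r₁' * r₂' = r₁ * (r₂ - r₂') + r₂' * (r₁ - r₁') := by ring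
    rw [cfac]
    exact le_trans (abs_add_le _ _) (by linarith)
  have hN : |((r₁ + r₂) ^ 2 - q) - ((r₁' + r₂') ^ 2 - q)| ≤ 32 * s ^ 2 := by
    have hfac : (r₁ + r₂) ^ 2 - q - ((r₁' + r₂') ^ 2 - q) =
        (r₁ + r₂ - (r₁' + r₂')) * ((r₁ + r₂) + (r₁' + r₂')) := by ring
    rw [hfac, abs_mul]
    have h8 : |r₁ + r₂ + (r₁' + r₂')| ≤ 8 := by
      rw [abs_le]; constructor <;> linarith
    have := mul_le_mul hsum h8 (abs_nonneg _) (by positivity : (0:ℝ) ≤ 4 * s ^ 2)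
    linarith
  have e : 4 * r₁ * r₂ * (x ^ 2 - x' ^ 2) =
      (((r₁ + r₂) ^ 2 - q) - ((r₁' + r₂') ^ 2 - q)) +
        4 * x' ^ 2 * (r₁' * r₂' - r₁ * r₂) := by
    linear_combination law2 - law2'
  have hkey : |x ^ 2 - x' ^ 2| ≤ 8 * s ^ 2 + 4 * x' ^ 2 * s := by
    have hrr : (1:ℝ) ≤ r₁ * r₂ := by nlinarith
    have hRHS : |4 * r₁ * r₂ * (x ^ 2 - x' ^ 2)| ≤ 32 * s ^ 2 + 16 * x' ^ 2 * s := by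
      rw [e]
      refine le_trans (abs_add_le _ _) ?_
      have t2 : |4 * x' ^ 2 * (r₁' * r₂' - r₁ * r₂)| ≤ 4 * x' ^ 2 * (4 * s) := by
        rw [abs_mul, abs_sub_comm, abs_of_nonneg (by positivity : (0:ℝ) ≤ 4 * x' ^ 2)]
        exact mul_le_mul_of_nonneg_left hprod (by positivity)
      linarith [hN, t2]
    have hlow : 4 * |x ^ 2 - x' ^ 2| ≤ |4 * r₁ * r₂ * (x ^ 2 - x' ^ 2)| := by
      have : |4 * r₁ * r₂ * (x ^ 2 - x' ^ 2)| = (4 * r₁ * r₂) * |x ^ 2 - x' ^ 2| := by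
        rw [abs_mul, abs_of_pos (by nlinarith : (0:ℝ) < 4 * r₁ * r₂)]
      rw [this]
      apply mul_le_mul_of_nonneg_right (by nlinarith) (abs_nonneg _)
    linarith
  have hxx : |x - x'| ≤ 20 * s := by
    rcases le_or_gt (x + x') (20 * s) with hc | hc
    · rw [abs_le]; constructor <;> linarith
    · have hpos : 0 < x + x' := by linarith
      have hfac : |x - x'| * (x + x') = |x ^ 2 - x' ^ 2| := by
        rw [← abs_of_pos hpos, ← abs_mul]
        ring_nf
      have h1 : |x - x'| * (x + x') ≤ 8 * s ^ 2 + 4 * x' ^ 2 * s := by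
        rw [hfac]; exact hkey
      have c1 : (0:ℝ) ≤ (0.4 * s) * (x + x' - 20 * s) :=
        mul_nonneg (by positivity) (by linarith)
      have c2 : (0:ℝ) ≤ 4 * s * x := by positivity
      have c3 : (0:ℝ) ≤ 4 * s * (x' * (1 - x')) :=
        mul_nonneg (by positivity) (mul_nonneg hx0' (by linarith))
      have c4 : |x - x'| * (x + x') ≤ (4.4 * s) * (x + x') := by nlinarith [h1, c1, c2, c3]
      have c5 : |x - x'| ≤ 4.4 * s := le_of_mul_le_mul_right c4 hpos
      linarith
  -- invert the sine
  have hfinal := abs_sub_le_sin (|Δ| / 2) (|Δ'| / 2) (by positivity) habs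
    (by positivity) habs'
  have heq : |Δ| / 2 - |Δ'| / 2 = (|Δ| - |Δ'|) / 2 := by ring
  rw [heq, abs_div] at hfinal
  rw [show |(2:ℝ)| = 2 by norm_num] at hfinal
  linarith [hfinal, hxx, abs_nonneg (|Δ| - |Δ'|)]

end St4Aux

theorem statement4 :
    ∃ C : ℕ, 0 < C ∧
      ∀ τ : ℝ, (10 : ℝ) ^ 6 < τ →
      ∀ α₁ β₁ α₂ β₂ : ℝ,
        1 ≤ α₁ → α₁ ≤ β₁ → β₁ ≤ 2 → β₁ - α₁ ≤ (Real.sqrt τ)⁻¹ →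
        1 ≤ α₂ → α₂ ≤ β₂ → β₂ ≤ 2 → β₂ - α₂ ≤ (Real.sqrt τ)⁻¹ →
        ∀ a ∈ calI τ,
        ∀ η ∈ Icc (α₁ + α₂ - 2 * τ⁻¹) (β₁ + β₂ + 2 * τ⁻¹),
        ∀ ξ : ℂ,
          {p : ℤ × ℤ | p.1 ∈ calN τ ∧ p.2 ∈ calN τ ∧
              ((p.1 : ℝ) + (p.2 : ℝ)) / 2 = a ∧
              (∃ η' η'' : ℝ, η' ∈ Icc (α₁ - τ⁻¹) (β₁ + τ⁻¹) ∧
                η'' ∈ Icc (α₂ - τ⁻¹) (β₂ + τ⁻¹) ∧ η' + η'' = η ∧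
                ξ ∈ uSlice τ (p.1 : ℝ) (Icc α₁ β₁) η' +
                    uSlice τ (p.2 : ℝ) (Icc α₂ β₂) η'')}.Finite ∧
          {p : ℤ × ℤ | p.1 ∈ calN τ ∧ p.2 ∈ calN τ ∧
              ((p.1 : ℝ) + (p.2 : ℝ)) / 2 = a ∧
              (∃ η' η'' : ℝ, η' ∈ Icc (α₁ - τ⁻¹) (β₁ + τ⁻¹) ∧
                η'' ∈ Icc (α₂ - τ⁻¹) (β₂ + τ⁻¹) ∧ η' + η'' = η ∧
                ξ ∈ uSlice τ (p.1 : ℝ) (Icc α₁ β₁) η' +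
                    uSlice τ (p.2 : ℝ) (Icc α₂ β₂) η'')}.ncard ≤ C := by
  refine ⟨1000, by norm_num, ?_⟩
  intro τ hτ α₁ β₁ α₂ β₂ ha1 hab1 hb1 hJ1 ha2 hab2 hb2 hJ2 a ha η hη ξ
  set s : ℝ := (Real.sqrt τ)⁻¹ with hsdef
  have hτ0 : (0:ℝ) < τ := by nlinarith
  have hsqrt : (1000:ℝ) < Real.sqrt τ := by
    rw [show (1000:ℝ) = Real.sqrt (10 ^ 6) by
      rw [show ((10:ℝ) ^ 6) = 1000 ^ 2 by norm_num, Real.sqrt_sq (by norm_num)]]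
    exact Real.sqrt_lt_sqrt (by norm_num) hτ
  have hs0 : 0 < s := inv_pos.2 (by linarith)
  have hs1000 : s ≤ 1 / 1000 := by
    rw [hsdef, show (1:ℝ)/1000 = 1000⁻¹ by norm_num]
    exact inv_anti₀ (by norm_num) hsqrt.le
  have hss : s ^ 2 = τ⁻¹ := by
    rw [hsdef, inv_pow, Real.sq_sqrt hτ0.le]
  have hsτ : Real.sqrt τ * s = 1 :=
    mul_inv_cancel₀ (by linarith)
  set S := {p : ℤ × ℤ | p.1 ∈ calN τ ∧ p.2 ∈ calN τ ∧
      ((p.1 : ℝ) + (p.2 : ℝ)) / 2 = a ∧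
      (∃ η' η'' : ℝ, η' ∈ Icc (α₁ - τ⁻¹) (β₁ + τ⁻¹) ∧
        η'' ∈ Icc (α₂ - τ⁻¹) (β₂ + τ⁻¹) ∧ η' + η'' = η ∧
        ξ ∈ uSlice τ (p.1 : ℝ) (Icc α₁ β₁) η' +
            uSlice τ (p.2 : ℝ) (Icc α₂ β₂) η'')} with hSdef
  have extract : ∀ p ∈ S, ∃ r₁ r₂ Δ : ℝ,
      α₁ ≤ r₁ ∧ r₁ ≤ β₁ ∧ α₂ ≤ r₂ ∧ r₂ ≤ β₂ ∧
      |r₁ + r₂ - η| ≤ 2 * s ^ 2 ∧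
      |Δ - ((p.1 : ℝ) - (p.2 : ℝ)) * s| ≤ s ∧
      |Δ| ≤ Real.pi / 4 ∧
      2 * r₁ * r₂ * (1 - Real.cos Δ) = (r₁ + r₂) ^ 2 - ‖ξ‖ ^ 2 := by
    intro p hp
    rw [hSdef, Set.mem_setOf_eq] at hp
    obtain ⟨hμ, hν, hsum, η', η'', hη', hη'', hηeq, hξmem⟩ := hp
    rw [Set.mem_add] at hξmem
    obtain ⟨ξ₁, h1, ξ₂, h2, hadd⟩ := hξmem
    simp only [uSlice, uSet, GammaSet, Set.mem_setOf_eq, Set.mem_Icc] at h1 h2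
    obtain ⟨hd1, ⟨hne1, harg1l, harg1u⟩, hr11, hr12⟩ := h1
    obtain ⟨hd2, ⟨hne2, harg2l, harg2u⟩, hr21, hr22⟩ := h2
    simp only [calN, Set.mem_setOf_eq] at hμ hν
    refine ⟨‖ξ₁‖, ‖ξ₂‖, ξ₁.arg - ξ₂.arg,
      hr11, hr12, hr21, hr22, ?_, ?_, ?_, ?_⟩
    · rw [abs_le] at hd1 hd2 ⊢
      rw [hss]
      constructor <;> linarith [hd1.1, hd1.2, hd2.1, hd2.2]
    · rw [abs_le]
      constructor <;> nlinarith [harg1l, harg1u, harg2l, harg2u]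
    · have h8 : (|((p.1 : ℝ))| + 1) * s ≤ Real.pi / 8 := by
        calc (|((p.1 : ℝ))| + 1) * s ≤ (Real.sqrt τ * (Real.pi / 8)) * s := by
              apply mul_le_mul_of_nonneg_right (by linarith) hs0.le
        _ = (Real.pi / 8) * (Real.sqrt τ * s) := by ring
        _ = Real.pi / 8 := by rw [hsτ, mul_one]
      have h8' : (|((p.2 : ℝ))| + 1) * s ≤ Real.pi / 8 := by
        calc (|((p.2 : ℝ))| + 1) * s ≤ (Real.sqrt τ * (Real.pi / 8)) * s := by
              apply mul_le_mul_of_nonneg_right (by linarith) hs0.le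
        _ = (Real.pi / 8) * (Real.sqrt τ * s) := by ring
        _ = Real.pi / 8 := by rw [hsτ, mul_one]
      have t1 : -|((p.1 : ℝ))| * s ≤ (p.1 : ℝ) * s :=
        mul_le_mul_of_nonneg_right (neg_abs_le _) hs0.le
      have t2 : ((p.1 : ℝ) + 1) * s ≤ (|((p.1 : ℝ))| + 1) * s :=
        mul_le_mul_of_nonneg_right (by linarith [le_abs_self ((p.1 : ℝ))]) hs0.le
      have t3 : -|((p.2 : ℝ))| * s ≤ (p.2 : ℝ) * s :=
        mul_le_mul_of_nonneg_right (neg_abs_le _) hs0.le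
      have t4 : ((p.2 : ℝ) + 1) * s ≤ (|((p.2 : ℝ))| + 1) * s :=
        mul_le_mul_of_nonneg_right (by linarith [le_abs_self ((p.2 : ℝ))]) hs0.le
      have habs1 : 0 ≤ |((p.1 : ℝ))| * s := by positivity
      have habs2 : 0 ≤ |((p.2 : ℝ))| * s := by positivity
      rw [abs_le]
      constructor <;> nlinarith [harg1l, harg1u, harg2l, harg2u]
    · rw [← hadd]
      linear_combination St4Aux.law_of_cos ξ₁ ξ₂
  have key : ∀ p ∈ S, ∀ p' ∈ S, (p.1 - p.2).natAbs ≤ (p'.1 - p'.2).natAbs + 82 := by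
    intro p hp p' hp'
    obtain ⟨r₁, r₂, Δ, hα1, hβ1, hα2, hβ2, hsm, hcell, hsize, hlaw⟩ := extract p hp
    obtain ⟨r₁', r₂', Δ', hα1', hβ1', hα2', hβ2', hsm', hcell', hsize', hlaw'⟩ :=
      extract p' hp'
    have hr1 : |r₁ - r₁'| ≤ s := by
      rw [abs_le]; constructor <;> linarith
    have hr2 : |r₂ - r₂'| ≤ s := by
      rw [abs_le]; constructor <;> linarith
    have hsum2 : |r₁ + r₂ - (r₁' + r₂')| ≤ 4 * s ^ 2 := by
      rw [abs_le] at hsm hsm' ⊢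
      constructor <;> linarith [hsm.1, hsm.2, hsm'.1, hsm'.2]
    have hcore := St4Aux.core s r₁ r₂ r₁' r₂' Δ Δ' (‖ξ‖ ^ 2) hs0 hs1000
      (by linarith) (by linarith) (by linarith) (by linarith)
      (by linarith) (by linarith) (by linarith) (by linarith)
      hr1 hr2 hsum2 hsize hsize' hlaw hlaw'
    have e1 : abs (|Δ| - |((p.1 : ℝ) - (p.2 : ℝ))| * s) ≤ s := by
      have hh : |((p.1 : ℝ) - (p.2 : ℝ))| * s = |((p.1 : ℝ) - (p.2 : ℝ)) * s| := by
        rw [abs_mul, abs_of_pos hs0]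
      rw [hh]
      exact le_trans (abs_abs_sub_abs_le_abs_sub _ _) hcell
    have e1' : abs (|Δ'| - |((p'.1 : ℝ) - (p'.2 : ℝ))| * s) ≤ s := by
      have hh : |((p'.1 : ℝ) - (p'.2 : ℝ))| * s = |((p'.1 : ℝ) - (p'.2 : ℝ)) * s| := by
        rw [abs_mul, abs_of_pos hs0]
      rw [hh]
      exact le_trans (abs_abs_sub_abs_le_abs_sub _ _) hcell'
    have h2 : |((p.1 : ℝ) - (p.2 : ℝ))| ≤ |((p'.1 : ℝ) - (p'.2 : ℝ))| + 82 := by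
      rw [abs_le] at e1 e1' hcore
      by_contra hcon
      push_neg at hcon
      have hmul : (0:ℝ) < (|((p.1 : ℝ) - (p.2 : ℝ))| - (|((p'.1 : ℝ) - (p'.2 : ℝ))| + 82)) * s :=
        mul_pos (by linarith) hs0
      nlinarith [e1.1, e1.2, e1'.1, e1'.2, hcore.1, hcore.2, hmul]
    have h3 : |p.1 - p.2| ≤ |p'.1 - p'.2| + 82 := by
      have hc : ((|p.1 - p.2| : ℤ) : ℝ) ≤ ((|p'.1 - p'.2| + 82 : ℤ) : ℝ) := by
        push_cast
        exact h2
      exact_mod_cast hc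
    simp only [Int.abs_eq_natAbs] at h3
    omega
  rcases Set.eq_empty_or_nonempty S with hemp | ⟨p₀, hp₀⟩
  · rw [hemp]
    simp
  · set z : ℤ := p₀.1 + p₀.2 with hzdef
    set m : ℕ := (p₀.1 - p₀.2).natAbs with hmdef
    have hz : ∀ p ∈ S, p.2 = z - p.1 := by
      intro p hp
      rw [hSdef, Set.mem_setOf_eq] at hp hp₀
      have h1 := hp.2.2.1
      have h2 := hp₀.2.2.1
      have h3 : ((p.1 + p.2 : ℤ) : ℝ) = ((p₀.1 + p₀.2 : ℤ) : ℝ) := by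
        push_cast
        linarith
      have h4 : p.1 + p.2 = p₀.1 + p₀.2 := by exact_mod_cast h3
      omega
    have hsub : S ⊆ (fun μ : ℤ => (μ, z - μ)) ''
        (Icc ((z + (m : ℤ)) / 2 - 43) ((z + (m : ℤ)) / 2 + 43) ∪
          Icc ((z - (m : ℤ)) / 2 - 43) ((z - (m : ℤ)) / 2 + 43)) := by
      intro p hp
      have h1 := key p hp p₀ hp₀
      have h2 := key p₀ hp₀ p hp
      have h3 := hz p hp
      refine ⟨p.1, ?_, ?_⟩
      · simp only [Set.mem_union, Set.mem_Icc]
        omega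
      · simp only
        rw [← h3]
    have hfin1 : (Icc ((z + (m : ℤ)) / 2 - 43) ((z + (m : ℤ)) / 2 + 43) ∪
        Icc ((z - (m : ℤ)) / 2 - 43) ((z - (m : ℤ)) / 2 + 43)).Finite :=
      (Set.finite_Icc _ _).union (Set.finite_Icc _ _)
    refine ⟨(hfin1.image _).subset hsub, ?_⟩
    calc S.ncard ≤ _ := Set.ncard_le_ncard hsub (hfin1.image _)
    _ ≤ _ := Set.ncard_image_le hfin1
    _ ≤ (Icc ((z + (m : ℤ)) / 2 - 43) ((z + (m : ℤ)) / 2 + 43)).ncard +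
        (Icc ((z - (m : ℤ)) / 2 - 43) ((z - (m : ℤ)) / 2 + 43)).ncard :=
      Set.ncard_union_le _ _
    _ ≤ 1000 := by
      rw [← Finset.coe_Icc, ← Finset.coe_Icc, Set.ncard_coe_finset,
        Set.ncard_coe_finset, Int.card_Icc, Int.card_Icc]
      omega
end

section
/- Let η' ∈ J̃_1 and μ ∈ 𝒩. For every real θ with μ τ^{-1/2} ≤ θ < (μ+1) τ^{-1/2}, there exists σ ∈ ℝ with |σ| ≤ τ^{-1} such that η'(cos θ, sin θ) + σ(cos θ, sin θ) ∈ u_{μ,J_1}^{η'}. -/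
open Set Pointwise

theorem statement8 :
    ∀ τ : ℝ, (10 : ℝ) ^ 6 < τ →
    ∀ α₁ β₁ : ℝ, 1 ≤ α₁ → α₁ ≤ β₁ → β₁ ≤ 2 → β₁ - α₁ ≤ (Real.sqrt τ)⁻¹ →
    ∀ η' ∈ Icc (α₁ - τ⁻¹) (β₁ + τ⁻¹),
    ∀ μ : ℤ, μ ∈ calN τ →
    ∀ θ : ℝ, (μ : ℝ) * (Real.sqrt τ)⁻¹ ≤ θ → θ < ((μ : ℝ) + 1) * (Real.sqrt τ)⁻¹ →
      ∃ σ : ℝ, |σ| ≤ τ⁻¹ ∧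
        (η' : ℂ) * Complex.exp (θ * Complex.I) +
          (σ : ℂ) * Complex.exp (θ * Complex.I) ∈ uSlice τ (μ : ℝ) (Icc α₁ β₁) η' := by
  intro τ hτ α₁ β₁ hα1 hαβ hβ2 hJ η' hη' μ hμ θ hθ1 hθ2
  have hτ0 : (0:ℝ) < τ := by nlinarith [pow_pos (show (0:ℝ) < 10 by norm_num) 6]
  have hsτ : (0:ℝ) < Real.sqrt τ := Real.sqrt_pos.2 hτ0
  have hτinv : (0:ℝ) < τ⁻¹ := inv_pos.2 hτ0
  obtain ⟨hη'1, hη'2⟩ := hη'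
  set r : ℝ := max α₁ (min β₁ η') with hr
  have hrα : α₁ ≤ r := le_max_left _ _
  have hrβ : r ≤ β₁ := max_le hαβ (min_le_left _ _)
  have hr0 : 0 < r := lt_of_lt_of_le (by linarith) hrα
  have hrη : |r - η'| ≤ τ⁻¹ := by
    rw [abs_le]
    constructor
    · have h1 : η' - τ⁻¹ ≤ min β₁ η' := le_min (by linarith) (by linarith)
      rcases le_total α₁ η' with h | h
      · have : η' - τ⁻¹ ≤ r := h1.trans (le_max_right _ _)
        linarith
      · linarith
    · rcases le_total η' β₁ with h | h
      · have h2 : r ≤ max α₁ η' := max_le_max le_rfl (min_le_right _ _)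
        have h3 : max α₁ η' ≤ η' + τ⁻¹ := max_le (by linarith) (by linarith)
        linarith
      · linarith [hrβ]
  -- angle bounds
  have hA : (μ : ℝ) ≤ θ * Real.sqrt τ := by
    rw [← div_le_iff₀ hsτ, div_eq_mul_inv]; exact hθ1
  have hB : θ * Real.sqrt τ < (μ : ℝ) + 1 := by
    rw [← lt_div_iff₀ hsτ, div_eq_mul_inv]; exact hθ2
  have hμabs : |(μ : ℝ)| ≤ Real.sqrt τ * (Real.pi / 8) - 1 := hμ
  have hμlo : -(Real.sqrt τ * (Real.pi / 8) - 1) ≤ (μ : ℝ) := (abs_le.mp hμabs).1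
  have hμhi : (μ : ℝ) ≤ Real.sqrt τ * (Real.pi / 8) - 1 := (abs_le.mp hμabs).2
  have hπ := Real.pi_pos
  have hθlo : -Real.pi < θ := by nlinarith [mul_pos hπ hsτ]
  have hθhi : θ ≤ Real.pi := by nlinarith [mul_pos hπ hsτ]
  -- the point
  have hptw : (η' : ℂ) * Complex.exp (θ * Complex.I) +
      ((r - η' : ℝ) : ℂ) * Complex.exp (θ * Complex.I)
      = (r : ℝ) * Complex.exp (θ * Complex.I) := by
    push_cast
    ring
  have habs : ‖((r : ℝ) : ℂ) * Complex.exp (θ * Complex.I)‖ = r := by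
    rw [norm_mul, Complex.norm_exp_ofReal_mul_I, mul_one, Complex.norm_real, Real.norm_eq_abs,
      abs_of_pos hr0]
  have harg : Complex.arg ((r : ℝ) * Complex.exp (θ * Complex.I)) = θ := by
    rw [Complex.exp_mul_I]
    exact Complex.arg_mul_cos_add_sin_mul_I hr0 ⟨hθlo, hθhi⟩
  refine ⟨r - η', hrη, ?_⟩
  rw [hptw]
  simp only [uSlice, uSet, GammaSet, Set.mem_setOf_eq]
  refine ⟨?_, ⟨?_, ?_, ?_⟩, ?_⟩
  · rw [habs, abs_sub_comm]; exact hrη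
  · intro h
    rw [h, norm_zero] at habs
    exact hr0.ne habs
  · rw [harg]; exact hθ1
  · rw [harg]; exact hθ2
  · rw [habs]; exact ⟨hrα, hrβ⟩
end

section
/- Let ℓ, m be nonnegative integers with μ = ℓ + m ∈ 𝒩 and ν = −(ℓ + m) ∈ 𝒩, and let η' ∈ J̃_1, η'' ∈ J̃_2. Then the diameter of the projection onto the first coordinate of the planar set u_{μ,J_1}^{η'} + u_{ν,J_2}^{η''} satisfies diam P_1(u_{μ,J_1}^{η'} + u_{ν,J_2}^{η''}) ≤ 12(ℓ + m + 1) τ^{-1}, where P_1(ξ_1, ξ_2) = ξ_1. -/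
open Set Pointwise

/-- Key estimate: two points of the same slice have real parts within `(2k+4)τ⁻¹`. -/
lemma slice_re_diff {τ μ α β η k : ℝ} (hτ : 0 < τ) (hβ : β ≤ 2) (hk : |μ| ≤ k)
    {ξ ξ' : ℂ} (hξ : ξ ∈ uSlice τ μ (Icc α β) η) (hξ' : ξ' ∈ uSlice τ μ (Icc α β) η) :
    |ξ.re - ξ'.re| ≤ (2 * k + 4) * τ⁻¹ := by
  obtain ⟨h1, ⟨hne, ha1, ha2⟩, hJ⟩ := hξ
  obtain ⟨h1', ⟨hne', ha1', ha2'⟩, hJ'⟩ := hξ'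
  set s : ℝ := (Real.sqrt τ)⁻¹ with hs
  have hs0 : 0 ≤ s := by positivity
  have hss : s * s = τ⁻¹ := by
    rw [hs, ← mul_inv]
    rw [Real.mul_self_sqrt hτ.le]
  set r := ‖ξ‖
  set r' := ‖ξ'‖
  set a := ξ.arg
  set a' := ξ'.arg
  have hre : ξ.re = r * Real.cos a := by
    rw [Complex.cos_arg hne]
    field_simp [r, norm_ne_zero_iff.mpr hne]; rfl
  have hre' : ξ'.re = r' * Real.cos a' := by
    rw [Complex.cos_arg hne']
    field_simp [r', norm_ne_zero_iff.mpr hne']; rfl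
  have hrr : |r - r'| ≤ 2 * τ⁻¹ := by
    have : r - r' = (η - r') - (η - r) := by ring
    rw [this]
    calc |(η - r') - (η - r)| ≤ |η - r'| + |η - r| := abs_sub _ _
      _ ≤ τ⁻¹ + τ⁻¹ := add_le_add h1' h1
      _ = 2 * τ⁻¹ := by ring
  have haa : |a - a'| ≤ s := by
    rw [abs_sub_le_iff]
    constructor <;> nlinarith [ha1, ha2, ha1', ha2']
  have hak : |a| ≤ (k + 1) * s := by
    have h1 : -k ≤ μ := neg_le_of_abs_le hk
    have h2 : μ ≤ k := le_of_abs_le hk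
    rw [abs_le]
    constructor <;> nlinarith
  have hak' : |a'| ≤ (k + 1) * s := by
    have h1 : -k ≤ μ := neg_le_of_abs_le hk
    have h2 : μ ≤ k := le_of_abs_le hk
    rw [abs_le]
    constructor <;> nlinarith
  have hk0 : 0 ≤ k := le_trans (abs_nonneg _) hk
  have hcos : |Real.cos a - Real.cos a'| ≤ (k + 1) * τ⁻¹ := by
    rw [Real.cos_sub_cos]
    rw [abs_mul, abs_mul, abs_neg, abs_two]
    have hb1 : |Real.sin ((a + a') / 2)| ≤ (k + 1) * s := by
      refine le_trans (Real.abs_sin_le_abs) ?_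
      rw [abs_div, abs_two]
      rw [div_le_iff₀ (by norm_num : (0:ℝ) < 2)]
      calc |a + a'| ≤ |a| + |a'| := abs_add_le _ _
        _ ≤ (k + 1) * s + (k + 1) * s := add_le_add hak hak'
        _ = (k + 1) * s * 2 := by ring
    have hb2 : |Real.sin ((a - a') / 2)| ≤ s / 2 := by
      refine le_trans (Real.abs_sin_le_abs) ?_
      rw [abs_div, abs_two]
      exact div_le_div_of_nonneg_right haa (by norm_num) |>.trans_eq rfl
    calc 2 * |Real.sin ((a + a') / 2)| * |Real.sin ((a - a') / 2)|
        ≤ 2 * ((k + 1) * s) * (s / 2) := by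
          apply mul_le_mul _ hb2 (abs_nonneg _) (by positivity)
          exact mul_le_mul_of_nonneg_left hb1 (by norm_num)
      _ = (k + 1) * (s * s) := by ring
      _ = (k + 1) * τ⁻¹ := by rw [hss]
  have hr2 : r' ≤ 2 := le_trans hJ'.2 hβ
  have hr0 : 0 ≤ r' := norm_nonneg _
  have hca : |Real.cos a| ≤ 1 := Real.abs_cos_le_one a
  calc |ξ.re - ξ'.re| = |(r - r') * Real.cos a + r' * (Real.cos a - Real.cos a')| := by
        rw [hre, hre']; ring_nf
    _ ≤ |(r - r') * Real.cos a| + |r' * (Real.cos a - Real.cos a')| := abs_add_le _ _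
    _ = |r - r'| * |Real.cos a| + r' * |Real.cos a - Real.cos a'| := by
        rw [abs_mul, abs_mul, abs_of_nonneg hr0]
    _ ≤ 2 * τ⁻¹ * 1 + 2 * ((k + 1) * τ⁻¹) := by
        have hτi : (0:ℝ) ≤ τ⁻¹ := by positivity
        have h0 := abs_nonneg (r - r')
        have h0' := abs_nonneg (Real.cos a - Real.cos a')
        nlinarith
    _ = (2 * k + 4) * τ⁻¹ := by ring

theorem statement9 :
    ∀ τ : ℝ, (10 : ℝ) ^ 6 < τ →
    ∀ α₁ β₁ α₂ β₂ : ℝ,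
        1 ≤ α₁ → α₁ ≤ β₁ → β₁ ≤ 2 → β₁ - α₁ ≤ (Real.sqrt τ)⁻¹ →
        1 ≤ α₂ → α₂ ≤ β₂ → β₂ ≤ 2 → β₂ - α₂ ≤ (Real.sqrt τ)⁻¹ →
    ∀ ℓ m : ℕ, ∀ μ ν : ℤ, μ = (ℓ : ℤ) + (m : ℤ) → ν = -((ℓ : ℤ) + (m : ℤ)) →
      μ ∈ calN τ → ν ∈ calN τ →
    ∀ η' ∈ Icc (α₁ - τ⁻¹) (β₁ + τ⁻¹),
    ∀ η'' ∈ Icc (α₂ - τ⁻¹) (β₂ + τ⁻¹),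
      Metric.diam (Complex.re ''
          (uSlice τ (μ : ℝ) (Icc α₁ β₁) η' + uSlice τ (ν : ℝ) (Icc α₂ β₂) η''))
        ≤ 12 * ((ℓ : ℝ) + (m : ℝ) + 1) * τ⁻¹ := by
  intro τ hτ α₁ β₁ α₂ β₂ hα₁ hαβ₁ hβ₁ hJ₁ hα₂ hαβ₂ hβ₂ hJ₂ ℓ m μ ν hμ hν hμN hνN η' hη' η'' hη''
  have hτ0 : 0 < τ := lt_trans (by positivity) hτ
  set k : ℝ := (ℓ : ℝ) + (m : ℝ) with hk
  have hk0 : 0 ≤ k := by positivity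
  apply Metric.diam_le_of_forall_dist_le (by positivity)
  rintro x ⟨p, hp, rfl⟩ y ⟨q, hq, rfl⟩
  rw [Set.mem_add] at hp hq
  obtain ⟨ξ₁, hξ₁, ζ₁, hζ₁, rfl⟩ := hp
  obtain ⟨ξ₂, hξ₂, ζ₂, hζ₂, rfl⟩ := hq
  have hμk : |(μ : ℝ)| ≤ k := by
    rw [hμ]; push_cast; rw [abs_of_nonneg hk0]
  have hνk : |(ν : ℝ)| ≤ k := by
    rw [hν]; push_cast; rw [abs_neg, abs_of_nonneg hk0]
  have h1 := slice_re_diff hτ0 hβ₁ hμk hξ₁ hξ₂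
  have h2 := slice_re_diff hτ0 hβ₂ hνk hζ₁ hζ₂
  rw [Real.dist_eq]
  have : (ξ₁ + ζ₁).re - (ξ₂ + ζ₂).re = (ξ₁.re - ξ₂.re) + (ζ₁.re - ζ₂.re) := by
    simp [Complex.add_re]; ring
  rw [this]
  calc |(ξ₁.re - ξ₂.re) + (ζ₁.re - ζ₂.re)| ≤ |ξ₁.re - ξ₂.re| + |ζ₁.re - ζ₂.re| := abs_add_le _ _
    _ ≤ (2 * k + 4) * τ⁻¹ + (2 * k + 4) * τ⁻¹ := add_le_add h1 h2
    _ ≤ 12 * (k + 1) * τ⁻¹ := by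
        have : (0:ℝ) ≤ τ⁻¹ := by positivity
        nlinarith
end

section
/- Let ℓ ∈ ℕ_0^* with 0 ≤ ℓ ≤ (π/8) δ^{-1/2} − 1, let η' ∈ J̃_1 and η'' ∈ J̃_2 with η = η' + η'', write p_{ℓ,δ} = p_{ℓ,δ}(η',η''), and let b_1 > 0 satisfy |p_{ℓ,δ}| − b_1 ℓ_* δ > |η' − η''|. Then there exist constants b_2, b_3 > 0, depending only on b_1 (independent of η', η'', δ, and ℓ), such that A(|p_{ℓ,δ}| − b_1 ℓ_* δ, |p_{ℓ,δ}| + b_1 ℓ_* δ) ∩ 𝓔̃(η',η'') ⊆ R(p_{ℓ,δ}; b_2 ℓ_* δ, b_3 δ^{1/2}). -/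
open Set Pointwise

noncomputable def GammaD (δ μ : ℝ) : Set ℂ :=
  {ξ : ℂ | ξ ≠ 0 ∧ μ * Real.sqrt δ ≤ ξ.arg ∧ ξ.arg < (μ + 1) * Real.sqrt δ}

def calND (δ : ℝ) : Set ℤ :=
  {μ : ℤ | |(μ : ℝ)| ≤ Real.pi / 8 * (Real.sqrt δ)⁻¹ - 1}

noncomputable def uSetD (δ μ : ℝ) (J : Set ℝ) : Set (ℂ × ℝ) :=
  {p : ℂ × ℝ | |p.2 - ‖p.1‖| ≤ δ ∧ p.1 ∈ GammaD δ μ ∧ ‖p.1‖ ∈ J}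

noncomputable def rot (σ : ℝ) : ℂ → ℂ := fun z => Complex.exp (σ * Complex.I) * z

noncomputable def pPt (δ ℓ η' η'' : ℝ) : ℂ :=
  ⟨(η' + η'') * Real.cos (ℓ * Real.sqrt δ), (η' - η'') * Real.sin (ℓ * Real.sqrt δ)⟩

def rect (p : ℂ) (a b : ℝ) : Set ℂ :=
  {z : ℂ | |z.re - p.re| ≤ a ∧ |z.im - p.im| ≤ b}

def ann (r s : ℝ) : Set ℂ := {ξ : ℂ | r ≤ ‖ξ‖ ∧ ‖ξ‖ ≤ s}

noncomputable def curveE (η' η'' : ℝ) : Set ℂ :=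
  if η' = η'' then {ξ : ℂ | ξ.im = 0 ∧ 1 ≤ ξ.re ∧ ξ.re ≤ η' + η''}
  else {ξ : ℂ | ξ.re ^ 2 / (η' + η'') ^ 2 + ξ.im ^ 2 / (η' - η'') ^ 2 = 1 ∧
        1 ≤ ξ.re ∧ ξ.re ≤ η' + η'' ∧ (η'' ≤ η' → 0 ≤ ξ.im) ∧ (η' ≤ η'' → ξ.im ≤ 0)}

noncomputable def tildeE (η' η'' : ℝ) : Set ℂ :=
  curveE η' η'' ∪ {ξ : ℂ | ξ.im = 0 ∧ η' + η'' ≤ ξ.re ∧ ξ.re ≤ 5}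

lemma aux_abs_sin (x : ℝ) : |Real.sin x| ≤ |x| := by
  have key : ∀ y : ℝ, 0 ≤ y → |Real.sin y| ≤ y := by
    intro y hy
    rw [abs_le]
    refine ⟨?_, Real.sin_le hy⟩
    rcases le_total y 1 with h1 | h1
    · have h2 : 0 ≤ Real.sin y :=
        Real.sin_nonneg_of_nonneg_of_le_pi hy (by nlinarith [Real.pi_gt_three])
      linarith
    · nlinarith [Real.neg_one_le_sin y]
  rcases le_total 0 x with h | h
  · rw [abs_of_nonneg h]; exact key x h
  · rw [abs_of_nonpos h]
    have := key (-x) (by linarith)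
    rwa [Real.sin_neg, abs_neg] at this

lemma aux_sin_lip (x y : ℝ) : |Real.sin x - Real.sin y| ≤ |x - y| := by
  rw [Real.sin_sub_sin]
  calc |2 * Real.sin ((x - y) / 2) * Real.cos ((x + y) / 2)|
      = 2 * |Real.sin ((x - y) / 2)| * |Real.cos ((x + y) / 2)| := by
        rw [abs_mul, abs_mul, abs_two]
    _ ≤ 2 * |(x - y) / 2| * 1 := by
        have a1 := aux_abs_sin ((x - y) / 2)
        have a2 := Real.abs_cos_le_one ((x + y) / 2)
        nlinarith [abs_nonneg (Real.sin ((x - y) / 2)), abs_nonneg ((x - y) / 2),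
          abs_nonneg (Real.cos ((x + y) / 2))]
    _ = |x - y| := by rw [abs_div, abs_two]; ring

lemma aux_quarter_sin {x : ℝ} (h0 : 0 ≤ x) (h2 : x ≤ 2) : x / 4 ≤ Real.sin x := by
  rcases le_or_gt x (Real.pi / 2) with h | h
  · have h3 := Real.mul_le_sin h0 h
    have h4 : Real.pi ≤ 4 := Real.pi_le_four
    have h5 : 0 < Real.pi := Real.pi_pos
    have h6 : (1:ℝ) / 4 ≤ 2 / Real.pi := by
      rw [div_le_div_iff₀ (by norm_num) h5]; linarith
    nlinarith [mul_le_mul_of_nonneg_right h6 h0]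
  · have h3 : Real.cos (x - Real.pi / 2) = Real.sin x := by
      rw [Real.cos_sub]; simp
    have h4 := Real.one_sub_sq_div_two_le_cos (x := x - Real.pi / 2)
    have h5 : 3 < Real.pi := Real.pi_gt_three
    have h6 : (x - Real.pi / 2) ^ 2 ≤ 1 / 4 := by nlinarith
    rw [← h3]
    linarith

lemma aux_abs_im0 {z : ℂ} (h : z.im = 0) : ‖z‖ = |z.re| := by
  rw [Complex.norm_def, Complex.normSq_apply, h, mul_zero, add_zero,
    Real.sqrt_mul_self_eq_abs]

set_option maxHeartbeats 1000000 in
theorem statement11 :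
    ∀ b₁ : ℝ, 0 < b₁ →
    ∃ b₂ b₃ : ℝ, 0 < b₂ ∧ 0 < b₃ ∧
      ∀ δ : ℝ, 0 < δ → δ < 1 / 1000000 →
      ∀ α₁ β₁ α₂ β₂ : ℝ,
        1 ≤ α₁ → α₁ ≤ β₁ → β₁ ≤ 2 → β₁ - α₁ ≤ Real.sqrt δ →
        1 ≤ α₂ → α₂ ≤ β₂ → β₂ ≤ 2 → β₂ - α₂ ≤ Real.sqrt δ →
      ∀ k : ℕ, (k : ℝ) / 2 ≤ Real.pi / 8 * (Real.sqrt δ)⁻¹ - 1 →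
      ∀ η' ∈ Icc (α₁ - δ) (β₁ + δ),
      ∀ η'' ∈ Icc (α₂ - δ) (β₂ + δ),
        ‖pPt δ ((k : ℝ) / 2) η' η''‖ - b₁ * max ((k : ℝ) / 2) (1 / 2) * δ
            > |η' - η''| →
        ann (‖pPt δ ((k : ℝ) / 2) η' η''‖ - b₁ * max ((k : ℝ) / 2) (1 / 2) * δ)
            (‖pPt δ ((k : ℝ) / 2) η' η''‖ + b₁ * max ((k : ℝ) / 2) (1 / 2) * δ)
          ∩ tildeE η' η''
          ⊆ rect (pPt δ ((k : ℝ) / 2) η' η'')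
              (b₂ * max ((k : ℝ) / 2) (1 / 2) * δ) (b₃ * Real.sqrt δ) := by
  intro b₁ hb₁
  refine ⟨150 * b₁, 80 * b₁ + 8 * Real.sqrt b₁ + 1, by positivity, by positivity, ?_⟩
  intro δ hδ hδ1 α₁ β₁ α₂ β₂ hα₁ hαβ₁ hβ₁ hJ₁ hα₂ hαβ₂ hβ₂ hJ₂ k hk η' hη' η'' hη'' hgap
  intro ξ hξ
  obtain ⟨hann, hcurve⟩ := hξ
  obtain ⟨hann1, hann2⟩ := hann
  simp only [rect, Set.mem_setOf_eq]
  set ℓ : ℝ := (k : ℝ) / 2 with hℓdef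
  set L : ℝ := max ℓ (1 / 2) with hLdef
  set s : ℝ := ℓ * Real.sqrt δ with hsdef
  set r : ℝ := ‖pPt δ ℓ η' η''‖ with hrdef
  set e : ℝ := b₁ * L * δ with hedef
  have hpre : (pPt δ ℓ η' η'').re = (η' + η'') * Real.cos s := rfl
  have hpim : (pPt δ ℓ η' η'').im = (η' - η'') * Real.sin s := rfl
  clear_value ℓ L s r e
  -- basic bounds
  have hsd0 : 0 < Real.sqrt δ := Real.sqrt_pos.2 hδ
  have hsdlt : Real.sqrt δ < 1 / 1000 := by
    rw [show (1/1000 : ℝ) = Real.sqrt ((1/1000)^2) from (Real.sqrt_sq (by norm_num)).symm]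
    exact Real.sqrt_lt_sqrt hδ.le
      (by rw [show ((1:ℝ)/1000)^2 = 1/1000000 by norm_num]; exact hδ1)
  have hδs : Real.sqrt δ * Real.sqrt δ = δ := Real.mul_self_sqrt hδ.le
  have hη'l : 1 - δ ≤ η' := by have := hη'.1; linarith
  have hη'u : η' ≤ 2 + δ := by have := hη'.2; linarith
  have hη''l : 1 - δ ≤ η'' := by have := hη''.1; linarith
  have hη''u : η'' ≤ 2 + δ := by have := hη''.2; linarith
  have hδsmall : δ < 1/1000000 := hδ1
  have hℓ0 : 0 ≤ ℓ := by rw [hℓdef]; positivity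
  have hL2 : (1/2 : ℝ) ≤ L := by rw [hLdef]; exact le_max_right _ _
  have hℓL : ℓ ≤ L := by rw [hLdef]; exact le_max_left _ _
  have hs0 : 0 ≤ s := by rw [hsdef]; positivity
  have hππ : Real.pi < 3.15 := Real.pi_lt_d2
  have hπ3 : 3 < Real.pi := Real.pi_gt_three
  have hsπ : s ≤ Real.pi / 8 - Real.sqrt δ := by
    rw [hsdef]
    have h := mul_le_mul_of_nonneg_right hk hsd0.le
    have h2 : (Real.pi / 8 * (Real.sqrt δ)⁻¹ - 1) * Real.sqrt δ
        = Real.pi / 8 - Real.sqrt δ := by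
      field_simp
    rw [h2] at h
    exact h
  have hs8 : s ≤ Real.pi / 8 := by linarith
  have hs2 : s ≤ 2 := by linarith
  have hscos : 0 < Real.cos s :=
    Real.cos_pos_of_mem_Ioo ⟨by linarith [Real.pi_pos], by linarith⟩
  have he0 : 0 < e := by
    rw [hedef]
    exact mul_pos (mul_pos hb₁ (by linarith)) hδ
  have hident : ∀ u : ℝ, ((η' + η'') * Real.cos u) ^ 2 + ((η' - η'') * Real.sin u) ^ 2
      = (η' + η'') ^ 2 - 4 * (η' * η'') * (Real.sin u) ^ 2 := by
    intro u
    have h := Real.sin_sq_add_cos_sq u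
    linear_combination (η' + η'') ^ 2 * h
  have habs2 : ∀ z : ℂ, (‖z‖) ^ 2 = z.re ^ 2 + z.im ^ 2 := by
    intro z; rw [Complex.sq_norm, Complex.normSq_apply]; ring
  have hr2 : r ^ 2 = (η' + η'') ^ 2 - 4 * (η' * η'') * (Real.sin s) ^ 2 := by
    have h := habs2 (pPt δ ℓ η' η'')
    rw [hpre, hpim] at h
    rw [← hrdef] at h
    rw [h, hident s]
  have hr0 : 0 ≤ r := by rw [hrdef]; exact norm_nonneg _
  have hηpos : 0 < η' + η'' := by linarith
  have hηu : η' + η'' ≤ 4 + 2 * δ := by linarith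
  have hηη : (0.99 : ℝ) ≤ η' * η'' := by
    have h1 : (0.999 : ℝ) ≤ η' := by linarith
    have h2 : (0.999 : ℝ) ≤ η'' := by linarith
    have h3 := mul_le_mul h1 h2 (by norm_num) (show (0:ℝ) ≤ η' by linarith)
    norm_num at h3
    linarith
  have hrη : r ≤ η' + η'' := by
    have h4s : 0 ≤ 4 * (η' * η'') * Real.sin s ^ 2 := mul_nonneg (by linarith) (sq_nonneg _)
    have h1 : r ^ 2 ≤ (η' + η'') ^ 2 := by linarith
    calc r = Real.sqrt (r ^ 2) := (Real.sqrt_sq hr0).symm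
      _ ≤ Real.sqrt ((η' + η'') ^ 2) := Real.sqrt_le_sqrt h1
      _ = η' + η'' := Real.sqrt_sq hηpos.le
  have hgap' : |η' - η''| < r - e := hgap
  have hdabs : |η' - η''| ≤ 1 + 2 * δ := abs_le.2 ⟨by linarith, by linarith⟩
  have her : e < r := by have := abs_nonneg (η' - η''); linarith
  have hRr : |‖ξ‖ - r| ≤ e := abs_le.2 ⟨by linarith, by linarith⟩
  have hR0 : 0 ≤ ‖ξ‖ := norm_nonneg _
  have hsin4 : s / 4 ≤ Real.sin s := aux_quarter_sin hs0 hs2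
  have hsins0 : 0 ≤ Real.sin s := by linarith
  have hsinsle : Real.sin s ≤ s := Real.sin_le hs0
  rcases hcurve with hcur | hseg
  · by_cases heq : η' = η''
    · -- degenerate ellipse
      simp only [curveE, if_pos heq, Set.mem_setOf_eq] at hcur
      obtain ⟨him, hre1, hreη⟩ := hcur
      have hξre : ‖ξ‖ = ξ.re := by
        rw [aux_abs_im0 him, abs_of_nonneg (by linarith : (0:ℝ) ≤ ξ.re)]
      have hpim0 : (pPt δ ℓ η' η'').im = 0 := by rw [hpim, heq]; ring
      have hrval : r = (pPt δ ℓ η' η'').re := by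
        rw [hrdef, aux_abs_im0 hpim0, hpre, abs_of_nonneg (mul_nonneg hηpos.le hscos.le)]
      constructor
      · rw [← hrval]
        rw [hξre] at hRr
        have he150 : e ≤ 150 * b₁ * L * δ := by
          rw [hedef]
          have h := mul_pos (mul_pos hb₁ (show (0:ℝ) < L by linarith)) hδ
          linarith
        linarith [hRr]
      · rw [him, hpim0]
        simp only [sub_zero, abs_zero]
        positivity
    · -- genuine ellipse
      simp only [curveE, if_neg heq, Set.mem_setOf_eq] at hcur
      obtain ⟨hell, hre1, hreη, hsgn1, hsgn2⟩ := hcur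
      set t := Real.arccos (ξ.re / (η' + η'')) with htdef
      have hx1 : ξ.re / (η' + η'') ≤ 1 := by rw [div_le_one hηpos]; exact hreη
      have hx0 : 0 ≤ ξ.re / (η' + η'') := div_nonneg (by linarith) hηpos.le
      have ht0 : 0 ≤ t := Real.arccos_nonneg _
      have htle : t ≤ Real.pi / 2 := Real.arccos_le_pi_div_two.2 hx0
      have hcost : Real.cos t = ξ.re / (η' + η'') := Real.cos_arccos (by linarith) hx1
      have hret : ξ.re = (η' + η'') * Real.cos t := by rw [hcost]; field_simp
      have hsint : 0 ≤ Real.sin t :=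
        Real.sin_nonneg_of_nonneg_of_le_pi ht0 (by linarith [Real.pi_pos])
      have hd2 : (0:ℝ) < (η' - η'') ^ 2 := by
        have : η' - η'' ≠ 0 := sub_ne_zero.2 heq
        positivity
      have him2 : ξ.im ^ 2 = ((η' - η'') * Real.sin t) ^ 2 := by
        have hsq := Real.sin_sq_add_cos_sq t
        have h2 : ξ.re ^ 2 / (η' + η'') ^ 2 = Real.cos t ^ 2 := by
          rw [hret, mul_pow]
          field_simp
        have h1 : ξ.im ^ 2 / (η' - η'') ^ 2 = 1 - Real.cos t ^ 2 := by
          linarith [hell]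
        have h3 := (div_eq_iff (ne_of_gt hd2)).1 h1
        rw [mul_pow]
        rw [h3]
        linear_combination (-(η' - η'') ^ 2) * hsq
      have himt : ξ.im = (η' - η'') * Real.sin t := by
        have habs : |ξ.im| = |(η' - η'') * Real.sin t| := by
          rw [← Real.sqrt_sq_eq_abs, ← Real.sqrt_sq_eq_abs, him2]
        rcases lt_or_gt_of_ne heq with hlt | hgt
        · have h1 : ξ.im ≤ 0 := hsgn2 hlt.le
          have h2 : (η' - η'') * Real.sin t ≤ 0 :=
            mul_nonpos_iff.2 (Or.inr ⟨by linarith, hsint⟩)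
          rw [abs_of_nonpos h1, abs_of_nonpos h2] at habs; linarith
        · have h1 : 0 ≤ ξ.im := hsgn1 hgt.le
          have h2 : 0 ≤ (η' - η'') * Real.sin t := mul_nonneg (by linarith) hsint
          rw [abs_of_nonneg h1, abs_of_nonneg h2] at habs; linarith
      have hR2 : (‖ξ‖) ^ 2 = (η' + η'') ^ 2 - 4 * (η' * η'') * (Real.sin t) ^ 2 := by
        have h := habs2 ξ
        rw [hret, himt] at h
        rw [h, hident t]
      have hsum0 : 0 ≤ t + s := by linarith
      have hsum2 : t + s ≤ 2 := by linarith
      have hsin_sum : (t + s) / 4 ≤ Real.sin (t + s) := aux_quarter_sin hsum0 hsum2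
      have hsin_sum0 : 0 ≤ Real.sin (t + s) := by linarith
      have hsin_diff : |t - s| / 4 ≤ |Real.sin (t - s)| := by
        rcases le_total s t with hts | hts
        · rw [abs_of_nonneg (by linarith : (0:ℝ) ≤ t - s)]
          exact le_trans (aux_quarter_sin (by linarith) (by linarith)) (le_abs_self _)
        · have h1 := aux_quarter_sin (show (0:ℝ) ≤ s - t by linarith) (by linarith)
          calc |t - s| / 4 = (s - t) / 4 := by
                rw [abs_of_nonpos (by linarith : t - s ≤ 0)]; ring
            _ ≤ Real.sin (s - t) := h1
            _ ≤ |Real.sin (s - t)| := le_abs_self _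
            _ = |Real.sin (t - s)| := by
                rw [show t - s = -(s - t) by ring, Real.sin_neg, abs_neg]
      have hid : Real.sin (t + s) * Real.sin (t - s) = Real.sin t ^ 2 - Real.sin s ^ 2 := by
        rw [Real.sin_add, Real.sin_sub]
        linear_combination Real.sin t ^ 2 * Real.sin_sq_add_cos_sq s -
          Real.sin s ^ 2 * Real.sin_sq_add_cos_sq t
      have hABr : 4 * (η' * η'') * (Real.sin t ^ 2 - Real.sin s ^ 2)
          = r ^ 2 - (‖ξ‖) ^ 2 := by
        rw [hr2, hR2]; ring
      have hrR12 : |r ^ 2 - (‖ξ‖) ^ 2| ≤ 13 * e := by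
        have h9 : r + ‖ξ‖ ≤ 13 := by linarith
        rw [show r ^ 2 - (‖ξ‖) ^ 2
            = (r - ‖ξ‖) * (r + ‖ξ‖) by ring,
          abs_mul, abs_of_nonneg (by linarith : (0:ℝ) ≤ r + ‖ξ‖)]
        have h1 : |r - ‖ξ‖| ≤ e := by rw [abs_sub_comm]; exact hRr
        calc |r - ‖ξ‖| * (r + ‖ξ‖) ≤ e * 13 :=
              mul_le_mul h1 h9 (by linarith) he0.le
          _ = 13 * e := by ring
      have hAB : |Real.sin t ^ 2 - Real.sin s ^ 2| ≤ 4 * e := by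
        have h1 : |4 * (η' * η'')| * |Real.sin t ^ 2 - Real.sin s ^ 2| ≤ 13 * e := by
          rw [← abs_mul, hABr]; exact hrR12
        have h2 : |4 * (η' * η'')| = 4 * (η' * η'') := abs_of_nonneg (by linarith)
        rw [h2] at h1
        have h3 := mul_le_mul_of_nonneg_right
          (show (3.96:ℝ) ≤ 4 * (η' * η'') by linarith)
          (abs_nonneg (Real.sin t ^ 2 - Real.sin s ^ 2))
        linarith
      have hprod : (t + s) * |t - s| ≤ 64 * e := by
        have h1 : (t + s) / 4 * (|t - s| / 4) ≤ Real.sin (t + s) * |Real.sin (t - s)| :=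
          mul_le_mul hsin_sum hsin_diff (by positivity) hsin_sum0
        have h2 : Real.sin (t + s) * |Real.sin (t - s)|
            = |Real.sin (t + s) * Real.sin (t - s)| := by
          rw [abs_mul, abs_of_nonneg hsin_sum0]
        rw [h2, hid] at h1
        have h3 := le_trans h1 hAB
        linarith
      constructor
      · rw [hret, hpre]
        have hcc := Real.cos_sub_cos t s
        have h1 : |Real.cos t - Real.cos s| ≤ (t + s) * |t - s| / 2 := by
          rw [hcc]
          have e1 : |(t + s) / 2| = (t + s) / 2 := abs_of_nonneg (by linarith)
          have e2 : |(t - s) / 2| = |t - s| / 2 := by rw [abs_div, abs_two]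
          have b1 : |Real.sin ((t + s) / 2)| ≤ (t + s) / 2 :=
            le_of_le_of_eq (aux_abs_sin _) e1
          have b2 : |Real.sin ((t - s) / 2)| ≤ |t - s| / 2 :=
            le_of_le_of_eq (aux_abs_sin _) e2
          calc |(-2) * Real.sin ((t + s) / 2) * Real.sin ((t - s) / 2)|
              = 2 * |Real.sin ((t + s) / 2)| * |Real.sin ((t - s) / 2)| := by
                rw [abs_mul, abs_mul]; norm_num
            _ ≤ 2 * ((t + s) / 2) * (|t - s| / 2) := by
                exact mul_le_mul (mul_le_mul_of_nonneg_left b1 (by norm_num : (0:ℝ) ≤ 2))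
                  b2 (abs_nonneg _) (by positivity)
            _ = (t + s) * |t - s| / 2 := by ring
        have h2 : |(η' + η'') * Real.cos t - (η' + η'') * Real.cos s|
            = (η' + η'') * |Real.cos t - Real.cos s| := by
          rw [← mul_sub, abs_mul, abs_of_nonneg hηpos.le]
        rw [h2]
        have h3 : (η' + η'') * |Real.cos t - Real.cos s|
            ≤ (η' + η'') * ((t + s) * |t - s| / 2) :=
          mul_le_mul_of_nonneg_left h1 hηpos.le
        have h4 : (η' + η'') * ((t + s) * |t - s|) ≤ 4.02 * (64 * e) := by
          have := mul_le_mul (show η' + η'' ≤ 4.02 by linarith) hprod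
            (mul_nonneg hsum0 (abs_nonneg _)) (by norm_num)
          linarith
        linarith
      · rw [himt, hpim, ← mul_sub, abs_mul]
        have h1 : |Real.sin t - Real.sin s| ≤ |t - s| := aux_sin_lip t s
        have hts : |t - s| ≤ (64 * b₁ + 6 * Real.sqrt b₁) * Real.sqrt δ := by
          rcases Nat.eq_zero_or_pos k with hk0 | hk1
          · have hsz : s = 0 := by rw [hsdef, hℓdef, hk0]; norm_num
            have hLz : L = 1 / 2 := by
              rw [hLdef, hℓdef, hk0]
              norm_num
            have h1' : t * t ≤ 32 * (b₁ * δ) := by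
              have hp := hprod
              rw [hsz, hedef, hLz, add_zero, sub_zero, abs_of_nonneg ht0] at hp
              linarith
            have hM : t ≤ 6 * Real.sqrt b₁ * Real.sqrt δ := by
              have hM2 : (6 * Real.sqrt b₁ * Real.sqrt δ) ^ 2 = 36 * (b₁ * δ) := by
                rw [mul_pow, mul_pow, Real.sq_sqrt hb₁.le, Real.sq_sqrt hδ.le]; ring
              calc t = Real.sqrt (t ^ 2) := (Real.sqrt_sq ht0).symm
                _ ≤ Real.sqrt ((6 * Real.sqrt b₁ * Real.sqrt δ) ^ 2) := by
                    apply Real.sqrt_le_sqrt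
                    rw [hM2]; linarith [h1', mul_pos hb₁ hδ]
                _ = 6 * Real.sqrt b₁ * Real.sqrt δ := Real.sqrt_sq (by positivity)
            rw [hsz, sub_zero, abs_of_nonneg ht0]
            have hnn : 0 ≤ 64 * b₁ * Real.sqrt δ := by positivity
            linarith
          · have hℓhalf : (1 / 2 : ℝ) ≤ ℓ := by
              rw [hℓdef]
              have : (1:ℝ) ≤ (k:ℝ) := by exact_mod_cast hk1
              linarith
            have hLℓ : L = ℓ := by rw [hLdef]; exact max_eq_left (by linarith)
            have hpos : 0 < L * Real.sqrt δ := mul_pos (by linarith) hsd0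
            have hsL : s = L * Real.sqrt δ := by rw [hsdef, hLℓ]
            have hchain : (L * Real.sqrt δ) * |t - s|
                ≤ (L * Real.sqrt δ) * ((64 * b₁ + 6 * Real.sqrt b₁) * Real.sqrt δ) := by
              have c1 : (L * Real.sqrt δ) * |t - s| ≤ (t + s) * |t - s| := by
                apply mul_le_mul_of_nonneg_right _ (abs_nonneg _)
                rw [← hsL]; linarith
              have c2 : (64:ℝ) * e = (L * Real.sqrt δ) * (64 * b₁ * Real.sqrt δ) := by
                rw [hedef]; linear_combination (-64 * b₁ * L) * hδs
              have c3 : (L * Real.sqrt δ) * (64 * b₁ * Real.sqrt δ)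
                  ≤ (L * Real.sqrt δ) * ((64 * b₁ + 6 * Real.sqrt b₁) * Real.sqrt δ) := by
                apply mul_le_mul_of_nonneg_left _ hpos.le
                have hnn : 0 ≤ 6 * Real.sqrt b₁ * Real.sqrt δ := by positivity
                linarith
              calc (L * Real.sqrt δ) * |t - s| ≤ (t + s) * |t - s| := c1
                _ ≤ 64 * e := hprod
                _ = (L * Real.sqrt δ) * (64 * b₁ * Real.sqrt δ) := c2
                _ ≤ (L * Real.sqrt δ) * ((64 * b₁ + 6 * Real.sqrt b₁) * Real.sqrt δ) := c3
            exact le_of_mul_le_mul_left hchain hpos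
        have hd1 : |η' - η''| ≤ 1.01 := by linarith
        have h2 : |η' - η''| * |Real.sin t - Real.sin s|
            ≤ 1.01 * ((64 * b₁ + 6 * Real.sqrt b₁) * Real.sqrt δ) :=
          mul_le_mul hd1 (le_trans h1 hts) (abs_nonneg _) (by norm_num)
        have hnn1 : 0 ≤ b₁ * Real.sqrt δ := by positivity
        have hnn2 : 0 ≤ Real.sqrt b₁ * Real.sqrt δ := by positivity
        linarith
  · -- segment part
    obtain ⟨him, hre1, hre5⟩ := hseg
    have hξre : ‖ξ‖ = ξ.re := by
      rw [aux_abs_im0 him, abs_of_nonneg (by linarith : (0:ℝ) ≤ ξ.re)]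
    rw [hξre] at hann2 hRr hann1
    have hηr : η' + η'' - r ≤ e := by linarith
    have hsq : (s / 4) ^ 2 ≤ Real.sin s ^ 2 := by
      have := pow_le_pow_left₀ (by positivity : (0:ℝ) ≤ s / 4) hsin4 2
      simpa using this
    have hB : (η' + η'') ^ 2 - r ^ 2 ≤ 9 * e := by
      have h9 : η' + η'' + r ≤ 9 := by linarith
      have := mul_le_mul hηr h9 (by linarith) he0.le
      linarith
    have hs2b : s ^ 2 ≤ 37 * e := by
      have hc := mul_le_mul hηη hsq (sq_nonneg _) (by linarith : (0:ℝ) ≤ η' * η'')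
      linarith
    constructor
    · have hcos1 : Real.cos s ≤ 1 := Real.cos_le_one s
      have hcosl : 1 - s ^ 2 / 2 ≤ Real.cos s := Real.one_sub_sq_div_two_le_cos
      rw [hpre]
      have hple : (η' + η'') * Real.cos s ≤ η' + η'' :=
        mul_le_of_le_one_right hηpos.le hcos1
      rw [abs_of_nonneg (by linarith : (0:ℝ) ≤ ξ.re - (η' + η'') * Real.cos s)]
      have h2 : (η' + η'') * (1 - Real.cos s) ≤ (η' + η'') * (s ^ 2 / 2) :=
        mul_le_mul_of_nonneg_left (by linarith) hηpos.le
      have h3 : (η' + η'') * s ^ 2 ≤ 4.02 * (37 * e) := by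
        have := mul_le_mul (show η' + η'' ≤ 4.02 by linarith) hs2b (sq_nonneg s)
          (by norm_num)
        linarith
      linarith
    · rw [him, hpim, zero_sub, abs_neg, abs_mul, abs_of_nonneg hsins0]
      have hd1 : |η' - η''| ≤ 1.01 := by linarith
      rcases le_or_gt ℓ (1 / 2) with hcase | hcase
      · have hsle : s ≤ Real.sqrt δ / 2 := by
          rw [hsdef]
          have := mul_le_mul_of_nonneg_right hcase hsd0.le
          linarith
        have h2 : |η' - η''| * Real.sin s ≤ 1.01 * (Real.sqrt δ / 2) :=
          mul_le_mul hd1 (by linarith) hsins0 (by norm_num)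
        have hnn1 : 0 < b₁ * Real.sqrt δ := mul_pos hb₁ hsd0
        have hnn2 : 0 ≤ Real.sqrt b₁ * Real.sqrt δ := by positivity
        linarith
      · have hLℓ : L = ℓ := by rw [hLdef]; exact max_eq_left (by linarith)
        have hℓpos : 0 < ℓ := by linarith
        have hs2c : ℓ * ℓ * δ ≤ 37 * (b₁ * ℓ * δ) := by
          have hseq : s ^ 2 = ℓ * ℓ * δ := by
            rw [hsdef]; linear_combination ℓ ^ 2 * hδs
          rw [hedef, hLℓ] at hs2b
          linarith
        have hℓb : ℓ ≤ 37 * b₁ := by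
          by_contra hcon
          push_neg at hcon
          have hδℓ : 0 < ℓ * δ := mul_pos hℓpos hδ
          have := mul_lt_mul_of_pos_right hcon hδℓ
          linarith
        have hsb : s ≤ 37 * b₁ * Real.sqrt δ := by
          rw [hsdef]
          calc ℓ * Real.sqrt δ ≤ (37 * b₁) * Real.sqrt δ :=
              mul_le_mul_of_nonneg_right hℓb hsd0.le
            _ = 37 * b₁ * Real.sqrt δ := by ring
        have h2 : |η' - η''| * Real.sin s ≤ 1.01 * (37 * b₁ * Real.sqrt δ) :=
          mul_le_mul hd1 (by linarith) hsins0 (by norm_num)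
        have hnn1 : 0 ≤ b₁ * Real.sqrt δ := by positivity
        have hnn2 : 0 ≤ Real.sqrt b₁ * Real.sqrt δ := by positivity
        linarith
end

section
/- Let ℓ ∈ ℕ_0^* with 0 ≤ ℓ ≤ (π/8) δ^{-1/2} − 1, let η' ∈ J̃_1 and η'' ∈ J̃_2 with η = η' + η'', write p_{ℓ,δ} = p_{ℓ,δ}(η',η''), and let c_1, c_2 > 0 be constants. Then there exist constants c_3, c_4 > 0, depending only on c_1 and c_2 (independent of η', η'', δ, ℓ), such that R(p_{ℓ,δ}; c_1 ℓ_* δ, c_2 δ^{1/2}) ⊆ A(|p_{ℓ,δ}| − c_3 ℓ_* δ, |p_{ℓ,δ}| + c_4 ℓ_* δ). -/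
open Set Pointwise

set_option maxHeartbeats 1000000 in
theorem statement12 :
    ∀ c₁ c₂ : ℝ, 0 < c₁ → 0 < c₂ →
    ∃ c₃ c₄ : ℝ, 0 < c₃ ∧ 0 < c₄ ∧
      ∀ δ : ℝ, 0 < δ → δ < 1 / 1000000 →
      ∀ α₁ β₁ α₂ β₂ : ℝ,
        1 ≤ α₁ → α₁ ≤ β₁ → β₁ ≤ 2 → β₁ - α₁ ≤ Real.sqrt δ →
        1 ≤ α₂ → α₂ ≤ β₂ → β₂ ≤ 2 → β₂ - α₂ ≤ Real.sqrt δ →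
      ∀ k : ℕ, (k : ℝ) / 2 ≤ Real.pi / 8 * (Real.sqrt δ)⁻¹ - 1 →
      ∀ η' ∈ Icc (α₁ - δ) (β₁ + δ),
      ∀ η'' ∈ Icc (α₂ - δ) (β₂ + δ),
        rect (pPt δ ((k : ℝ) / 2) η' η'')
            (c₁ * max ((k : ℝ) / 2) (1 / 2) * δ) (c₂ * Real.sqrt δ)
          ⊆ ann (‖pPt δ ((k : ℝ) / 2) η' η''‖
                  - c₃ * max ((k : ℝ) / 2) (1 / 2) * δ)
                (‖pPt δ ((k : ℝ) / 2) η' η''‖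
                  + c₄ * max ((k : ℝ) / 2) (1 / 2) * δ) := by
  intro c₁ c₂ hc₁ hc₂
  refine ⟨c₁ * (9 + c₁) + 3 * c₂ + 2 * c₂ ^ 2, c₁ * (9 + c₁) + 3 * c₂ + 2 * c₂ ^ 2,
    by positivity, by positivity, ?_⟩
  intro δ hδ hδ' α₁ β₁ α₂ β₂ hα₁ hαβ₁ hβ₁ hJ₁ hα₂ hαβ₂ hβ₂ hJ₂ k hk η' hη' η'' hη'' z hz
  set s : ℝ := Real.sqrt δ with hs_def
  have hs : 0 < s := Real.sqrt_pos.2 hδ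
  have hs2 : s ^ 2 = δ := Real.sq_sqrt hδ.le
  have hs1000 : s ≤ 1 / 1000 := by
    have : Real.sqrt δ ≤ Real.sqrt (1 / 1000000) := Real.sqrt_le_sqrt hδ'.le
    rwa [show (1 / 1000000 : ℝ) = (1 / 1000) ^ 2 by norm_num,
      Real.sqrt_sq (by norm_num)] at this
  set L : ℝ := max ((k : ℝ) / 2) (1 / 2) with hL_def
  have hLhalf : (1 : ℝ) / 2 ≤ L := le_max_right _ _
  have hL0 : 0 < L := lt_of_lt_of_le (by norm_num) hLhalf
  set t : ℝ := (k : ℝ) / 2 * s with ht_def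
  have ht0 : 0 ≤ t := by positivity
  have hpi : Real.pi < 3.15 := Real.pi_lt_d2
  have hts : t ≤ Real.pi / 8 - s := by
    have := mul_le_mul_of_nonneg_right hk hs.le
    rw [sub_mul, mul_assoc, inv_mul_cancel₀ hs.ne', mul_one, one_mul] at this
    exact this
  have ht4 : t ≤ 0.4 := by nlinarith
  have hkL : (k : ℝ) / 2 ≤ L := le_max_left _ _
  have hLs : L * s ≤ Real.pi / 8 := by
    rcases max_cases ((k : ℝ) / 2) (1 / 2) with ⟨h1, h2⟩ | ⟨h1, h2⟩ <;> rw [hL_def, h1] <;>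
      nlinarith
  have hLδ : L * δ ≤ 1 := by nlinarith
  -- bounds on η quantities
  have hδsmall : δ < 1 / 100 := by linarith
  obtain ⟨h1', h2'⟩ := hη'
  obtain ⟨h1'', h2''⟩ := hη''
  have hsum1 : (1.9 : ℝ) ≤ η' + η'' := by linarith
  have hsum2 : η' + η'' ≤ 4.1 := by linarith
  have hdiff : |η' - η''| ≤ 1.1 := by rw [abs_le]; constructor <;> linarith
  -- trig bounds
  have hcos1 : Real.cos t ≤ 1 := Real.cos_le_one t
  have hcos9 : (0.9 : ℝ) ≤ Real.cos t := by
    have h := Real.one_sub_sq_div_two_le_cos (x := t)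
    have h2 : t ^ 2 ≤ 0.16 := by nlinarith [sq_nonneg t]
    linarith
  have hcos0 : 0 ≤ Real.cos t := by linarith
  have hsin : |Real.sin t| ≤ t := by
    have := Real.abs_sin_le_abs (x := t)
    rwa [abs_of_nonneg ht0] at this
  -- the point p
  set p : ℂ := pPt δ ((k : ℝ) / 2) η' η'' with hp_def
  have hpre : p.re = (η' + η'') * Real.cos t := rfl
  have hpim : p.im = (η' - η'') * Real.sin t := rfl
  have hpre_lb : (1.7 : ℝ) ≤ p.re := by rw [hpre]; nlinarith
  have hpre_ub : p.re ≤ 4.1 := by rw [hpre]; nlinarith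
  have hpim_ub : |p.im| ≤ 1.1 * (L * s) := by
    rw [hpim, abs_mul]
    have ht' : t ≤ L * s := by
      rw [ht_def]; exact mul_le_mul_of_nonneg_right hkL hs.le
    have : |η' - η''| * |Real.sin t| ≤ 1.1 * t := by
      apply mul_le_mul hdiff hsin (abs_nonneg _) (by norm_num)
    nlinarith
  set A : ℝ := ‖z‖ with hA_def
  set B : ℝ := ‖p‖ with hB_def
  have hA0 : 0 ≤ A := norm_nonneg z
  have hB0 : 0 ≤ B := norm_nonneg p
  have hB1 : 1 ≤ B := le_trans (by linarith) (le_trans (le_abs_self _) (Complex.abs_re_le_norm p))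
  have hA2 : A ^ 2 = z.re ^ 2 + z.im ^ 2 := by
    rw [hA_def, Complex.sq_norm, Complex.normSq_apply]; ring
  have hB2 : B ^ 2 = p.re ^ 2 + p.im ^ 2 := by
    rw [hB_def, Complex.sq_norm, Complex.normSq_apply]; ring
  obtain ⟨hzre, hzim⟩ := hz
  have hare : |z.re - p.re| ≤ c₁ * L * δ := hzre
  have haim : |z.im - p.im| ≤ c₂ * s := hzim
  set C : ℝ := c₁ * (9 + c₁) + 3 * c₂ + 2 * c₂ ^ 2 with hC_def
  -- bound |A^2 - B^2|
  have hre2 : |z.re ^ 2 - p.re ^ 2| ≤ c₁ * L * δ * (8.2 + c₁ * L * δ) := by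
    have h1 : |z.re + p.re| ≤ 8.2 + c₁ * L * δ := by
      have := abs_sub_abs_le_abs_sub z.re p.re
      have h2 : |z.re| ≤ |p.re| + c₁ * L * δ := by
        have := abs_sub z.re p.re
        have h3 := le_trans (abs_sub_abs_le_abs_sub z.re p.re) hare
        linarith
      calc |z.re + p.re| ≤ |z.re| + |p.re| := abs_add_le _ _
        _ ≤ 8.2 + c₁ * L * δ := by
            rw [abs_of_nonneg (by linarith : (0:ℝ) ≤ p.re)] at *
            linarith
    calc |z.re ^ 2 - p.re ^ 2| = |z.re - p.re| * |z.re + p.re| := by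
          rw [← abs_mul]; ring_nf
      _ ≤ c₁ * L * δ * (8.2 + c₁ * L * δ) :=
          mul_le_mul hare h1 (abs_nonneg _) (by positivity)
  have him2 : |z.im ^ 2 - p.im ^ 2| ≤ c₂ * s * (2.2 * (L * s) + c₂ * s) := by
    have h1 : |z.im + p.im| ≤ 2.2 * (L * s) + c₂ * s := by
      have h2 : |z.im| ≤ |p.im| + c₂ * s := by
        have h3 := le_trans (abs_sub_abs_le_abs_sub z.im p.im) haim
        linarith
      calc |z.im + p.im| ≤ |z.im| + |p.im| := abs_add_le _ _
        _ ≤ 2.2 * (L * s) + c₂ * s := by linarith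
    calc |z.im ^ 2 - p.im ^ 2| = |z.im - p.im| * |z.im + p.im| := by
          rw [← abs_mul]; ring_nf
      _ ≤ c₂ * s * (2.2 * (L * s) + c₂ * s) :=
          mul_le_mul haim h1 (abs_nonneg _) (by positivity)
  have hsq : |A ^ 2 - B ^ 2| ≤ C * L * δ := by
    have h1 : |A ^ 2 - B ^ 2| ≤ |z.re ^ 2 - p.re ^ 2| + |z.im ^ 2 - p.im ^ 2| := by
      rw [hA2, hB2]
      calc |z.re ^ 2 + z.im ^ 2 - (p.re ^ 2 + p.im ^ 2)|
          = |(z.re ^ 2 - p.re ^ 2) + (z.im ^ 2 - p.im ^ 2)| := by ring_nf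
        _ ≤ _ := abs_add_le _ _
    have hc₁Lδ : c₁ * L * δ ≤ c₁ := by
      calc c₁ * L * δ = c₁ * (L * δ) := by ring
        _ ≤ c₁ * 1 := mul_le_mul_of_nonneg_left hLδ hc₁.le
        _ = c₁ := mul_one c₁
    have h3 : c₂ * s * (2.2 * (L * s) + c₂ * s) = (2.2 * c₂ * L + c₂ ^ 2) * δ := by
      rw [← hs2]; ring
    have h4 : c₂ ^ 2 * δ ≤ 2 * c₂ ^ 2 * (L * δ) := by
      have h := mul_le_mul_of_nonneg_right hLhalf hδ.le
      calc c₂ ^ 2 * δ = 2 * c₂ ^ 2 * (1 / 2 * δ) := by ring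
        _ ≤ 2 * c₂ ^ 2 * (L * δ) :=
            mul_le_mul_of_nonneg_left h (by positivity)
    have h5 : c₁ * L * δ * (8.2 + c₁ * L * δ) ≤ c₁ * (9 + c₁) * (L * δ) := by
      have hu0 : (0:ℝ) ≤ c₁ * L * δ := by positivity
      have hu2 := mul_le_mul_of_nonneg_right hc₁Lδ hu0
      linarith [hu2, hu0]
    calc |A ^ 2 - B ^ 2| ≤ |z.re ^ 2 - p.re ^ 2| + |z.im ^ 2 - p.im ^ 2| := h1
      _ ≤ c₁ * L * δ * (8.2 + c₁ * L * δ) + c₂ * s * (2.2 * (L * s) + c₂ * s) := by linarith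
      _ ≤ c₁ * (9 + c₁) * (L * δ) + (2.2 * c₂ * L + c₂ ^ 2) * δ := by linarith [h3 ▸ him2]
      _ ≤ C * L * δ := by
          rw [hC_def]
          linarith [h4, mul_nonneg (mul_nonneg hc₂.le hL0.le) hδ.le]
  have hAB : |A - B| ≤ C * L * δ := by
    have h1 : |A - B| * (A + B) = |A ^ 2 - B ^ 2| := by
      rw [← abs_of_nonneg (by linarith : (0:ℝ) ≤ A + B), ← abs_mul]
      ring_nf
    have h2 : |A - B| ≤ |A - B| * (A + B) :=
      le_mul_of_one_le_right (abs_nonneg _) (by linarith)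
    linarith
  rw [abs_sub_le_iff] at hAB
  exact ⟨by linarith [hAB.1, hAB.2], by linarith [hAB.1, hAB.2]⟩
end
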